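/- arXiv:2307.00851 — 3 statements merged into one kernel-verified Lean document; each statement's English description precedes it below -/
import Mathlib

section
/- There is a family ((P_α,G_α))_{α∈2^ℕ}, where each P_α is a countable zero-dimensional Polish space and each G_α is a graph on P_α with continuous chromatic number exactly three, such that for α ≠ β the pairs (P_α,G_α) and (P_β,G_β) are ≼^i_c-incompatible in the class 𝔖 of graphs on zero-dimensional metrizable separable spaces with continuous chromatic number at least three (i.e., no (Z,G) ∈ 𝔖 satisfies both (Z,G) ≼^i_c (P_α,G_α) and (Z,G) ≼^i_c (P_β,G_β)). Consequently, 𝔖 has no ≼^i_c-antichain basis, and every ≼^i_c-basis for 𝔖 has cardinality at least 2^ℵ0; the same holds for the subclass of graphs on zero-dimensional Polish spaces with continuous chromatic number at least three. -/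
open TopologicalSpace

/-- A *graph* on `X`: a symmetric irreflexive binary relation on `X`. -/
def IsGraph {X : Type*} (G : Set (X × X)) : Prop :=
  (∀ x y : X, (x, y) ∈ G → (y, x) ∈ G) ∧ ∀ x : X, (x, x) ∉ G

/-- `(X, G)` admits a continuous coloring with `n` colors
(`Fin n` carries the discrete topology). -/
def HasContColoring {X : Type*} [TopologicalSpace X] (G : Set (X × X)) (n : ℕ) : Prop :=
  ∃ c : X → Fin n, Continuous c ∧ ∀ x y : X, (x, y) ∈ G → c x ≠ c y

/-- `(X, G)` admits a countable continuous coloring (`ℕ` is discrete). -/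
def HasCtbleContColoring {X : Type*} [TopologicalSpace X] (G : Set (X × X)) : Prop :=
  ∃ c : X → ℕ, Continuous c ∧ ∀ x y : X, (x, y) ∈ G → c x ≠ c y

/-- `(X,G) ≼_c (Y,H)` : there is a continuous homomorphism. -/
def RedC {X Y : Type*} [TopologicalSpace X] [TopologicalSpace Y]
    (G : Set (X × X)) (H : Set (Y × Y)) : Prop :=
  ∃ φ : X → Y, Continuous φ ∧ ∀ x y : X, (x, y) ∈ G → (φ x, φ y) ∈ H

/-- `(X,G) ≼^i_c (Y,H)` : there is an injective continuous homomorphism. -/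
def RedIC {X Y : Type*} [TopologicalSpace X] [TopologicalSpace Y]
    (G : Set (X × X)) (H : Set (Y × Y)) : Prop :=
  ∃ φ : X → Y, Continuous φ ∧ Function.Injective φ ∧
    ∀ x y : X, (x, y) ∈ G → (φ x, φ y) ∈ H

/-- A space is zero-dimensional if the clopen sets form a basis. -/
def ZeroDim (X : Type*) [TopologicalSpace X] : Prop :=
  IsTopologicalBasis {s : Set X | IsClopen s}

/-- zero-dimensional metrizable compact -/
def Is0DMC (X : Type*) [TopologicalSpace X] : Prop :=
  CompactSpace X ∧ MetrizableSpace X ∧ ZeroDim X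

/-- zero-dimensional metrizable separable -/
def Is0DMS (X : Type*) [TopologicalSpace X] : Prop :=
  MetrizableSpace X ∧ SeparableSpace X ∧ ZeroDim X

/-- Since every zero-dimensional metrizable separable space embeds into `2^ℕ`, the
class `𝔖` may equivalently be taken to consist of graphs on subspaces of `2^ℕ`:
a member is a subset of the Cantor space together with a graph on it. -/
def SubCantorGraph : Type := Σ P : Set (ℕ → Bool), Set (↥P × ↥P)

/-- membership in (the concrete representation of) the class `𝔖` of graphs on
zero-dimensional metrizable separable spaces with CCN at least three -/
def SubCantorGraph.MemS (z : SubCantorGraph) : Prop :=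
  IsGraph z.2 ∧ ¬ HasContColoring z.2 2

/-- membership in the subclass of graphs on zero-dimensional Polish spaces
with CCN at least three -/
def SubCantorGraph.MemP (z : SubCantorGraph) : Prop :=
  z.MemS ∧ PolishSpace ↥z.1

open scoped Classical in
section
open TopologicalSpace Set

namespace Stmt5

def cinf : ℕ → Bool := fun _ => false

def Ept (m : ℕ) : ℕ → Bool := fun n => decide (n = m)

def Ipt (j : ℕ) : ℕ → Bool := fun n => decide (n = 0 ∨ n = j)

lemma Ept_ne_cinf (m : ℕ) : Ept m ≠ cinf := by
  intro h; have := congrFun h m; simp [Ept, cinf] at this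

lemma Ipt_ne_cinf (j : ℕ) : Ipt j ≠ cinf := by
  intro h; have := congrFun h 0; simp [Ipt, cinf] at this

lemma Ept_inj {m m'} (h : Ept m = Ept m') : m = m' := by
  have := congrFun h m; simp [Ept] at this; exact this

lemma Ept_ne_Ipt {m j} (hm : 1 ≤ m) : Ept m ≠ Ipt j := by
  intro h; have := congrFun h 0; simp [Ept, Ipt] at this; omega

lemma Ipt_inj {j j'} (hj : 1 ≤ j) (h : Ipt j = Ipt j') : j = j' := by
  have := congrFun h j; simp [Ipt] at this
  rcases this with h1 | h1 <;> omega

def aval (α : ℕ → Bool) (k : ℕ) : ℕ :=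
  ∑ j ∈ Finset.range (k+1), (if α j = true then 2^j else 0)

lemma aval_succ (α : ℕ → Bool) (k : ℕ) :
    aval α (k+1) = aval α k + (if α (k+1) = true then 2^(k+1) else 0) :=
  Finset.sum_range_succ _ _

lemma aval_lt (α : ℕ → Bool) (k : ℕ) : aval α k < 2^(k+1) := by
  induction k with
  | zero => simp [aval]; split <;> omega
  | succ k ih =>
      rw [aval_succ]
      have : (2:ℕ)^(k+2) = 2^(k+1) + 2^(k+1) := by ring
      split <;> omega

lemma aval_inj {α β : ℕ → Bool} {k : ℕ} (h : aval α k = aval β k) :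
    ∀ j ≤ k, α j = β j := by
  induction k with
  | zero =>
      intro j hj
      interval_cases j
      simp only [aval, Finset.range_one, Finset.sum_singleton] at h
      cases hα : α 0 <;> cases hβ : β 0 <;> simp [hα, hβ] at h ⊢ <;> omega
  | succ k ih =>
      intro j hj
      rw [aval_succ, aval_succ] at h
      have hbit : α (k+1) = β (k+1) := by
        cases hα : α (k+1) <;> cases hβ : β (k+1) <;>
          simp [hα, hβ] at h ⊢ <;>
          [skip; skip] <;>
          · have h1 := aval_lt α k
            have h2 := aval_lt β k
            omega
      rw [hbit] at h
      have h' : aval α k = aval β k := by split at h <;> omega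
      rcases Nat.lt_or_ge j (k+1) with hlt | hge
      · exact ih h' j (by omega)
      · have : j = k + 1 := by omega
        rw [this]; exact hbit

def gam (α : ℕ → Bool) (k : ℕ) : ℕ := 2 * (4^k + aval α k) + 1

lemma three_le_gam (α : ℕ → Bool) (k : ℕ) : 3 ≤ gam α k := by
  have : 1 ≤ (4:ℕ)^k := Nat.one_le_pow _ _ (by norm_num)
  unfold gam; omega

lemma gam_mod2 (α : ℕ → Bool) (k : ℕ) : gam α k % 2 = 1 := by
  unfold gam; omega

lemma two_pow_le (k : ℕ) : 2^(k+1) ≤ 3 * 4^k := by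
  have h : (2:ℕ)^k ≤ 4^k := Nat.pow_le_pow_left (by norm_num) k
  have : (2:ℕ)^(k+1) = 2 * 2^k := by ring
  omega

lemma gam_aux {a b x y : ℕ} (hab : a < b) (hx : x < 2^(a+1)) :
    4^a + x ≠ 4^b + y := by
  have h1 : 2^(a+1) ≤ 3 * 4^a := two_pow_le a
  have h2 : (4:ℕ)^(a+1) ≤ 4^b := Nat.pow_le_pow_right (by norm_num) (by omega)
  have h3 : (4:ℕ)^(a+1) = 4 * 4^a := by ring
  omega

lemma gam_inj {α β : ℕ → Bool} {k l : ℕ} (h : gam α k = gam β l) :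
    k = l ∧ aval α k = aval β l := by
  have h' : 4^k + aval α k = 4^l + aval β l := by unfold gam at h; omega
  have hkl : k = l := by
    rcases Nat.lt_trichotomy k l with hlt | heq | hlt
    · exact absurd h' (gam_aux hlt (aval_lt α k))
    · exact heq
    · exact absurd h'.symm (gam_aux hlt (aval_lt β l))
  subst hkl
  exact ⟨rfl, by omega⟩

def vtx (α : ℕ → Bool) (k i : ℕ) : ℕ → Bool :=
  if i = 0 then Ept (2*k+1) else if i = gam α k then Ept (2*k+2)
  else Ipt (Nat.pair k i + 1)

lemma vtx_ne_cinf (α : ℕ → Bool) (k i : ℕ) : vtx α k i ≠ cinf := by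
  unfold vtx; split_ifs <;> first | exact Ept_ne_cinf _ | exact Ipt_ne_cinf _

lemma vtx_inj {α : ℕ → Bool} {k i k' i' : ℕ} (hi : i ≤ gam α k) (hi' : i' ≤ gam α k')
    (h : vtx α k i = vtx α k' i') : k = k' ∧ i = i' := by
  have g3 := three_le_gam α k
  have g3' := three_le_gam α k'
  unfold vtx at h
  split_ifs at h with h1 h2 h3 h4 h5 h6 h7 h8 h9
  · have := Ept_inj h; constructor <;> omega
  · have := Ept_inj h; omega
  · exact absurd h (Ept_ne_Ipt (by omega))
  · have := Ept_inj h; omega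
  · have hk := Ept_inj h
    have hk' : k = k' := by omega
    subst hk'; exact ⟨rfl, by omega⟩
  · exact absurd h (Ept_ne_Ipt (by omega))
  · exact absurd h.symm (Ept_ne_Ipt (by omega))
  · exact absurd h.symm (Ept_ne_Ipt (by omega))
  · have := Ipt_inj (by omega) h
    have := Nat.pair_eq_pair.mp (by omega : Nat.pair k i = Nat.pair k' i')
    exact ⟨this.1, this.2⟩


def Pset (α : ℕ → Bool) (S : Set ℕ) : Set (ℕ → Bool) :=
  {x | x = cinf ∨ ∃ k ∈ S, ∃ i ≤ gam α k, x = vtx α k i}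

def infP (α : ℕ → Bool) (S : Set ℕ) : ↥(Pset α S) := ⟨cinf, Or.inl rfl⟩

lemma vtx_mem {α : ℕ → Bool} {S : Set ℕ} {k i : ℕ} (hk : k ∈ S) (hi : i ≤ gam α k) :
    vtx α k i ∈ Pset α S := Or.inr ⟨k, hk, i, hi, rfl⟩

def GrS (α : ℕ → Bool) (S : Set ℕ) : Set (↥(Pset α S) × ↥(Pset α S)) :=
  {pq | ∃ k ∈ S, ∃ i, i + 1 ≤ gam α k ∧
    (((pq.1 : ℕ → Bool) = vtx α k i ∧ (pq.2 : ℕ → Bool) = vtx α k (i+1)) ∨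
     ((pq.2 : ℕ → Bool) = vtx α k i ∧ (pq.1 : ℕ → Bool) = vtx α k (i+1)))}

lemma grS_symm {α S} {p q : ↥(Pset α S)} (h : (p, q) ∈ GrS α S) : (q, p) ∈ GrS α S := by
  obtain ⟨k, hk, i, hle, hc⟩ := h
  exact ⟨k, hk, i, hle, hc.symm⟩

lemma isGraph_grS (α : ℕ → Bool) (S : Set ℕ) : IsGraph (GrS α S) := by
  constructor
  · exact fun p q h => grS_symm h
  · rintro p ⟨k, hk, i, hle, hc⟩
    rcases hc with ⟨h1, h2⟩ | ⟨h1, h2⟩ <;>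
    · rw [h1] at h2
      have := (vtx_inj (by omega) (by omega) h2).2
      omega

noncomputable def idxOf (α : ℕ → Bool) (x : ℕ → Bool) : ℕ :=
  if h : ∃ p : ℕ × ℕ, p.2 ≤ gam α p.1 ∧ x = vtx α p.1 p.2 then h.choose.2 else 0

lemma idxOf_vtx {α : ℕ → Bool} {k i : ℕ} (hi : i ≤ gam α k) :
    idxOf α (vtx α k i) = i := by
  have h : ∃ p : ℕ × ℕ, p.2 ≤ gam α p.1 ∧ vtx α k i = vtx α p.1 p.2 := ⟨(k, i), hi, rfl⟩
  rw [idxOf, dif_pos h]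
  obtain ⟨h1, h2⟩ := h.choose_spec
  exact (vtx_inj hi h1 h2).2.symm

def pv (n : ℕ) : Fin 2 := ⟨n % 2, Nat.mod_lt _ (by norm_num)⟩

lemma edge_pv {α S} {p q : ↥(Pset α S)} (h : (p, q) ∈ GrS α S) :
    pv (idxOf α (p : ℕ → Bool)) ≠ pv (idxOf α (q : ℕ → Bool)) := by
  obtain ⟨k, hk, i, hle, hc⟩ := h
  rcases hc with ⟨h1, h2⟩ | ⟨h1, h2⟩ <;>
    rw [h1, h2, idxOf_vtx (by omega), idxOf_vtx (by omega)] <;>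
    · intro hcon
      have := congrArg Fin.val hcon
      simp only [pv] at this
      omega

lemma edge_ne_cinf {α S} {p q : ↥(Pset α S)} (h : (p, q) ∈ GrS α S) :
    (p : ℕ → Bool) ≠ cinf ∧ (q : ℕ → Bool) ≠ cinf := by
  obtain ⟨k, hk, i, hle, hc⟩ := h
  rcases hc with ⟨h1, h2⟩ | ⟨h1, h2⟩ <;> rw [h1, h2] <;>
    exact ⟨vtx_ne_cinf _ _ _, vtx_ne_cinf _ _ _⟩

/-- shape of a vertex -/
lemma vtx_shape (α : ℕ → Bool) (k i : ℕ) :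
    (i = 0 ∧ vtx α k i = Ept (2*k+1)) ∨ (i = gam α k ∧ vtx α k i = Ept (2*k+2)) ∨
    (i ≠ 0 ∧ i ≠ gam α k ∧ vtx α k i = Ipt (Nat.pair k i + 1)) := by
  unfold vtx; split_ifs with h1 h2
  · exact Or.inl ⟨h1, rfl⟩
  · exact Or.inr (Or.inl ⟨h2, rfl⟩)
  · exact Or.inr (Or.inr ⟨h1, h2, rfl⟩)

lemma vtx_zero_coord {α : ℕ → Bool} {k i : ℕ} :
    (vtx α k i) 0 = true ↔ (i ≠ 0 ∧ i ≠ gam α k) := by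
  rcases vtx_shape α k i with ⟨h1, h2⟩ | ⟨h1, h2⟩ | ⟨h1, h2, h3⟩
  · rw [h2]; simp [Ept]; omega
  · rw [h2]; simp [Ept]; have := three_le_gam α k; omega
  · rw [h3]; simp [Ipt]; exact ⟨h1, h2⟩


section Topology

variable {α : ℕ → Bool} {S : Set ℕ}

lemma mem_Pset_cases {x : ℕ → Bool} (hx : x ∈ Pset α S) :
    x = cinf ∨ ∃ k ∈ S, ∃ i ≤ gam α k, x = vtx α k i := hx

/-- every point of `Pset` other than `cinf` is isolated -/
lemma isolated_of_ne_cinf (p : ↥(Pset α S)) (hp : (p : ℕ → Bool) ≠ cinf) :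
    IsOpen ({p} : Set ↥(Pset α S)) := by
  rcases mem_Pset_cases p.2 with h | ⟨k, hk, i, hi, h⟩
  · exact absurd h hp
  have key : ∃ m b, 1 ≤ m ∧ ((p : ℕ → Bool) = Ept m ∧ b = false ∨
      (p : ℕ → Bool) = Ipt m ∧ b = true) := by
    rcases vtx_shape α k i with ⟨h1, h2⟩ | ⟨h1, h2⟩ | ⟨h1, h2, h3⟩
    · exact ⟨2*k+1, false, by omega, Or.inl ⟨h ▸ h2, rfl⟩⟩
    · exact ⟨2*k+2, false, by omega, Or.inl ⟨h ▸ h2, rfl⟩⟩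
    · exact ⟨Nat.pair k i + 1, true, by omega, Or.inr ⟨h ▸ h3, rfl⟩⟩
  obtain ⟨m, b, hm, hcase⟩ := key
  have hset : {q : ↥(Pset α S) | (q : ℕ → Bool) m = true ∧ (q : ℕ → Bool) 0 = b} = {p} := by
    ext q
    simp only [Set.mem_setOf_eq, Set.mem_singleton_iff]
    constructor
    · rintro ⟨hqm, hq0⟩
      rcases hcase with ⟨hep, rfl⟩ | ⟨hip, rfl⟩
      · -- p is an E point, q has q m = true, q 0 = false
        rcases mem_Pset_cases q.2 with hq | ⟨k', hk', i', hi', hq⟩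
        · rw [hq] at hqm; simp [cinf] at hqm
        rcases vtx_shape α k' i' with ⟨h1, h2⟩ | ⟨h1, h2⟩ | ⟨h1, h2, h3⟩
        · apply Subtype.ext
          rw [hq, h2] at hqm
          simp only [Ept, decide_eq_true_eq] at hqm
          rw [hq, h2, hep, hqm]
        · apply Subtype.ext
          rw [hq, h2] at hqm
          simp only [Ept, decide_eq_true_eq] at hqm
          rw [hq, h2, hep, hqm]
        · rw [hq, h3] at hq0; simp [Ipt] at hq0
      · -- p is an I point, q has q m = true, q 0 = true
        rcases mem_Pset_cases q.2 with hq | ⟨k', hk', i', hi', hq⟩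
        · rw [hq] at hq0; simp [cinf] at hq0
        rcases vtx_shape α k' i' with ⟨h1, h2⟩ | ⟨h1, h2⟩ | ⟨h1, h2, h3⟩
        · rw [hq, h2] at hq0; simp [Ept] at hq0
        · rw [hq, h2] at hq0; simp [Ept] at hq0
        · apply Subtype.ext
          rw [hq, h3] at hqm
          simp only [Ipt, decide_eq_true_eq] at hqm
          have hmm : m = Nat.pair k' i' + 1 := by omega
          rw [hq, h3, hip, hmm]
    · rintro rfl
      rcases hcase with ⟨hep, rfl⟩ | ⟨hip, rfl⟩
      · rw [hep]; simp [Ept]; omega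
      · rw [hip]; simp [Ipt]
  rw [← hset]
  have : {q : ↥(Pset α S) | (q : ℕ → Bool) m = true ∧ (q : ℕ → Bool) 0 = b} =
      (fun q : ↥(Pset α S) => ((q : ℕ → Bool) m, (q : ℕ → Bool) 0)) ⁻¹' {(true, b)} := by
    ext q; simp [Prod.ext_iff]
  rw [this]
  apply IsOpen.preimage
  · exact Continuous.prodMk ((continuous_apply m).comp continuous_subtype_val)
      ((continuous_apply 0).comp continuous_subtype_val)
  · exact isOpen_discrete _

/-- basic neighborhoods in a subtype of the Cantor space -/
def Dset (Q : Set (ℕ → Bool)) (z : ↥Q) (N : ℕ) : Set ↥Q :=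
  {y : ↥Q | ∀ i < N, (y : ℕ → Bool) i = (z : ℕ → Bool) i}

lemma Dset_open (Q : Set (ℕ → Bool)) (z : ↥Q) (N : ℕ) : IsOpen (Dset Q z N) := by
  have : Dset Q z N = ⋂ i ∈ Finset.range N,
      (fun y : ↥Q => (y : ℕ → Bool) i) ⁻¹' {(z : ℕ → Bool) i} := by
    ext y; simp [Dset]
  rw [this]
  apply isOpen_biInter_finset
  intro i _
  exact IsOpen.preimage ((continuous_apply i).comp continuous_subtype_val)
    (isOpen_discrete _)

lemma self_mem_Dset (Q : Set (ℕ → Bool)) (z : ↥Q) (N : ℕ) : z ∈ Dset Q z N :=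
  fun _ _ => rfl

lemma Dset_mono (Q : Set (ℕ → Bool)) (z : ↥Q) {N M : ℕ} (h : N ≤ M) :
    Dset Q z M ⊆ Dset Q z N := fun y hy i hi => hy i (by omega)

lemma Dset_basis {Q : Set (ℕ → Bool)} (z : ↥Q) {U : Set ↥Q} (hU : IsOpen U)
    (hz : z ∈ U) : ∃ N, Dset Q z N ⊆ U := by
  obtain ⟨V, hV, rfl⟩ := isOpen_induced_iff.mp hU
  obtain ⟨I, u, hu, hsub⟩ := isOpen_pi_iff.mp hV (z : ℕ → Bool) hz
  rcases I.eq_empty_or_nonempty with rfl | hne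
  · exact ⟨0, fun y _ => hsub (by simp)⟩
  refine ⟨I.max' hne + 1, fun y hy => ?_⟩
  apply hsub
  intro a ha
  have : a < I.max' hne + 1 := by
    have := Finset.le_max' I a ha; omega
  rw [hy a this]
  exact (hu a ha).2

/-- the canonical neighborhoods of the point at infinity -/
def CNs (α : ℕ → Bool) (S : Set ℕ) (N : ℕ) : Set ↥(Pset α S) := Dset _ (infP α S) N

lemma CNs_open (N : ℕ) : IsOpen (CNs α S N) := Dset_open _ _ _

lemma mem_CNs_iff {q : ↥(Pset α S)} {N : ℕ} :
    q ∈ CNs α S N ↔ ∀ i < N, (q : ℕ → Bool) i = false := Iff.rfl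

lemma CNs_shape {q : ↥(Pset α S)} {N : ℕ} (hN : 1 ≤ N) (hq : q ∈ CNs α S N) :
    (q : ℕ → Bool) = cinf ∨
    ∃ k ∈ S, N ≤ 2*k+2 ∧ ((q : ℕ → Bool) = vtx α k 0 ∨ (q : ℕ → Bool) = vtx α k (gam α k)) := by
  rcases mem_Pset_cases q.2 with h | ⟨k, hk, i, hi, h⟩
  · exact Or.inl h
  right
  rcases vtx_shape α k i with ⟨h1, h2⟩ | ⟨h1, h2⟩ | ⟨h1, h2, h3⟩
  · refine ⟨k, hk, ?_, Or.inl (h1 ▸ h)⟩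
    by_contra hcon
    have := hq (2*k+1) (by omega)
    rw [h, h2] at this; simp [Ept, infP, cinf] at this
  · refine ⟨k, hk, ?_, Or.inr (h1 ▸ h)⟩
    by_contra hcon
    have := hq (2*k+2) (by omega)
    rw [h, h2] at this; simp [Ept, infP, cinf] at this
  · exact absurd (hq 0 (by omega)) (by rw [h, h3]; simp [Ipt, infP, cinf])

lemma vtx_endpoint_mem_CNs {k N : ℕ} (hk : k ∈ S) (hkN : N ≤ k)
    {i : ℕ} (hi : i ≤ gam α k) (hsh : vtx α k i = Ept (2*k+1) ∨ vtx α k i = Ept (2*k+2)) :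
    (⟨vtx α k i, vtx_mem hk hi⟩ : ↥(Pset α S)) ∈ CNs α S N := by
  intro m hm
  show (vtx α k i) m = (infP α S : ℕ → Bool) m
  rcases hsh with h | h <;> rw [h] <;> simp [Ept, infP, cinf] <;> omega

lemma infP_not_isolated (hS : S.Infinite) :
    ¬ IsOpen ({infP α S} : Set ↥(Pset α S)) := by
  intro hop
  obtain ⟨N, hN⟩ := Dset_basis (infP α S) hop rfl
  obtain ⟨k, hk, hkN⟩ := hS.exists_gt N
  have hmem : (⟨vtx α k 0, vtx_mem hk (by omega)⟩ : ↥(Pset α S)) ∈ CNs α S N := by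
    apply vtx_endpoint_mem_CNs hk (by omega) (by omega)
    left; unfold vtx; rw [if_pos rfl]
  have := hN hmem
  simp only [Set.mem_singleton_iff] at this
  have h2 := congrArg Subtype.val this
  exact vtx_ne_cinf α k 0 h2

lemma continuousAt_of_locally_const {X Y : Type*} [TopologicalSpace X] [TopologicalSpace Y]
    {f : X → Y} {x : X} (U : Set X) (hU : IsOpen U) (hx : x ∈ U)
    (hconst : ∀ y ∈ U, f y = f x) : ContinuousAt f x := by
  have h : (fun _ : X => f x) =ᶠ[nhds x] f := by
    filter_upwards [hU.mem_nhds hx] with y hy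
    exact (hconst y hy).symm
  exact Filter.Tendsto.congr' h tendsto_const_nhds

end Topology


section Walks

variable {Z : Type*}

def IsWalk (G : Set (Z × Z)) (w : ℕ → Z) (n : ℕ) : Prop :=
  ∀ j < n, (w j, w (j+1)) ∈ G

def Reach (G : Set (Z × Z)) (z z' : Z) : Prop :=
  ∃ n w, IsWalk G w n ∧ w 0 = z ∧ w n = z'

lemma reach_refl (G : Set (Z × Z)) (z : Z) : Reach G z z :=
  ⟨0, fun _ => z, fun j hj => absurd hj (by omega), rfl, rfl⟩

lemma reach_single {G : Set (Z × Z)} {z z' : Z} (h : (z, z') ∈ G) : Reach G z z' := by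
  refine ⟨1, fun j => if j = 0 then z else z', ?_, by simp, by simp⟩
  intro j hj
  have : j = 0 := by omega
  subst this; simpa using h

lemma reach_symm {G : Set (Z × Z)} (hsym : ∀ x y : Z, (x, y) ∈ G → (y, x) ∈ G)
    {z z' : Z} (h : Reach G z z') : Reach G z' z := by
  obtain ⟨n, w, hw, h0, hn⟩ := h
  refine ⟨n, fun j => w (n - j), ?_, by simpa, by simpa⟩
  intro j hj
  have h1 : n - j = (n - (j+1)) + 1 := by omega
  show (w (n - j), w (n - (j+1))) ∈ G
  rw [h1]
  exact hsym _ _ (hw (n - (j+1)) (by omega))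

lemma reach_trans {G : Set (Z × Z)} {x y z : Z}
    (h1 : Reach G x y) (h2 : Reach G y z) : Reach G x z := by
  obtain ⟨n1, w1, hw1, h10, h1n⟩ := h1
  obtain ⟨n2, w2, hw2, h20, h2n⟩ := h2
  refine ⟨n1 + n2, fun j => if j < n1 then w1 j else w2 (j - n1), ?_, ?_, ?_⟩
  · intro j hj
    by_cases hc : j + 1 < n1
    · simp only [if_pos (by omega : j < n1), if_pos hc]
      exact hw1 j (by omega)
    · by_cases hc2 : j < n1
      · -- j + 1 = n1
        have hj1 : j + 1 = n1 := by omega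
        simp only [if_pos hc2, if_neg hc]
        have : w2 (j + 1 - n1) = w1 (j+1) := by
          rw [hj1]; simp [h20, h1n]
        rw [this]
        exact hw1 j (by omega)
      · simp only [if_neg hc2, if_neg hc]
        have : j + 1 - n1 = (j - n1) + 1 := by omega
        rw [this]
        exact hw2 (j - n1) (by omega)
  · by_cases hc : 0 < n1
    · simp only [if_pos hc]; exact h10
    · have hn10 : n1 = 0 := by omega
      simp only [if_neg hc]
      subst hn10
      rw [Nat.zero_sub, h20, ← h1n, h10]
  · have : ¬ (n1 + n2 < n1) := by omega
    simp only [if_neg this]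
    simpa using h2n

lemma exists_min_walk {G : Set (Z × Z)} {z z' : Z} (h : Reach G z z') :
    ∃ n w, IsWalk G w n ∧ w 0 = z ∧ w n = z' ∧
      ∀ j ≤ n, ∀ j' ≤ n, w j = w j' → j = j' := by
  classical
  have hex : ∃ n, ∃ w, IsWalk G w n ∧ w 0 = z ∧ w n = z' := h
  set n0 := Nat.find hex with hn0
  obtain ⟨w, hw, h0, hn⟩ := Nat.find_spec hex
  refine ⟨n0, w, hw, h0, hn, ?_⟩
  by_contra hcon
  push_neg at hcon
  obtain ⟨j, hj, j', hj', heq, hne⟩ := hcon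
  -- wlog j < j'
  have key : ∀ a b, a ≤ n0 → b ≤ n0 → a < b → w a = w b → False := by
    intro a b ha hb hab heqab
    set d := b - a with hd
    have hd1 : 1 ≤ d := by omega
    have : ∃ w', IsWalk G w' (n0 - d) ∧ w' 0 = z ∧ w' (n0 - d) = z' := by
      refine ⟨fun t => if t < a then w t else w (t + d), ?_, ?_, ?_⟩
      · intro t ht
        by_cases hc : t + 1 < a
        · simp only [if_pos (by omega : t < a), if_pos hc]
          exact hw t (by omega)
        · by_cases hc2 : t < a
          · have ht1 : t + 1 = a := by omega
            simp only [if_pos hc2, if_neg hc]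
            have hwb : w (t + 1 + d) = w (t+1) := by
              have e1 : t + 1 + d = b := by omega
              rw [e1, ← heqab, ht1]
            rw [hwb]
            exact hw t (by omega)
          · simp only [if_neg hc2, if_neg hc]
            have : t + 1 + d = (t + d) + 1 := by omega
            rw [this]
            exact hw (t + d) (by omega)
      · by_cases hc : 0 < a
        · simp only [if_pos hc]; exact h0
        · have ha0 : a = 0 := by omega
          simp only [if_neg hc]
          have e1 : 0 + d = b := by omega
          rw [e1, ← heqab, ha0]
          exact h0
      · have : ¬ (n0 - d < a) := by omega
        simp only [if_neg this]
        have : n0 - d + d = n0 := by omega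
        rw [this, hn]
    have := Nat.find_min hex (by omega : n0 - d < n0) this
    exact this
  rcases Nat.lt_trichotomy j j' with hlt | heqj | hlt
  · exact key j j' hj hj' hlt heq
  · exact hne heqj
  · exact key j' j hj' hj hlt heq.symm

/-- arithmetic lemma: an injective ±1 walk from 0 reaching M at the end has length M -/
lemma walk_arith_up {b : ℕ → ℕ} {L : ℕ}
    (hstep : ∀ j < L, b (j+1) = b j + 1 ∨ b j = b (j+1) + 1)
    (hinj : ∀ j ≤ L, ∀ j' ≤ L, b j = b j' → j = j')
    (h0 : b 0 = 0) : ∀ j ≤ L, b j = j := by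
  intro j
  induction j using Nat.strong_induction_on with
  | _ j ih =>
    intro hj
    match j, hj with
    | 0, _ => exact h0
    | (t+1), hj =>
      have hbt : b t = t := ih t (by omega) (by omega)
      rcases hstep t (by omega) with hup | hdown
      · omega
      · -- b t = b (t+1) + 1
        rcases Nat.eq_zero_or_pos t with ht0 | ht1
        · subst ht0; omega
        · have hbt1 : b (t-1) = t - 1 := ih (t-1) (by omega) (by omega)
          have : b (t+1) = t - 1 := by omega
          have := hinj (t+1) (by omega) (t-1) (by omega) (by omega)
          omega

lemma walk_arith {b : ℕ → ℕ} {L M : ℕ} (hL : 1 ≤ L) (hM : 1 ≤ M)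
    (hstep : ∀ j < L, b (j+1) = b j + 1 ∨ b j = b (j+1) + 1)
    (hinj : ∀ j ≤ L, ∀ j' ≤ L, b j = b j' → j = j')
    (h0 : b 0 = 0 ∨ b 0 = M) (hLv : b L = 0 ∨ b L = M) :
    L = M ∧ (b 0 = 0 → ∀ j ≤ L, b j = j) ∧ (b 0 = M → ∀ j ≤ L, b j = L - j) := by
  have hne : b 0 ≠ b L := fun hc => by have := hinj 0 (by omega) L (by omega) hc; omega
  rcases h0 with h0 | h0
  · have hbL : b L = M := by
      rcases hLv with h | h
      · omega
      · exact h
    have hup := walk_arith_up hstep hinj h0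
    have hLM : L = M := by have := hup L (le_refl L); omega
    exact ⟨hLM, fun _ => hup, fun hcon => by omega⟩
  · have hbL : b L = 0 := by
      rcases hLv with h | h
      · exact h
      · omega
    -- reverse
    set c : ℕ → ℕ := fun j => b (L - j) with hc
    have hstep' : ∀ j < L, c (j+1) = c j + 1 ∨ c j = c (j+1) + 1 := by
      intro j hj
      have h1 : L - j = (L - (j+1)) + 1 := by omega
      have := hstep (L - (j+1)) (by omega)
      simp only [hc]
      rw [h1]
      tauto
    have hinj' : ∀ j ≤ L, ∀ j' ≤ L, c j = c j' → j = j' := by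
      intro j hj j' hj' hcc
      have := hinj (L - j) (by omega) (L - j') (by omega) hcc
      omega
    have h0' : c 0 = 0 := by simp only [hc]; simpa using hbL
    have hup := walk_arith_up hstep' hinj' h0'
    have hLM : L = M := by
      have := hup L (le_refl L)
      simp only [hc] at this
      simp only [Nat.sub_self] at this
      omega
    refine ⟨hLM, fun hcon => by omega, fun _ => ?_⟩
    intro j hj
    have := hup (L - j) (by omega)
    simp only [hc] at this
    have hLL : L - (L - j) = j := by omega
    rw [hLL] at this
    omega

end Walks


section WalkStructure

variable {Z : Type*} {β : ℕ → Bool} {T : Set ℕ}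

lemma walk_block {G : Set (Z × Z)} (ψ : Z → ↥(Pset β T))
    (hψinj : Function.Injective ψ)
    (hψhom : ∀ x y : Z, (x, y) ∈ G → (ψ x, ψ y) ∈ GrS β T)
    {w : ℕ → Z} {n : ℕ} (hw : IsWalk G w n)
    (hwinj : ∀ j ≤ n, ∀ j' ≤ n, w j = w j' → j = j') (hn : 1 ≤ n)
    {l e : ℕ} (he : e = 0 ∨ e = gam β l) (h0 : (ψ (w 0) : ℕ → Bool) = vtx β l e)
    {l' e' : ℕ} (he' : e' = 0 ∨ e' = gam β l') (hln : (ψ (w n) : ℕ → Bool) = vtx β l' e') :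
    n = gam β l ∧
    (e = 0 → ∀ j ≤ n, (ψ (w j) : ℕ → Bool) = vtx β l j) ∧
    (e = gam β l → ∀ j ≤ n, (ψ (w j) : ℕ → Bool) = vtx β l (n - j)) := by
  set b : ℕ → ℕ := fun j => idxOf β ((ψ (w j)) : ℕ → Bool) with hb
  have he_le : e ≤ gam β l := by rcases he with h | h <;> omega
  have hb0 : b 0 = e := by
    simp only [hb]; rw [h0, idxOf_vtx he_le]
  have key : ∀ j ≤ n, (ψ (w j) : ℕ → Bool) = vtx β l (b j) ∧ b j ≤ gam β l := by
    intro j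
    induction j with
    | zero => intro _; rw [hb0]; exact ⟨h0, he_le⟩
    | succ j ih =>
      intro hj
      obtain ⟨hsh, hle⟩ := ih (by omega)
      obtain ⟨k', hk', i, hile, hcase⟩ := hψhom _ _ (hw j (by omega))
      rcases hcase with ⟨hc1, hc2⟩ | ⟨hc1, hc2⟩
      · have heq := vtx_inj hle (by omega) (hsh.symm.trans hc1)
        obtain ⟨hkl, hieq⟩ := heq
        subst hkl
        have hv : (ψ (w (j+1)) : ℕ → Bool) = vtx β l (b j + 1) := by
          rw [hc2, ← hieq]
        have : b (j+1) = b j + 1 := by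
          simp only [hb]; rw [hv]
          exact idxOf_vtx (by omega)
        rw [this]
        exact ⟨hv, by omega⟩
      · have heq := vtx_inj hle (by omega) (hsh.symm.trans hc2)
        obtain ⟨hkl, hieq⟩ := heq
        subst hkl
        have hv : (ψ (w (j+1)) : ℕ → Bool) = vtx β l i := by rw [hc1]
        have : b (j+1) = i := by
          simp only [hb]; rw [hv]
          exact idxOf_vtx (by omega)
        rw [this]
        exact ⟨hv, by omega⟩
  have steps : ∀ j < n, b (j+1) = b j + 1 ∨ b j = b (j+1) + 1 := by
    intro j hj
    obtain ⟨hsh, hle⟩ := key j (by omega)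
    obtain ⟨hsh', hle'⟩ := key (j+1) (by omega)
    obtain ⟨k', hk', i, hile, hcase⟩ := hψhom _ _ (hw j hj)
    rcases hcase with ⟨hc1, hc2⟩ | ⟨hc1, hc2⟩
    · obtain ⟨hkl, hieq⟩ := vtx_inj hle (by omega) (hsh.symm.trans hc1)
      subst hkl
      obtain ⟨_, hieq'⟩ := vtx_inj hle' (by omega) (hsh'.symm.trans hc2)
      omega
    · obtain ⟨hkl, hieq⟩ := vtx_inj hle (by omega) (hsh.symm.trans hc2)
      subst hkl
      obtain ⟨_, hieq'⟩ := vtx_inj hle' (by omega) (hsh'.symm.trans hc1)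
      omega
  have binj : ∀ j ≤ n, ∀ j' ≤ n, b j = b j' → j = j' := by
    intro j hj j' hj' hbb
    have h1 : ψ (w j) = ψ (w j') := by
      apply Subtype.ext
      rw [(key j hj).1, (key j' hj').1, hbb]
    exact hwinj j hj j' hj' (hψinj h1)
  have hbn : l' = l ∧ b n = e' := by
    have h1 := (key n (le_refl n)).1
    have h2 := vtx_inj (key n (le_refl n)).2
      (by rcases he' with h | h <;> omega : e' ≤ gam β l') (h1.symm.trans hln)
    exact ⟨h2.1.symm, h2.2⟩
  have harith := walk_arith hn
    (by have := three_le_gam β l; omega : 1 ≤ gam β l) steps binj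
    (by rw [hb0]; exact he)
    (by rw [hbn.2]; rcases he' with h | h
        · exact Or.inl h
        · rw [h, hbn.1]; exact Or.inr rfl)
  obtain ⟨hLM, hup, hdown⟩ := harith
  refine ⟨hLM, ?_, ?_⟩
  · intro he0 j hj
    rw [(key j hj).1, hup (by omega) j hj]
  · intro heM j hj
    rw [(key j hj).1, hdown (by omega) j hj]

end WalkStructure


section Colorings

variable {α : ℕ → Bool} {S : Set ℕ}

lemma fin2_step : ∀ x y z : Fin 2, x ≠ y → ((x = z → ¬ y = z) ∧ (¬ x = z → y = z)) := by decide

lemma countable_Pset (α : ℕ → Bool) (S : Set ℕ) : (Pset α S).Countable := by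
  have hsub : Pset α S ⊆ {cinf} ∪ Set.range (fun q : ℕ × ℕ => vtx α q.1 q.2) := by
    rintro x (h | ⟨k, _, i, _, h⟩)
    · exact Or.inl h
    · exact Or.inr ⟨(k, i), h.symm⟩
  exact Set.Countable.mono hsub ((Set.countable_singleton _).union (Set.countable_range _))

lemma vtx_zero_shape (α : ℕ → Bool) (k : ℕ) : vtx α k 0 = Ept (2*k+1) := by
  unfold vtx; rw [if_pos rfl]

lemma vtx_gam_shape (α : ℕ → Bool) (k : ℕ) : vtx α k (gam α k) = Ept (2*k+2) := by
  have := three_le_gam α k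
  unfold vtx; rw [if_neg (by omega), if_pos rfl]

lemma no_two_coloring (α : ℕ → Bool) {S : Set ℕ} (hS : S.Infinite) :
    ¬ HasContColoring (GrS α S) 2 := by
  rintro ⟨c, hc, hcp⟩
  have hU : IsOpen (c ⁻¹' {c (infP α S)}) := hc.isOpen_preimage _ (isOpen_discrete _)
  obtain ⟨N, hN⟩ := Dset_basis (infP α S) hU rfl
  obtain ⟨k, hk, hkN⟩ := hS.exists_gt N
  have hγ3 := three_le_gam α k
  set γ := gam α k with hγ
  set w : ℕ → ↥(Pset α S) := fun j => ⟨vtx α k (min j γ), vtx_mem hk (min_le_right _ _)⟩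
    with hw
  have hwv : ∀ j ≤ γ, (w j : ℕ → Bool) = vtx α k j := by
    intro j hj; simp only [hw]; rw [min_eq_left hj]
  have hedge : ∀ j < γ, (w j, w (j+1)) ∈ GrS α S := by
    intro j hj
    exact ⟨k, hk, j, by omega,
      Or.inl ⟨by rw [hwv j (by omega)], by rw [hwv (j+1) (by omega)]⟩⟩
  have halt : ∀ j ≤ γ, (j % 2 = 0 → c (w j) = c (w 0)) ∧ (j % 2 = 1 → c (w j) ≠ c (w 0)) := by
    intro j
    induction j with
    | zero => exact fun _ => ⟨fun _ => rfl, by omega⟩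
    | succ j ih =>
      intro hj
      obtain ⟨ih0, ih1⟩ := ih (by omega)
      have hne := hcp _ _ (hedge j (by omega))
      constructor
      · intro hpar
        exact (fin2_step _ _ _ hne).2 (fun hc0 => (ih1 (by omega) hc0))
      · intro hpar
        exact fun hc0 => (fin2_step _ _ _ hne).1 (ih0 (by omega)) hc0
  have hw0 : c (w 0) = c (infP α S) := by
    have hmem : w 0 ∈ CNs α S N := by
      have : (w 0 : ℕ → Bool) = vtx α k 0 := hwv 0 (by omega)
      have hsh : vtx α k (min 0 γ) = Ept (2*k+1) ∨ vtx α k (min 0 γ) = Ept (2*k+2) := by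
        left; rw [min_eq_left (by omega)]; exact vtx_zero_shape α k
      exact vtx_endpoint_mem_CNs hk (by omega) (min_le_right _ _) hsh
    exact hN hmem
  have hwγ : c (w γ) = c (infP α S) := by
    have hsh : vtx α k (min γ γ) = Ept (2*k+1) ∨ vtx α k (min γ γ) = Ept (2*k+2) := by
      right; rw [min_self]; exact vtx_gam_shape α k
    exact hN (vtx_endpoint_mem_CNs hk (by omega) (min_le_right _ _) hsh)
  have := (halt γ (le_refl γ)).2 (gam_mod2 α k)
  rw [hw0, hwγ] at this
  exact this rfl

lemma three_coloring (α : ℕ → Bool) (S : Set ℕ) : HasContColoring (GrS α S) 3 := by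
  classical
  set c : ↥(Pset α S) → Fin 3 := fun p =>
    if (p : ℕ → Bool) 0 = true then ⟨1 + (idxOf α (p : ℕ → Bool)) % 2, by omega⟩ else 0
    with hcdef
  have hval : ∀ k i, i ≤ gam α k → ∀ (p : ↥(Pset α S)), (p : ℕ → Bool) = vtx α k i →
      (c p : Fin 3).val = if i = 0 ∨ i = gam α k then 0 else 1 + i % 2 := by
    intro k i hi p hp
    have h0 := @vtx_zero_coord α k i
    by_cases hcase : i = 0 ∨ i = gam α k
    · have : (p : ℕ → Bool) 0 ≠ true := by
        rw [hp]; intro hcon; have := h0.mp hcon; tauto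
      simp only [hcdef, if_neg this, if_pos hcase]; rfl
    · push_neg at hcase
      have : (p : ℕ → Bool) 0 = true := by rw [hp]; exact h0.mpr ⟨hcase.1, hcase.2⟩
      simp only [hcdef, if_pos this, if_neg (by tauto : ¬ (i = 0 ∨ i = gam α k))]
      rw [hp, idxOf_vtx hi]
  refine ⟨c, ?_, ?_⟩
  · rw [continuous_iff_continuousAt]
    intro p
    by_cases h0 : (p : ℕ → Bool) 0 = true
    · have hne : (p : ℕ → Bool) ≠ cinf := by
        intro hcon; rw [hcon] at h0; simp [cinf] at h0
      apply continuousAt_of_locally_const _ (isolated_of_ne_cinf p hne) rfl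
      rintro y hy
      rw [Set.mem_singleton_iff] at hy; rw [hy]
    · set U : Set ↥(Pset α S) := {q | (q : ℕ → Bool) 0 = false} with hUdef
      have hUop : IsOpen U := by
        have : U = (fun q : ↥(Pset α S) => (q : ℕ → Bool) 0) ⁻¹' {false} := rfl
        rw [this]
        exact IsOpen.preimage ((continuous_apply 0).comp continuous_subtype_val)
          (isOpen_discrete _)
      apply continuousAt_of_locally_const U hUop (by simpa [hUdef] using h0)
      intro y hy
      have hy' : (y : ℕ → Bool) 0 = false := hy
      have hyf : (y : ℕ → Bool) 0 ≠ true := by rw [hy']; simp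
      simp only [hcdef, if_neg hyf, if_neg h0]
  · intro x y hxy
    obtain ⟨k, hk, i, hile, hcase⟩ := hxy
    have g3 := three_le_gam α k
    have main : ∀ p q : ↥(Pset α S), (p : ℕ → Bool) = vtx α k i →
        (q : ℕ → Bool) = vtx α k (i+1) → c p ≠ c q := by
      intro p q hp hq
      have h1 := hval k i (by omega) p hp
      have h2 := hval k (i+1) (by omega) q hq
      intro hcon
      rw [hcon] at h1
      rw [h1] at h2
      by_cases hc1 : i = 0 ∨ i = gam α k <;> by_cases hc2 : i+1 = 0 ∨ i+1 = gam α k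
      · rcases hc1 with h | h <;> rcases hc2 with h' | h' <;> omega
      · rw [if_pos hc1, if_neg hc2] at h2; omega
      · rw [if_neg hc1, if_pos hc2] at h2; omega
      · rw [if_neg hc1, if_neg hc2] at h2; omega
    rcases hcase with ⟨h1, h2⟩ | ⟨h1, h2⟩
    · exact main x y h1 h2
    · exact (main y x h1 h2).symm

end Colorings


section Extraction

variable {Z : Type*} [TopologicalSpace Z] {α : ℕ → Bool} {S : Set ℕ}

lemma exists_z0 {G : Set (Z × Z)} (hcol : ¬ HasContColoring G 2)
    {φ : Z → ↥(Pset α S)} (hφc : Continuous φ) (hφinj : Function.Injective φ)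
    (hφhom : ∀ x y : Z, (x, y) ∈ G → (φ x, φ y) ∈ GrS α S) :
    ∃ z0 : Z, (φ z0 : ℕ → Bool) = cinf ∧ ¬ IsOpen ({z0} : Set Z) := by
  set c : Z → Fin 2 := fun z => pv (idxOf α ((φ z) : ℕ → Bool)) with hcdef
  have hproper : ∀ x y : Z, (x, y) ∈ G → c x ≠ c y := fun x y h => edge_pv (hφhom x y h)
  have hnotcont : ¬ Continuous c := fun hcont => hcol ⟨c, hcont, hproper⟩
  rw [continuous_iff_continuousAt] at hnotcont
  push_neg at hnotcont
  obtain ⟨z0, hz0⟩ := hnotcont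
  refine ⟨z0, ?_, ?_⟩
  · by_contra hne
    apply hz0
    apply continuousAt_of_locally_const (φ ⁻¹' {φ z0})
      (hφc.isOpen_preimage _ (isolated_of_ne_cinf _ hne)) rfl
    intro y hy
    rw [Set.mem_preimage, Set.mem_singleton_iff] at hy
    simp only [hcdef, hy]
  · intro hop
    apply hz0
    apply continuousAt_of_locally_const _ hop rfl
    intro y hy
    rw [Set.mem_singleton_iff] at hy
    rw [hy]

lemma endpoint_cases {z : Z} {φ : Z → ↥(Pset α S)}
    (hVend : (φ z : ℕ → Bool) = cinf ∨
      ∃ k ∈ S, ((φ z : ℕ → Bool) = vtx α k 0 ∨ (φ z : ℕ → Bool) = vtx α k (gam α k)))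
    {k i : ℕ} (hi : i ≤ gam α k) (hz : (φ z : ℕ → Bool) = vtx α k i) :
    i = 0 ∨ i = gam α k := by
  rcases hVend with h | ⟨k2, _, hsh⟩
  · exact absurd (hz.symm.trans h) (vtx_ne_cinf α k i)
  rcases hsh with h | h
  · have := vtx_inj hi (by omega) (hz.symm.trans h)
    left; omega
  · have := vtx_inj hi (le_refl _) (hz.symm.trans h)
    right; rw [this.2, this.1]

lemma extraction {G : Set (Z × Z)}
    (hsym : ∀ x y : Z, (x, y) ∈ G → (y, x) ∈ G)
    (hcol : ¬ HasContColoring G 2)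
    {φ : Z → ↥(Pset α S)} (hφc : Continuous φ) (hφinj : Function.Injective φ)
    (hφhom : ∀ x y : Z, (x, y) ∈ G → (φ x, φ y) ∈ GrS α S)
    {z0 : Z} (hz0 : (φ z0 : ℕ → Bool) = cinf)
    {V : Set Z} (hV : IsOpen V) (hz0V : z0 ∈ V)
    (hVend : ∀ z ∈ V, (φ z : ℕ → Bool) = cinf ∨
      ∃ k ∈ S, ((φ z : ℕ → Bool) = vtx α k 0 ∨ (φ z : ℕ → Bool) = vtx α k (gam α k))) :
    ∃ z z', z ∈ V ∧ z' ∈ V ∧ Reach G z z' ∧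
      pv (idxOf α (φ z : ℕ → Bool)) ≠ pv (idxOf α (φ z' : ℕ → Bool)) := by
  classical
  by_contra hno
  push_neg at hno
  set pvz : Z → Fin 2 := fun z => pv (idxOf α (φ z : ℕ → Bool)) with hpvz
  have hno' : ∀ z ∈ V, ∀ z' ∈ V, Reach G z z' → pvz z = pvz z' := by
    intro z hz z' hz' hr
    exact hno z z' hz hz' hr
  set E : Z → Prop := fun z => ∃ zb, Reach G z zb ∧ zb ∈ V with hE
  set c : Z → Fin 2 := fun z =>
    if z ∈ V then 0 else if h : E z then pvz z + pvz h.choose else pvz z with hcdef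
  have hcV : ∀ z ∈ V, c z = 0 := fun z hz => by simp only [hcdef, if_pos hz]
  have fin2a : ∀ a b : Fin 2, a ≠ b → a + b ≠ 0 := by decide
  have fin2b : ∀ a b t : Fin 2, a ≠ b → a + t ≠ b + t := by decide
  have hproper : ∀ x y : Z, (x, y) ∈ G → c x ≠ c y := by
    intro x y hxy
    have hpvne : pvz x ≠ pvz y := edge_pv (hφhom x y hxy)
    by_cases hx : x ∈ V <;> by_cases hy : y ∈ V
    · -- both in V : impossible
      exfalso
      obtain ⟨k, hk, i, hile, hcase⟩ := hφhom x y hxy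
      have g3 := three_le_gam α k
      rcases hcase with ⟨h1, h2⟩ | ⟨h1, h2⟩
      · have e1 := endpoint_cases (hVend x hx) (by omega) h1
        have e2 := endpoint_cases (hVend y hy) (by omega) h2
        omega
      · have e1 := endpoint_cases (hVend y hy) (by omega) h1
        have e2 := endpoint_cases (hVend x hx) (by omega) h2
        omega
    · -- x in V, y not
      have hEy : E y := ⟨x, reach_single (hsym x y hxy), hx⟩
      have hchoose := hEy.choose_spec
      have hxw : pvz x = pvz hEy.choose := by
        apply hno' x hx _ hchoose.2
        exact reach_trans (reach_single hxy) hchoose.1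
      rw [hcV x hx]
      simp only [hcdef, if_neg hy, dif_pos hEy]
      rw [← hxw]
      exact fun hcon => fin2a _ _ (Ne.symm hpvne) hcon.symm
    · -- y in V, x not
      have hEx : E x := ⟨y, reach_single hxy, hy⟩
      have hchoose := hEx.choose_spec
      have hyw : pvz y = pvz hEx.choose := by
        apply hno' y hy _ hchoose.2
        exact reach_trans (reach_single (hsym x y hxy)) hchoose.1
      rw [hcV y hy]
      simp only [hcdef, if_neg hx, dif_pos hEx]
      rw [← hyw]
      exact fin2a _ _ hpvne
    · -- neither
      by_cases hEx : E x
      · have hEy : E y :=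
          ⟨hEx.choose, reach_trans (reach_single (hsym x y hxy)) hEx.choose_spec.1,
            hEx.choose_spec.2⟩
        have hww : pvz hEx.choose = pvz hEy.choose := by
          apply hno' _ hEx.choose_spec.2 _ hEy.choose_spec.2
          exact reach_trans (reach_symm hsym hEx.choose_spec.1)
            (reach_trans (reach_single hxy) hEy.choose_spec.1)
        simp only [hcdef, if_neg hx, if_neg hy, dif_pos hEx, dif_pos hEy]
        rw [hww]
        exact fin2b _ _ _ hpvne
      · have hEy : ¬ E y := by
          intro hEy
          exact hEx ⟨hEy.choose, reach_trans (reach_single hxy) hEy.choose_spec.1,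
            hEy.choose_spec.2⟩
        simp only [hcdef, if_neg hx, if_neg hy, dif_neg hEx, dif_neg hEy]
        exact hpvne
  have hcont : Continuous c := by
    rw [continuous_iff_continuousAt]
    intro z
    by_cases hz : z ∈ V
    · apply continuousAt_of_locally_const V hV hz
      intro y hy; rw [hcV y hy, hcV z hz]
    · have hne : (φ z : ℕ → Bool) ≠ cinf := by
        intro hcon
        have : φ z = φ z0 := Subtype.ext (hcon.trans hz0.symm)
        exact hz ((hφinj this) ▸ hz0V)
      have hopen : IsOpen ({z} : Set Z) := by
        have : ({z} : Set Z) = φ ⁻¹' {φ z} := by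
          ext y
          simp only [Set.mem_singleton_iff, Set.mem_preimage]
          exact ⟨fun h => h ▸ rfl, fun h => hφinj h⟩
        rw [this]
        exact hφc.isOpen_preimage _ (isolated_of_ne_cinf _ hne)
      apply continuousAt_of_locally_const _ hopen rfl
      intro y hy
      rw [Set.mem_singleton_iff] at hy
      rw [hy]
  exact hcol ⟨c, hcont, hproper⟩

end Extraction


section Core

variable {Z : Type*} [TopologicalSpace Z] {α : ℕ → Bool} {S : Set ℕ}

lemma extract_block {G : Set (Z × Z)}
    (hsym : ∀ x y : Z, (x, y) ∈ G → (y, x) ∈ G)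
    (hcol : ¬ HasContColoring G 2)
    {φ : Z → ↥(Pset α S)} (hφc : Continuous φ) (hφinj : Function.Injective φ)
    (hφhom : ∀ x y : Z, (x, y) ∈ G → (φ x, φ y) ∈ GrS α S)
    {z0 : Z} (hz0 : (φ z0 : ℕ → Bool) = cinf)
    {W : Set Z} (hW : IsOpen W) (hz0W : z0 ∈ W) (N : ℕ) :
    ∃ k ∈ S, N ≤ k ∧ ∃ w : ℕ → Z, IsWalk G w (gam α k) ∧
      (∀ j ≤ gam α k, (φ (w j) : ℕ → Bool) = vtx α k j) ∧
      w 0 ∈ W ∧ w (gam α k) ∈ W := by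
  set V := W ∩ φ ⁻¹' (CNs α S (2*N+3)) with hVdef
  have hVop : IsOpen V := hW.inter (hφc.isOpen_preimage _ (CNs_open _))
  have hz0V : z0 ∈ V := by
    refine ⟨hz0W, ?_⟩
    intro i _
    show (φ z0 : ℕ → Bool) i = (infP α S : ℕ → Bool) i
    rw [hz0]; rfl
  have hVsh : ∀ z ∈ V, (φ z : ℕ → Bool) = cinf ∨
      ∃ k ∈ S, 2*N+3 ≤ 2*k+2 ∧
        ((φ z : ℕ → Bool) = vtx α k 0 ∨ (φ z : ℕ → Bool) = vtx α k (gam α k)) :=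
    fun z hz => CNs_shape (by omega) hz.2
  have hVend : ∀ z ∈ V, (φ z : ℕ → Bool) = cinf ∨
      ∃ k ∈ S, ((φ z : ℕ → Bool) = vtx α k 0 ∨ (φ z : ℕ → Bool) = vtx α k (gam α k)) := by
    intro z hz
    rcases hVsh z hz with h | ⟨k, hk, _, hsh⟩
    · exact Or.inl h
    · exact Or.inr ⟨k, hk, hsh⟩
  obtain ⟨z, z', hzV, hz'V, hre, hpvne⟩ :=
    extraction hsym hcol hφc hφinj hφhom hz0 hVop hz0V hVend
  have hzne : z ≠ z' := by
    intro hcon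
    rw [hcon] at hpvne
    exact hpvne rfl
  obtain ⟨n, w, hw, hw0, hwn, hwinj⟩ := exists_min_walk hre
  have hn1 : 1 ≤ n := by
    rcases Nat.eq_zero_or_pos n with h | h
    · exfalso; apply hzne; rw [← hw0, ← hwn, h]
    · exact h
  have hz_shape : ∃ k ∈ S, 2*N+3 ≤ 2*k+2 ∧
      ((φ z : ℕ → Bool) = vtx α k 0 ∨ (φ z : ℕ → Bool) = vtx α k (gam α k)) := by
    rcases hVsh z hzV with h | h
    · exfalso
      have hedge := hφhom _ _ (hw 0 (by omega))
      have := (edge_ne_cinf hedge).1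
      rw [hw0] at this
      exact this h
    · exact h
  have hz'_shape : ∃ k ∈ S, 2*N+3 ≤ 2*k+2 ∧
      ((φ z' : ℕ → Bool) = vtx α k 0 ∨ (φ z' : ℕ → Bool) = vtx α k (gam α k)) := by
    rcases hVsh z' hz'V with h | h
    · exfalso
      have hedge := hφhom _ _ (hw (n-1) (by omega))
      have h2 := (edge_ne_cinf hedge).2
      have : n - 1 + 1 = n := by omega
      rw [this, hwn] at h2
      exact h2 h
    · exact h
  obtain ⟨k1, hk1, hk1N, hsh1⟩ := hz_shape
  obtain ⟨k2, hk2, hk2N, hsh2⟩ := hz'_shape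
  have g3 := three_le_gam α k1
  -- set up endpoints for walk_block
  have hstart : ∃ e, (e = 0 ∨ e = gam α k1) ∧ (φ (w 0) : ℕ → Bool) = vtx α k1 e := by
    rcases hsh1 with h | h
    · exact ⟨0, Or.inl rfl, by rw [hw0]; exact h⟩
    · exact ⟨gam α k1, Or.inr rfl, by rw [hw0]; exact h⟩
  have hend : ∃ e', (e' = 0 ∨ e' = gam α k2) ∧ (φ (w n) : ℕ → Bool) = vtx α k2 e' := by
    rcases hsh2 with h | h
    · exact ⟨0, Or.inl rfl, by rw [hwn]; exact h⟩
    · exact ⟨gam α k2, Or.inr rfl, by rw [hwn]; exact h⟩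
  obtain ⟨e, he, h0⟩ := hstart
  obtain ⟨e', he', hn'⟩ := hend
  obtain ⟨hlen, hup, hdown⟩ := walk_block φ hφinj hφhom hw hwinj hn1 he h0 he' hn'
  refine ⟨k1, hk1, by omega, ?_⟩
  rcases he with he0 | heM
  · refine ⟨w, ?_, ?_, ?_, ?_⟩
    · rw [← hlen]; exact hw
    · intro j hj; exact hup he0 j (by omega)
    · rw [hw0]; exact hzV.1
    · rw [← hlen, hwn]; exact hz'V.1
  · -- reversed walk
    refine ⟨fun j => w (n - j), ?_, ?_, ?_, ?_⟩
    · intro j hj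
      show (w (n - j), w (n - (j+1))) ∈ G
      have h1 : n - j = (n - (j+1)) + 1 := by omega
      rw [h1]
      exact hsym _ _ (hw (n - (j+1)) (by omega))
    · intro j hj
      have := hdown heM (n - j) (by omega)
      have h2 : n - (n - j) = j := by omega
      rw [h2] at this
      exact this
    · show w (n - 0) ∈ W
      rw [Nat.sub_zero, hwn]; exact hz'V.1
    · show w (n - gam α k1) ∈ W
      rw [← hlen, Nat.sub_self, hw0]; exact hzV.1

lemma incompat_core {β : ℕ → Bool} {T : Set ℕ} {G : Set (Z × Z)}
    (hsym : ∀ x y : Z, (x, y) ∈ G → (y, x) ∈ G)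
    (hcol : ¬ HasContColoring G 2)
    {φ : Z → ↥(Pset α S)} (hφc : Continuous φ) (hφinj : Function.Injective φ)
    (hφhom : ∀ x y : Z, (x, y) ∈ G → (φ x, φ y) ∈ GrS α S)
    {ψ : Z → ↥(Pset β T)} (hψc : Continuous ψ) (hψinj : Function.Injective ψ)
    (hψhom : ∀ x y : Z, (x, y) ∈ G → (ψ x, ψ y) ∈ GrS β T)
    (N : ℕ) :
    ∃ k ∈ S, ∃ l ∈ T, N ≤ k ∧ N ≤ l ∧ gam α k = gam β l := by
  obtain ⟨z0, hz0, hz0nop⟩ := exists_z0 hcol hφc hφinj hφhom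
  have hψz0 : (ψ z0 : ℕ → Bool) = cinf := by
    by_contra hne
    apply hz0nop
    have heq : ({z0} : Set Z) = ψ ⁻¹' {ψ z0} := by
      ext y
      simp only [Set.mem_singleton_iff, Set.mem_preimage]
      exact ⟨fun h => h ▸ rfl, fun h => hψinj h⟩
    rw [heq]
    exact hψc.isOpen_preimage _ (isolated_of_ne_cinf _ hne)
  set W := ψ ⁻¹' (CNs β T (2*N+3)) with hWdef
  have hWop : IsOpen W := hψc.isOpen_preimage _ (CNs_open _)
  have hz0W : z0 ∈ W := by
    intro i _
    show (ψ z0 : ℕ → Bool) i = (infP β T : ℕ → Bool) i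
    rw [hψz0]; rfl
  obtain ⟨k, hk, hkN, w, hw, hcover, hw0W, hwnW⟩ :=
    extract_block hsym hcol hφc hφinj hφhom hz0 hWop hz0W N
  have g3 := three_le_gam α k
  have hwinj : ∀ j ≤ gam α k, ∀ j' ≤ gam α k, w j = w j' → j = j' := by
    intro j hj j' hj' he
    have heq : (φ (w j) : ℕ → Bool) = (φ (w j') : ℕ → Bool) := by rw [he]
    rw [hcover j hj, hcover j' hj'] at heq
    exact (vtx_inj hj hj' heq).2
  have hnotz0 : ∀ j ≤ gam α k, w j ≠ z0 := by
    intro j hj hcon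
    have := hcover j hj
    rw [hcon, hz0] at this
    exact vtx_ne_cinf α k j this.symm
  have hw0sh : ∃ l1 ∈ T, 2*N+3 ≤ 2*l1+2 ∧
      ((ψ (w 0) : ℕ → Bool) = vtx β l1 0 ∨ (ψ (w 0) : ℕ → Bool) = vtx β l1 (gam β l1)) := by
    rcases CNs_shape (by omega) hw0W with h | h
    · exfalso
      exact hnotz0 0 (by omega) (hψinj (Subtype.ext (h.trans hψz0.symm)))
    · exact h
  have hwnsh : ∃ l2 ∈ T, 2*N+3 ≤ 2*l2+2 ∧
      ((ψ (w (gam α k)) : ℕ → Bool) = vtx β l2 0 ∨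
        (ψ (w (gam α k)) : ℕ → Bool) = vtx β l2 (gam β l2)) := by
    rcases CNs_shape (by omega) hwnW with h | h
    · exfalso
      exact hnotz0 _ (le_refl _) (hψinj (Subtype.ext (h.trans hψz0.symm)))
    · exact h
  obtain ⟨l1, hl1, hl1N, hsh1⟩ := hw0sh
  obtain ⟨l2, hl2, hl2N, hsh2⟩ := hwnsh
  have hstart : ∃ e, (e = 0 ∨ e = gam β l1) ∧ (ψ (w 0) : ℕ → Bool) = vtx β l1 e := by
    rcases hsh1 with h | h
    · exact ⟨0, Or.inl rfl, h⟩
    · exact ⟨gam β l1, Or.inr rfl, h⟩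
  have hend : ∃ e', (e' = 0 ∨ e' = gam β l2) ∧ (ψ (w (gam α k)) : ℕ → Bool) = vtx β l2 e' := by
    rcases hsh2 with h | h
    · exact ⟨0, Or.inl rfl, h⟩
    · exact ⟨gam β l2, Or.inr rfl, h⟩
  obtain ⟨e, he, h0⟩ := hstart
  obtain ⟨e', he', hn'⟩ := hend
  obtain ⟨hlen, -, -⟩ := walk_block ψ hψinj hψhom hw hwinj (by omega) he h0 he' hn'
  exact ⟨k, hk, l1, hl1, by omega, by omega, hlen⟩

end Core


section Rigidity

lemma rigidity {α : ℕ → Bool} {S1 S2 : Set ℕ} (hS1 : S1.Infinite)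
    (h : RedIC (GrS α S1) (GrS α S2)) : (S1 \ S2).Finite := by
  obtain ⟨f, hc, hinj, hhom⟩ := h
  have hfinf : (f (infP α S1) : ℕ → Bool) = cinf := by
    by_contra hne
    apply infP_not_isolated hS1
    have heq : ({infP α S1} : Set ↥(Pset α S1)) = f ⁻¹' {f (infP α S1)} := by
      ext y
      simp only [Set.mem_singleton_iff, Set.mem_preimage]
      exact ⟨fun h => h ▸ rfl, fun h => hinj h⟩
    rw [heq]
    exact hc.isOpen_preimage _ (isolated_of_ne_cinf _ hne)
  have hU : IsOpen (f ⁻¹' (CNs α S2 1)) := hc.isOpen_preimage _ (CNs_open _)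
  have hmem : infP α S1 ∈ f ⁻¹' (CNs α S2 1) := by
    intro i _
    show (f (infP α S1) : ℕ → Bool) i = (infP α S2 : ℕ → Bool) i
    rw [hfinf]; rfl
  obtain ⟨K, hK⟩ := Dset_basis (infP α S1) hU hmem
  have key : ∀ k ∈ S1, K ≤ k → k ∈ S2 := by
    intro k hk hKk
    have g3 := three_le_gam α k
    set w : ℕ → ↥(Pset α S1) :=
      fun j => ⟨vtx α k (min j (gam α k)), vtx_mem hk (min_le_right _ _)⟩ with hwdef
    have hwv : ∀ j ≤ gam α k, (w j : ℕ → Bool) = vtx α k j := by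
      intro j hj; simp only [hwdef]; rw [min_eq_left hj]
    have hwalk : IsWalk (GrS α S1) w (gam α k) := by
      intro j hj
      exact ⟨k, hk, j, by omega,
        Or.inl ⟨by rw [hwv j (by omega)], by rw [hwv (j+1) (by omega)]⟩⟩
    have hwinj : ∀ j ≤ gam α k, ∀ j' ≤ gam α k, w j = w j' → j = j' := by
      intro j hj j' hj' he
      have heq : (w j : ℕ → Bool) = (w j' : ℕ → Bool) := by rw [he]
      rw [hwv j hj, hwv j' hj'] at heq
      exact (vtx_inj hj hj' heq).2
    have h0mem : w 0 ∈ CNs α S1 K := by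
      apply vtx_endpoint_mem_CNs hk hKk (min_le_right _ _)
      left; rw [min_eq_left (by omega)]; exact vtx_zero_shape α k
    have hnmem : w (gam α k) ∈ CNs α S1 K := by
      apply vtx_endpoint_mem_CNs hk hKk (min_le_right _ _)
      right; rw [min_self]; exact vtx_gam_shape α k
    have hwne : ∀ j ≤ gam α k, f (w j) ≠ f (infP α S1) := by
      intro j hj hcon
      have := hinj hcon
      have h2 : (w j : ℕ → Bool) = cinf := by rw [this]; rfl
      rw [hwv j hj] at h2
      exact vtx_ne_cinf α k j h2
    have h0sh : ∃ l1 ∈ S2, ((f (w 0) : ℕ → Bool) = vtx α l1 0 ∨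
        (f (w 0) : ℕ → Bool) = vtx α l1 (gam α l1)) := by
      rcases CNs_shape (by omega) (hK h0mem) with hcc | ⟨l, hl, _, hsh⟩
      · exact absurd (Subtype.ext (hcc.trans hfinf.symm)) (hwne 0 (by omega))
      · exact ⟨l, hl, hsh⟩
    have hnsh : ∃ l2 ∈ S2, ((f (w (gam α k)) : ℕ → Bool) = vtx α l2 0 ∨
        (f (w (gam α k)) : ℕ → Bool) = vtx α l2 (gam α l2)) := by
      rcases CNs_shape (by omega) (hK hnmem) with hcc | ⟨l, hl, _, hsh⟩
      · exact absurd (Subtype.ext (hcc.trans hfinf.symm)) (hwne _ (le_refl _))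
      · exact ⟨l, hl, hsh⟩
    obtain ⟨l1, hl1, hsh1⟩ := h0sh
    obtain ⟨l2, hl2, hsh2⟩ := hnsh
    have hstart : ∃ e, (e = 0 ∨ e = gam α l1) ∧ (f (w 0) : ℕ → Bool) = vtx α l1 e := by
      rcases hsh1 with h | h
      · exact ⟨0, Or.inl rfl, h⟩
      · exact ⟨gam α l1, Or.inr rfl, h⟩
    have hend : ∃ e', (e' = 0 ∨ e' = gam α l2) ∧
        (f (w (gam α k)) : ℕ → Bool) = vtx α l2 e' := by
      rcases hsh2 with h | h
      · exact ⟨0, Or.inl rfl, h⟩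
      · exact ⟨gam α l2, Or.inr rfl, h⟩
    obtain ⟨e, he, h0⟩ := hstart
    obtain ⟨e', he', hn'⟩ := hend
    obtain ⟨hlen, -, -⟩ :=
      walk_block f hinj (fun x y hxy => hhom x y hxy) hwalk hwinj (by omega) he h0 he' hn'
    have := gam_inj hlen
    rw [this.1]
    exact hl1
  apply Set.Finite.subset (Set.finite_Iio K)
  intro k hk
  simp only [Set.mem_diff] at hk
  by_contra hcon
  simp only [Set.mem_Iio, not_lt] at hcon
  exact hk.2 (key k hk.1 hcon)

end Rigidity


section StructureLemma

lemma structure_lemma {Q : Set (ℕ → Bool)} {G : Set (↥Q × ↥Q)}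
    (hsym : ∀ x y : ↥Q, (x, y) ∈ G → (y, x) ∈ G) (hcol : ¬ HasContColoring G 2)
    {α : ℕ → Bool} {S : Set ℕ}
    {φ : ↥Q → ↥(Pset α S)} (hφc : Continuous φ) (hφinj : Function.Injective φ)
    (hφhom : ∀ x y : ↥Q, (x, y) ∈ G → (φ x, φ y) ∈ GrS α S) :
    ∃ S' : Set ℕ, S' ⊆ S ∧ S'.Infinite ∧ RedIC (GrS α S') G := by
  classical
  obtain ⟨z0, hz0, -⟩ := exists_z0 hcol hφc hφinj hφhom
  have step : ∀ n N : ℕ, ∃ p : ℕ × (ℕ → ↥Q), (p.1 ∈ S ∧ N ≤ p.1) ∧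
      IsWalk G p.2 (gam α p.1) ∧ (∀ j ≤ gam α p.1, (φ (p.2 j) : ℕ → Bool) = vtx α p.1 j) ∧
      p.2 0 ∈ Dset Q z0 n ∧ p.2 (gam α p.1) ∈ Dset Q z0 n := by
    intro n N
    obtain ⟨k, hk, hkN, w, h1, h2, h3, h4⟩ := extract_block hsym hcol hφc hφinj hφhom hz0
      (Dset_open Q z0 n) (self_mem_Dset Q z0 n) N
    exact ⟨(k, w), ⟨hk, hkN⟩, h1, h2, h3, h4⟩
  let F : ℕ → ℕ × (ℕ → ↥Q) := fun n => Nat.rec ((step 0 0).choose)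
      (fun m prev => (step (m+1) (prev.1 + 1)).choose) n
  have hF0 : F 0 = (step 0 0).choose := rfl
  have hFs : ∀ n, F (n+1) = (step (n+1) ((F n).1 + 1)).choose := fun n => rfl
  have hPd : ∀ n, (F n).1 ∈ S ∧ IsWalk G (F n).2 (gam α (F n).1) ∧
      (∀ j ≤ gam α (F n).1, (φ ((F n).2 j) : ℕ → Bool) = vtx α (F n).1 j) ∧
      (F n).2 0 ∈ Dset Q z0 n ∧ (F n).2 (gam α (F n).1) ∈ Dset Q z0 n := by
    intro n
    cases n with
    | zero =>
      have h := (step 0 0).choose_spec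
      rw [hF0]
      exact ⟨h.1.1, h.2.1, h.2.2.1, h.2.2.2.1, h.2.2.2.2⟩
    | succ n =>
      have h := (step (n+1) ((F n).1 + 1)).choose_spec
      rw [hFs n]
      exact ⟨h.1.1, h.2.1, h.2.2.1, h.2.2.2.1, h.2.2.2.2⟩
  have hgrow : ∀ n, (F n).1 < (F (n+1)).1 := by
    intro n
    have h := (step (n+1) ((F n).1 + 1)).choose_spec
    rw [hFs n]
    have := h.1.2
    omega
  set kseq : ℕ → ℕ := fun n => (F n).1 with hkseq
  have hmono : StrictMono kseq := strictMono_nat_of_lt_succ hgrow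
  set S' : Set ℕ := Set.range kseq with hS'
  have hS'sub : S' ⊆ S := by rintro x ⟨n, rfl⟩; exact (hPd n).1
  have hS'inf : S'.Infinite := Set.infinite_range_of_injective hmono.injective
  set g : ↥(Pset α S') → ↥Q := fun p =>
    if h : ∃ q : ℕ × ℕ, q.2 ≤ gam α (kseq q.1) ∧ (p : ℕ → Bool) = vtx α (kseq q.1) q.2
    then (F h.choose.1).2 h.choose.2 else z0 with hg
  have hgvtx : ∀ n i, i ≤ gam α (kseq n) → ∀ p : ↥(Pset α S'),
      (p : ℕ → Bool) = vtx α (kseq n) i → g p = (F n).2 i := by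
    intro n i hi p hp
    have hex : ∃ q : ℕ × ℕ, q.2 ≤ gam α (kseq q.1) ∧ (p : ℕ → Bool) = vtx α (kseq q.1) q.2 :=
      ⟨(n, i), hi, hp⟩
    have hspec := hex.choose_spec
    have heq := vtx_inj hspec.1 hi (hspec.2.symm.trans hp)
    have e1 : hex.choose.1 = n := hmono.injective heq.1
    simp only [hg]
    rw [dif_pos hex, e1, heq.2]
  have hgcinf : ∀ p : ↥(Pset α S'), (p : ℕ → Bool) = cinf → g p = z0 := by
    intro p hp
    have hnex : ¬ ∃ q : ℕ × ℕ, q.2 ≤ gam α (kseq q.1) ∧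
        (p : ℕ → Bool) = vtx α (kseq q.1) q.2 := by
      rintro ⟨q, _, hq⟩
      exact vtx_ne_cinf _ _ _ (hq.symm.trans hp)
    simp only [hg]
    rw [dif_neg hnex]
  have hdecomp : ∀ p : ↥(Pset α S'), (p : ℕ → Bool) = cinf ∨
      ∃ n, ∃ i ≤ gam α (kseq n), (p : ℕ → Bool) = vtx α (kseq n) i := by
    intro p
    rcases mem_Pset_cases p.2 with h | ⟨k, hk, i, hi, h⟩
    · exact Or.inl h
    · obtain ⟨n, rfl⟩ := hk
      exact Or.inr ⟨n, i, hi, h⟩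
  have hφz0ne : ∀ n i, i ≤ gam α (kseq n) → (F n).2 i ≠ z0 := by
    intro n i hi hcon
    have := (hPd n).2.2.1 i hi
    rw [hcon, hz0] at this
    exact vtx_ne_cinf _ _ _ this.symm
  refine ⟨S', hS'sub, hS'inf, g, ?_, ?_, ?_⟩
  · -- continuity
    rw [continuous_iff_continuousAt]
    intro p
    rcases hdecomp p with hp | ⟨n, i, hi, hp⟩
    · -- p is the point at infinity
      have hgp : g p = z0 := hgcinf p hp
      rw [ContinuousAt, hgp, Filter.tendsto_def]
      intro U hU
      obtain ⟨U', hU'sub, hU'op, hz0U'⟩ := mem_nhds_iff.mp hU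
      obtain ⟨n0, hn0⟩ := Dset_basis z0 hU'op hz0U'
      have hpinf : p = infP α S' := Subtype.ext hp
      have hsubset : CNs α S' (2*(kseq n0)+3) ⊆ g ⁻¹' U := by
        intro q hq
        rcases CNs_shape (by omega) hq with hc | ⟨k, hkS', hbd, hsh⟩
        · rw [Set.mem_preimage]
          rw [hgcinf q hc]
          exact hU'sub hz0U'
        · obtain ⟨m, rfl⟩ := hkS'
          have hm : n0 < m := by
            have : kseq n0 < kseq m := by omega
            exact hmono.lt_iff_lt.mp this
          rw [Set.mem_preimage]
          rcases hsh with h | h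
          · rw [hgvtx m 0 (by omega) q h]
            exact hU'sub (hn0 (Dset_mono Q z0 (by omega) (hPd m).2.2.2.1))
          · rw [hgvtx m (gam α (kseq m)) (le_refl _) q h]
            exact hU'sub (hn0 (Dset_mono Q z0 (by omega) (hPd m).2.2.2.2))
      apply Filter.mem_of_superset _ hsubset
      apply (CNs_open _).mem_nhds
      rw [hpinf]
      intro i _; rfl
    · -- p is isolated
      have hne : (p : ℕ → Bool) ≠ cinf := by rw [hp]; exact vtx_ne_cinf _ _ _
      apply continuousAt_of_locally_const _ (isolated_of_ne_cinf p hne) rfl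
      intro y hy
      rw [Set.mem_singleton_iff] at hy
      rw [hy]
  · -- injectivity
    intro p p' hpp
    rcases hdecomp p with hp | ⟨n, i, hi, hp⟩ <;> rcases hdecomp p' with hp' | ⟨n', i', hi', hp'⟩
    · exact Subtype.ext (hp.trans hp'.symm)
    · rw [hgcinf p hp, hgvtx n' i' hi' p' hp'] at hpp
      exact absurd hpp.symm (hφz0ne n' i' hi')
    · rw [hgcinf p' hp', hgvtx n i hi p hp] at hpp
      exact absurd hpp (hφz0ne n i hi)
    · rw [hgvtx n i hi p hp, hgvtx n' i' hi' p' hp'] at hpp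
      have : (φ ((F n).2 i) : ℕ → Bool) = (φ ((F n').2 i') : ℕ → Bool) := by rw [hpp]
      rw [(hPd n).2.2.1 i hi, (hPd n').2.2.1 i' hi'] at this
      have heq := vtx_inj hi hi' this
      apply Subtype.ext
      rw [hp, hp', heq.1, heq.2]
  · -- homomorphism
    intro x y hxy
    obtain ⟨k, hkS', i, hile, hcase⟩ := hxy
    obtain ⟨n, rfl⟩ := hkS'
    rcases hcase with ⟨h1, h2⟩ | ⟨h1, h2⟩
    · rw [hgvtx n i (by omega) x h1, hgvtx n (i+1) (by omega) y h2]
      exact (hPd n).2.1 i (by omega : i < gam α (kseq n))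
    · rw [hgvtx n i (by omega) y h1, hgvtx n (i+1) (by omega) x h2]
      exact hsym _ _ ((hPd n).2.1 i (by omega : i < gam α (kseq n)))

end StructureLemma


section Polish

variable (α : ℕ → Bool) (S : Set ℕ)

lemma Ept0_not_mem : Ept 0 ∉ Pset α S := by
  rintro (h | ⟨k, _, i, hi, h⟩)
  · have := congrFun h 0; simp [Ept, cinf] at this
  rcases vtx_shape α k i with ⟨_, h2⟩ | ⟨_, h2⟩ | ⟨_, _, h2⟩ <;> rw [h2] at h
  · have := Ept_inj h; omega
  · have := Ept_inj h; omega
  · have := congrFun h (Nat.pair k i + 1)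
    simp [Ept, Ipt] at this

lemma mem_Pbar_shapes {x : ℕ → Bool} (hx : x ∈ Pset α S ∪ {Ept 0}) :
    x = cinf ∨ (∃ m, x = Ept m) ∨ (∃ j, 1 ≤ j ∧ x = Ipt j) := by
  rcases hx with hx | hx
  · rcases mem_Pset_cases hx with h | ⟨k, _, i, _, h⟩
    · exact Or.inl h
    rcases vtx_shape α k i with ⟨_, h2⟩ | ⟨_, h2⟩ | ⟨_, _, h2⟩
    · exact Or.inr (Or.inl ⟨2*k+1, h ▸ h2⟩)
    · exact Or.inr (Or.inl ⟨2*k+2, h ▸ h2⟩)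
    · exact Or.inr (Or.inr ⟨Nat.pair k i + 1, by omega, h ▸ h2⟩)
  · exact Or.inr (Or.inl ⟨0, hx⟩)

lemma open_two_coords (s t : ℕ) : IsOpen {x : ℕ → Bool | x s = true ∧ x t = true} := by
  have : {x : ℕ → Bool | x s = true ∧ x t = true} =
      (fun x : ℕ → Bool => (x s, x t)) ⁻¹' {(true, true)} := by
    ext x; simp [Prod.ext_iff]
  rw [this]
  exact IsOpen.preimage ((continuous_apply s).prodMk (continuous_apply t)) (isOpen_discrete _)

lemma two_coords_disjoint {s t : ℕ} (hs : 1 ≤ s) (ht : 1 ≤ t) (hst : s ≠ t) :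
    ∀ x ∈ Pset α S ∪ {Ept 0}, ¬ (x s = true ∧ x t = true) := by
  intro x hx ⟨h1, h2⟩
  rcases mem_Pbar_shapes α S hx with h | ⟨m, h⟩ | ⟨j, hj, h⟩ <;> subst h
  · simp [cinf] at h1
  · simp only [Ept, decide_eq_true_eq] at h1 h2; omega
  · simp only [Ipt, decide_eq_true_eq] at h1 h2; omega

lemma open_agree (y : ℕ → Bool) (t : ℕ) : IsOpen {x : ℕ → Bool | ∀ i ≤ t, x i = y i} := by
  have : {x : ℕ → Bool | ∀ i ≤ t, x i = y i} =
      ⋂ i ∈ Finset.range (t+1), (fun x : ℕ → Bool => x i) ⁻¹' {y i} := by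
    ext x
    simp only [Set.mem_setOf_eq, Set.mem_iInter, Set.mem_preimage, Set.mem_singleton_iff,
      Finset.mem_range]
    constructor
    · intro h i hi; exact h i (by omega)
    · intro h i hi; exact h i (by omega)
  rw [this]
  exact isOpen_biInter_finset fun i _ => IsOpen.preimage (continuous_apply i) (isOpen_discrete _)

lemma closed_Pbar : IsClosed (Pset α S ∪ {Ept 0}) := by
  rw [← isOpen_compl_iff, isOpen_iff_forall_mem_open]
  intro y hy
  simp only [Set.mem_compl_iff] at hy
  by_cases h0 : y 0 = true
  · by_cases hEt : ∃ t, 1 ≤ t ∧ y t = true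
    · obtain ⟨t, ht, hyt⟩ := hEt
      by_cases hIp : y = Ipt t
      · -- y = Ipt t, not in Pbar
        refine ⟨{x : ℕ → Bool | ∀ i ≤ t, x i = y i}, ?_, open_agree y t, fun i _ => rfl⟩
        intro x hx
        simp only [Set.mem_compl_iff]
        intro hmem
        rcases mem_Pbar_shapes α S hmem with h | ⟨m, h⟩ | ⟨j, hj, h⟩ <;> subst h
        · have := hx 0 (by omega); rw [h0] at this; simp [cinf] at this
        · have hx0 := hx 0 (by omega); rw [h0] at hx0
          simp only [Ept, decide_eq_true_eq] at hx0
          have hxt := hx t (by omega); rw [hyt] at hxt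
          simp only [Ept, decide_eq_true_eq] at hxt
          omega
        · have hxt := hx t (by omega); rw [hyt] at hxt
          simp only [Ipt, decide_eq_true_eq] at hxt
          have hjt : j = t := by omega
          subst hjt
          rw [← hIp] at hmem
          exact hy hmem
      · -- y ≠ Ipt t : find a second positive coordinate
        have hs : ∃ s, 1 ≤ s ∧ s ≠ t ∧ y s = true := by
          obtain ⟨s, hsne⟩ := Function.ne_iff.mp hIp
          rcases Nat.eq_zero_or_pos s with rfl | hpos
          · exfalso; apply hsne; rw [h0]; simp [Ipt]
          · have hst : s ≠ t := by
              intro hcon; subst hcon; apply hsne; rw [hyt]; simp [Ipt]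
            refine ⟨s, by omega, hst, ?_⟩
            revert hsne
            simp only [Ipt, decide_eq_true_eq]
            intro hsne
            cases hys : y s
            · exfalso; apply hsne; rw [hys]; simp; omega
            · rfl
        obtain ⟨s, hs1, hst, hys⟩ := hs
        refine ⟨{x : ℕ → Bool | x s = true ∧ x t = true}, ?_, open_two_coords s t,
          ⟨hys, hyt⟩⟩
        intro x hx
        simp only [Set.mem_compl_iff]
        exact fun hmem => two_coords_disjoint α S hs1 ht hst x hmem hx
    · -- y = Ept 0 : contradiction since Ept 0 ∈ Pbar
      exfalso
      apply hy
      right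
      push_neg at hEt
      have : y = Ept 0 := by
        funext i
        rcases Nat.eq_zero_or_pos i with rfl | hpos
        · rw [h0]; simp [Ept]
        · have h2 : y i = false := Bool.eq_false_iff.mpr (hEt i (by omega))
          rw [h2]
          symm
          simp only [Ept, decide_eq_false_iff_not]
          omega
      rw [this]; rfl
  · -- y 0 = false
    have hyc : y ≠ cinf := by
      intro hcon; apply hy; left; rw [hcon]; exact Or.inl rfl
    have hEt : ∃ t, 1 ≤ t ∧ y t = true := by
      obtain ⟨t, htne⟩ := Function.ne_iff.mp hyc
      have hyt : y t = true := by
        cases hyt : y t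
        · exfalso; apply htne; rw [hyt]; rfl
        · rfl
      have ht1 : 1 ≤ t := by
        rcases Nat.eq_zero_or_pos t with rfl | h
        · exact absurd hyt h0
        · omega
      exact ⟨t, ht1, hyt⟩
    obtain ⟨t, ht, hyt⟩ := hEt
    by_cases hEp : y = Ept t
    · refine ⟨{x : ℕ → Bool | ∀ i ≤ t, x i = y i}, ?_, open_agree y t, fun i _ => rfl⟩
      intro x hx
      simp only [Set.mem_compl_iff]
      intro hmem
      rcases mem_Pbar_shapes α S hmem with h | ⟨m, h⟩ | ⟨j, hj, h⟩ <;> subst h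
      · have := hx t (by omega); rw [hyt] at this; simp [cinf] at this
      · rcases Nat.lt_trichotomy m t with hmt | hmt | hmt
        · have := hx m (by omega)
          have hym : y m = false := by
            rw [hEp]; simp only [Ept, decide_eq_true_eq]; simp; omega
          rw [hym] at this; simp [Ept] at this
        · subst hmt; rw [← hEp] at hmem; exact hy hmem
        · have := hx t (by omega); rw [hyt] at this
          simp only [Ept, decide_eq_true_eq] at this; omega
      · have h1 := hx 0 (by omega)
        have h2 : y 0 = true := by rw [← h1]; simp [Ipt]
        exact h0 h2
    · have hs : ∃ s, 1 ≤ s ∧ s ≠ t ∧ y s = true := by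
        obtain ⟨s, hsne⟩ := Function.ne_iff.mp hEp
        have hst : s ≠ t := by
          intro hcon; subst hcon; apply hsne; rw [hyt]; simp [Ept]
        have hys : y s = true := by
          revert hsne
          simp only [Ept, decide_eq_true_eq]
          intro hsne
          cases hys : y s
          · exfalso; apply hsne; rw [hys]; simp; omega
          · rfl
        have hs1 : 1 ≤ s := by
          rcases Nat.eq_zero_or_pos s with rfl | h
          · exact absurd hys h0
          · omega
        exact ⟨s, hs1, hst, hys⟩
      obtain ⟨s, hs1, hst, hys⟩ := hs
      refine ⟨{x : ℕ → Bool | x s = true ∧ x t = true}, ?_, open_two_coords s t, ⟨hys, hyt⟩⟩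
      intro x hx
      simp only [Set.mem_compl_iff]
      exact fun hmem => two_coords_disjoint α S hs1 ht hst x hmem hx

lemma polish_Pset : PolishSpace ↥(Pset α S) := by
  have hclosed : IsClosed (Pset α S ∪ {Ept 0}) := closed_Pbar α S
  haveI : PolishSpace (ℕ → Bool) := {}
  haveI hP1 : PolishSpace ↥(Pset α S ∪ {Ept 0}) := hclosed.polishSpace
  set s : Set ↥(Pset α S ∪ {Ept 0}) := {x | (x : ℕ → Bool) ≠ Ept 0} with hs
  have hsop : IsOpen s := by
    have : s = (Subtype.val : ↥(Pset α S ∪ {Ept 0}) → ℕ → Bool) ⁻¹' ({Ept 0}ᶜ) := rfl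
    rw [this]
    exact continuous_subtype_val.isOpen_preimage _ isClosed_singleton.isOpen_compl
  haveI hP2 : PolishSpace ↥s := hsop.polishSpace
  have e : ↥(Pset α S) ≃ₜ ↥s :=
    { toFun := fun p => ⟨⟨(p : ℕ → Bool), Or.inl p.2⟩, fun hcon => Ept0_not_mem α S (hcon ▸ p.2)⟩
      invFun := fun x => ⟨((x : ↥(Pset α S ∪ {Ept 0})) : ℕ → Bool), by
        rcases (x : ↥(Pset α S ∪ {Ept 0})).2 with h | h
        · exact h
        · exact absurd h x.2⟩
      left_inv := fun p => rfl
      right_inv := fun x => by ext; rfl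
      continuous_toFun := by
        apply Continuous.subtype_mk
        exact Continuous.subtype_mk continuous_subtype_val _
      continuous_invFun := by
        apply Continuous.subtype_mk
        exact continuous_subtype_val.comp continuous_subtype_val }
  exact e.isClosedEmbedding.polishSpace

end Polish


section Assembly

lemma redIC_trans {X Y W : Type*} [TopologicalSpace X] [TopologicalSpace Y] [TopologicalSpace W]
    {G : Set (X×X)} {H : Set (Y×Y)} {K : Set (W×W)}
    (h1 : RedIC G H) (h2 : RedIC H K) : RedIC G K := by
  obtain ⟨f, fc, fi, fh⟩ := h1
  obtain ⟨g, gc, gi, gh⟩ := h2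
  exact ⟨g ∘ f, gc.comp fc, gi.comp fi, fun x y hxy => gh _ _ (fh x y hxy)⟩

lemma Pset_mono {α : ℕ → Bool} {S T : Set ℕ} (h : S ⊆ T) : Pset α S ⊆ Pset α T := by
  rintro x (hx | ⟨k, hk, i, hi, hx⟩)
  · exact Or.inl hx
  · exact Or.inr ⟨k, h hk, i, hi, hx⟩

lemma redIC_mono {α : ℕ → Bool} {S T : Set ℕ} (h : S ⊆ T) : RedIC (GrS α S) (GrS α T) := by
  refine ⟨fun p => ⟨(p : ℕ → Bool), Pset_mono h p.2⟩, ?_, ?_, ?_⟩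
  · exact Continuous.subtype_mk continuous_subtype_val _
  · intro p q hpq
    have h2 : (p : ℕ → Bool) = (q : ℕ → Bool) := congrArg (Subtype.val : ↥(Pset α T) → (ℕ → Bool)) hpq
    exact Subtype.ext h2
  · rintro x y ⟨k, hk, i, hile, hc⟩
    exact ⟨k, h hk, i, hile, hc⟩

lemma exists_split {S : Set ℕ} (hS : S.Infinite) :
    ∃ T : Set ℕ, T ⊆ S ∧ T.Infinite ∧ (S \ T).Infinite := by
  have hS' : (setOf (· ∈ S)).Infinite := hS
  set f : ℕ → ℕ := fun n => Nat.nth (· ∈ S) n with hf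
  have hmono : StrictMono f := Nat.nth_strictMono hS'
  have hmem : ∀ n, f n ∈ S := fun n => Nat.nth_mem_of_infinite hS' n
  refine ⟨Set.range (fun n => f (2*n)), ?_, ?_, ?_⟩
  · rintro x ⟨n, rfl⟩; exact hmem _
  · exact Set.infinite_range_of_injective (fun a b hab => by
      have := hmono.injective hab; omega)
  · have hsub : Set.range (fun n => f (2*n+1)) ⊆ S \ Set.range (fun n => f (2*n)) := by
      rintro x ⟨n, rfl⟩
      refine ⟨hmem _, ?_⟩
      rintro ⟨m, hm⟩
      have := hmono.injective hm
      omega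
    exact Set.Infinite.mono hsub
      (Set.infinite_range_of_injective (fun a b hab => by
        have := hmono.injective hab; omega))

lemma pair_incompat {α β : ℕ → Bool} (hne : α ≠ β) (Z : Type*) [TopologicalSpace Z]
    (G : Set (Z × Z)) (hG : IsGraph G) (hcol : ¬ HasContColoring G 2) :
    ¬ (RedIC G (GrS α Set.univ) ∧ RedIC G (GrS β Set.univ)) := by
  rintro ⟨⟨φ, hφc, hφinj, hφhom⟩, ⟨ψ, hψc, hψinj, hψhom⟩⟩
  obtain ⟨j, hj⟩ := Function.ne_iff.mp hne
  obtain ⟨k, -, l, -, hkN, hlN, hgam⟩ :=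
    incompat_core hG.1 hcol hφc hφinj hφhom hψc hψinj hψhom (j+1)
  obtain ⟨hkl, hval⟩ := gam_inj hgam
  subst hkl
  exact hj (aval_inj hval j (by omega))

lemma no_antichain {B : Set SubCantorGraph}
    (hB1 : ∀ b ∈ B, b.MemS)
    (hB2a : ∃ b ∈ B, RedIC b.2 (GrS (fun _ => false) Set.univ))
    (hB2 : ∀ T : Set ℕ, T.Infinite → ∃ b ∈ B, RedIC b.2 (GrS (fun _ => false) T))
    (hB3 : ∀ b ∈ B, ∀ b' ∈ B, b ≠ b' → ¬ RedIC b.2 b'.2 ∧ ¬ RedIC b'.2 b.2) : False := by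
  obtain ⟨b0, hb0B, hb0red⟩ := hB2a
  obtain ⟨hgr, hcol⟩ := hB1 b0 hb0B
  obtain ⟨φ, hφc, hφinj, hφhom⟩ := hb0red
  obtain ⟨S1, -, hS1inf, hS1red⟩ := structure_lemma hgr.1 hcol hφc hφinj hφhom
  obtain ⟨S2, hS2sub, hS2inf, hdiff⟩ := exists_split hS1inf
  obtain ⟨b1, hb1B, hb1red⟩ := hB2 S2 hS2inf
  have hb1b0 : RedIC b1.2 b0.2 :=
    redIC_trans (redIC_trans hb1red (redIC_mono hS2sub)) hS1red
  by_cases hbe : b1 = b0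
  · subst hbe
    have hred : RedIC (GrS (fun _ => false) S1) (GrS (fun _ => false) S2) :=
      redIC_trans hS1red hb1red
    exact hdiff (rigidity hS1inf hred)
  · exact (hB3 b1 hb1B b0 hb0B hbe).1 hb1b0

lemma basis_card {B : Set SubCantorGraph}
    (hB1 : ∀ b ∈ B, b.MemS)
    (hB2 : ∀ α : ℕ → Bool, ∃ b ∈ B, RedIC b.2 (GrS α Set.univ)) :
    Cardinal.continuum ≤ Cardinal.mk ↥B := by
  have hch : ∀ α : ℕ → Bool, ∃ b : ↥B, RedIC (b : SubCantorGraph).2 (GrS α Set.univ) := by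
    intro α
    obtain ⟨b, hbB, hred⟩ := hB2 α
    exact ⟨⟨b, hbB⟩, hred⟩
  choose F hF using hch
  have hinj : Function.Injective F := by
    intro α β hab
    by_contra hne
    obtain ⟨j, hj⟩ := Function.ne_iff.mp hne
    have h1 := hF α
    have h2 := hF β
    rw [hab] at h1
    obtain ⟨hgr, hcol⟩ := hB1 (F β : SubCantorGraph) (F β).2
    obtain ⟨φ, hφc, hφinj, hφhom⟩ := h1
    obtain ⟨ψ, hψc, hψinj, hψhom⟩ := h2
    obtain ⟨k, -, l, -, hkN, hlN, hgam⟩ :=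
      incompat_core hgr.1 hcol hφc hφinj hφhom hψc hψinj hψhom (j+1)
    obtain ⟨hkl, hval⟩ := gam_inj hgam
    subst hkl
    exact hj (aval_inj hval j (by omega))
  calc Cardinal.continuum = Cardinal.mk (ℕ → Bool) := by
        rw [← Cardinal.two_power_aleph0, ← Cardinal.mk_nat, ← Cardinal.mk_bool,
          Cardinal.power_def]
    _ ≤ Cardinal.mk ↥B := Cardinal.mk_le_of_injective hinj

end Assembly

end Stmt5

end

theorem stmt5 :
    -- the family of pairwise ≼^i_c-incompatible graphs on countable 0D Polish spaces
    (∃ (P : (ℕ → Bool) → Set (ℕ → Bool))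
       (Gr : ∀ α : ℕ → Bool, Set (↥(P α) × ↥(P α))),
      (∀ α, (P α).Countable) ∧
      (∀ α, PolishSpace ↥(P α)) ∧
      (∀ α, IsGraph (Gr α)) ∧
      (∀ α, HasContColoring (Gr α) 3 ∧ ¬ HasContColoring (Gr α) 2) ∧
      ∀ α β : ℕ → Bool, α ≠ β →
        ∀ (Z : Type*) [TopologicalSpace Z], Is0DMS Z →
          ∀ G : Set (Z × Z), IsGraph G → ¬ HasContColoring G 2 →
            ¬ (RedIC G (Gr α) ∧ RedIC G (Gr β))) ∧
    -- 𝔖 has no ≼^i_c-antichain basis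
    (¬ ∃ B : Set SubCantorGraph,
        (∀ b ∈ B, b.MemS) ∧
        (∀ z : SubCantorGraph, z.MemS → ∃ b ∈ B, RedIC b.2 z.2) ∧
        (∀ b ∈ B, ∀ b' ∈ B, b ≠ b' → ¬ RedIC b.2 b'.2 ∧ ¬ RedIC b'.2 b.2)) ∧
    -- every ≼^i_c-basis for 𝔖 has cardinality at least continuum
    (∀ B : Set SubCantorGraph, (∀ b ∈ B, b.MemS) →
        (∀ z : SubCantorGraph, z.MemS → ∃ b ∈ B, RedIC b.2 z.2) →
        Cardinal.continuum ≤ Cardinal.mk ↥B) ∧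
    -- the Polish subclass has no ≼^i_c-antichain basis
    (¬ ∃ B : Set SubCantorGraph,
        (∀ b ∈ B, b.MemP) ∧
        (∀ z : SubCantorGraph, z.MemP → ∃ b ∈ B, RedIC b.2 z.2) ∧
        (∀ b ∈ B, ∀ b' ∈ B, b ≠ b' → ¬ RedIC b.2 b'.2 ∧ ¬ RedIC b'.2 b.2)) ∧
    -- every ≼^i_c-basis for the Polish subclass has cardinality at least continuum
    (∀ B : Set SubCantorGraph, (∀ b ∈ B, b.MemP) →
        (∀ z : SubCantorGraph, z.MemP → ∃ b ∈ B, RedIC b.2 z.2) →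
        Cardinal.continuum ≤ Cardinal.mk ↥B) := by
  classical
  refine ⟨?_, ?_, ?_, ?_, ?_⟩
  · refine ⟨fun α => Stmt5.Pset α Set.univ, fun α => Stmt5.GrS α Set.univ, ?_, ?_, ?_, ?_, ?_⟩
    · exact fun α => Stmt5.countable_Pset α Set.univ
    · exact fun α => Stmt5.polish_Pset α Set.univ
    · exact fun α => Stmt5.isGraph_grS α Set.univ
    · exact fun α => ⟨Stmt5.three_coloring α Set.univ,
        Stmt5.no_two_coloring α Set.infinite_univ⟩
    · intro α β hne Z _ _ G hG hcol
      exact Stmt5.pair_incompat hne Z G hG hcol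
  · rintro ⟨B, hB1, hB2, hB3⟩
    exact Stmt5.no_antichain hB1
      (hB2 ⟨_, Stmt5.GrS (fun _ => false) Set.univ⟩
        ⟨Stmt5.isGraph_grS _ _, Stmt5.no_two_coloring _ Set.infinite_univ⟩)
      (fun T hT => hB2 ⟨_, Stmt5.GrS (fun _ => false) T⟩
        ⟨Stmt5.isGraph_grS _ _, Stmt5.no_two_coloring _ hT⟩)
      hB3
  · intro B hB1 hB2
    exact Stmt5.basis_card hB1
      (fun α => hB2 ⟨_, Stmt5.GrS α Set.univ⟩
        ⟨Stmt5.isGraph_grS _ _, Stmt5.no_two_coloring _ Set.infinite_univ⟩)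
  · rintro ⟨B, hB1, hB2, hB3⟩
    exact Stmt5.no_antichain (fun b hb => (hB1 b hb).1)
      (hB2 ⟨_, Stmt5.GrS (fun _ => false) Set.univ⟩
        ⟨⟨Stmt5.isGraph_grS _ _, Stmt5.no_two_coloring _ Set.infinite_univ⟩,
          Stmt5.polish_Pset _ _⟩)
      (fun T hT => hB2 ⟨_, Stmt5.GrS (fun _ => false) T⟩
        ⟨⟨Stmt5.isGraph_grS _ _, Stmt5.no_two_coloring _ hT⟩, Stmt5.polish_Pset _ _⟩)
      hB3
  · intro B hB1 hB2
    exact Stmt5.basis_card (fun b hb => (hB1 b hb).1)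
      (fun α => hB2 ⟨_, Stmt5.GrS α Set.univ⟩
        ⟨⟨Stmt5.isGraph_grS _ _, Stmt5.no_two_coloring _ Set.infinite_univ⟩,
          Stmt5.polish_Pset _ _⟩)
end

section
/- Let X be a zero-dimensional metrizable compact space, D ⊆ X, and f : D → X an injective map which is continuous with respect to the subspace topology on D. (a) If D is open in X, then either (X,G_f) admits a continuous coloring with finitely many colors, or (X,G_f) admits no countable continuous coloring. (b) If D is closed in X, then either (X,G_f) admits a continuous 3-coloring, or (X,G_f) admits no countable continuous coloring. Moreover, there exist a countable zero-dimensional Polish space X, an open subset D ⊆ X, and a fixed point free homeomorphism f from D onto an open subset of X, such that (X,G_f) admits a countable continuous coloring but no continuous coloring with finitely many colors. -/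
open TopologicalSpace

/-- The graph induced by a partial function `f` with domain `D ⊆ X`:
`G_f = s(Graph(f)) \ Δ(X)`. -/
def PartialGraph {X : Type*} (D : Set X) (f : ↥D → X) : Set (X × X) :=
  {p | p.1 ≠ p.2 ∧
    ((∃ h : p.1 ∈ D, f ⟨p.1, h⟩ = p.2) ∨ ∃ h : p.2 ∈ D, f ⟨p.2, h⟩ = p.1)}


lemma stmt7aux_finite_of_ctble {X : Type*} [TopologicalSpace X] [CompactSpace X]
    {G : Set (X × X)} (h : HasCtbleContColoring G) : ∃ n, HasContColoring G n := by
  obtain ⟨c, hc, hcol⟩ := h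
  have hfin : (Set.range c).Finite := (isCompact_range hc).finite DiscreteTopology.isDiscrete
  obtain ⟨N, hN⟩ := hfin.bddAbove
  refine ⟨N + 1, (fun k => if h : k ≤ N then (⟨k, Nat.lt_succ_of_le h⟩ : Fin (N+1)) else 0) ∘ c,
    continuous_of_discreteTopology.comp hc, ?_⟩
  intro x y hxy
  have hx : c x ≤ N := hN ⟨x, rfl⟩
  have hy : c y ≤ N := hN ⟨y, rfl⟩
  simp only [Function.comp_apply, dif_pos hx, dif_pos hy]
  intro heq
  exact hcol x y hxy (by simpa [Fin.mk.injEq] using heq)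


lemma stmt7aux_clopen_between {X : Type*} [TopologicalSpace X] (hb : ZeroDim X)
    {K U : Set X} (hK : IsCompact K) (hU : IsOpen U) (hKU : K ⊆ U) :
    ∃ V : Set X, IsClopen V ∧ K ⊆ V ∧ V ⊆ U := by
  classical
  have h : ∀ x : ↥K, ∃ V : Set X, IsClopen V ∧ (x : X) ∈ V ∧ V ⊆ U := by
    intro x
    obtain ⟨v, hv, hxv, hvU⟩ := hb.exists_subset_of_mem_open (hKU x.2) hU
    exact ⟨v, hv, hxv, hvU⟩
  choose V hV1 hV2 hV3 using h
  obtain ⟨t, ht⟩ := hK.elim_finite_subcover V (fun x => (hV1 x).2)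
    (fun x hx => Set.mem_iUnion.2 ⟨⟨x, hx⟩, hV2 ⟨x, hx⟩⟩)
  refine ⟨⋃ x ∈ t, V x, Set.Finite.isClopen_biUnion t.finite_toSet (fun x _ => hV1 x), ht, ?_⟩
  exact Set.iUnion₂_subset fun x _ => hV3 x

lemma stmt7aux_disjoint_clopens {X : Type*} [TopologicalSpace X] [T2Space X] (hb : ZeroDim X)
    {m : ℕ} (C : Fin m → Set X) (hC : ∀ i, IsCompact (C i))
    (hdisj : ∀ i j, i ≠ j → ∀ x, x ∈ C i → x ∉ C j) :
    ∃ O : Fin m → Set X, (∀ i, IsClopen (O i)) ∧ (∀ i, C i ⊆ O i) ∧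
      (∀ i j, i ≠ j → ∀ x, x ∈ O i → x ∉ O j) := by
  classical
  have h : ∀ i, ∃ V : Set X, IsClopen V ∧ C i ⊆ V ∧ V ⊆ (⋃ j ∈ Finset.univ.erase i, C j)ᶜ := by
    intro i
    refine stmt7aux_clopen_between hb (hC i) ?_ ?_
    · exact (Set.Finite.isClosed_biUnion (Finset.univ.erase i).finite_toSet
        (fun j _ => (hC j).isClosed)).isOpen_compl
    · intro x hx
      simp only [Set.mem_compl_iff, Set.mem_iUnion]
      rintro ⟨j, hj, hxj⟩
      exact hdisj i j (fun h => (Finset.mem_erase.1 hj).1 h.symm) x hx hxj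
  choose O' hO'1 hO'2 hO'3 using h
  -- disjointify
  refine ⟨fun i => O' i \ ⋃ l ∈ Finset.univ.filter (· < i), O' l, ?_, ?_, ?_⟩
  · intro i
    exact (hO'1 i).diff (Set.Finite.isClopen_biUnion (Finset.univ.filter (· < i)).finite_toSet
      (fun l _ => hO'1 l))
  · intro i x hx
    refine ⟨hO'2 i hx, ?_⟩
    simp only [Set.mem_iUnion, not_exists]
    intro l hl hxl
    have hli : l ≠ i := by
      intro h; subst h; simp at hl
    exact (hO'3 l hxl) (Set.mem_iUnion₂.2 ⟨i, Finset.mem_erase.2 ⟨fun h => hli h.symm, Finset.mem_univ i⟩, hx⟩)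
  · intro i j hij x hxi hxj
    rcases lt_or_gt_of_ne hij with h | h
    · exact hxj.2 (Set.mem_iUnion₂.2 ⟨i, by simp [h], hxi.1⟩)
    · exact hxi.2 (Set.mem_iUnion₂.2 ⟨j, by simp [h], hxj.1⟩)

/-- extension step for the recursion -/
lemma stmt7aux_step {X : Type*} [TopologicalSpace X] [T2Space X] [CompactSpace X]
    (hb : ZeroDim X) {m : ℕ} (hm : 2 ≤ m)
    {D' : Set X} (hD' : IsClosed D') (f' : ↥D' → X) (hf' : Continuous f')
    (u : X → Fin m) (hu : Continuous u) (hinv : ∀ z : ↥D', u (f' z) ≠ u ↑z) :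
    ∃ w : X → Fin m, Continuous w ∧ (∀ z : ↥D', w ↑z = u (f' z)) ∧ ∀ x, w x ≠ u x := by
  classical
  haveI : NeZero m := ⟨by omega⟩
  haveI : CompactSpace ↥D' := isCompact_iff_compactSpace.1 hD'.isCompact
  -- the compact sets to separate
  set C : Fin m → Set X := fun i => Subtype.val '' {z : ↥D' | u (f' z) = i} with hCdef
  have hCcompact : ∀ i, IsCompact (C i) := by
    intro i
    refine (IsClosed.isCompact ?_).image continuous_subtype_val
    exact (isClosed_discrete {i}).preimage (hu.comp hf')
  have hCdisj : ∀ i j, i ≠ j → ∀ x, x ∈ C i → x ∉ C j := by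
    rintro i j hij x ⟨z, hz, rfl⟩ ⟨z', hz', hzz'⟩
    have : z' = z := Subtype.ext hzz'
    subst this
    exact hij (hz ▸ hz')
  obtain ⟨O, hO1, hO2, hO3⟩ := stmt7aux_disjoint_clopens hb C hCcompact hCdisj
  set S : Fin m → Set X := fun i => O i \ u ⁻¹' {i} with hSdef
  have hSclopen : ∀ i, IsClopen (S i) := fun i =>
    (hO1 i).diff ⟨(isClosed_discrete _).preimage hu, (isOpen_discrete _).preimage hu⟩
  have hCS : ∀ i, C i ⊆ S i := by
    rintro i x ⟨z, hz, rfl⟩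
    refine ⟨hO2 i ⟨z, hz, rfl⟩, ?_⟩
    simp only [Set.mem_preimage, Set.mem_singleton_iff]
    intro h
    exact hinv z (hz.trans h.symm)
  have hSdisj : ∀ i j, i ≠ j → ∀ x, x ∈ S i → x ∉ S j :=
    fun i j hij x hxi hxj => hO3 i j hij x hxi.1 hxj.1
  set w : X → Fin m := fun x => if h : ∃ i, x ∈ S i then h.choose else u x + 1 with hwdef
  have hwS : ∀ i x, x ∈ S i → w x = i := by
    intro i x hx
    have h : ∃ i, x ∈ S i := ⟨i, hx⟩
    have := h.choose_spec
    simp only [hwdef, dif_pos h]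
    by_contra hne
    exact hSdisj _ i hne x this hx
  have hwout : ∀ x, (¬∃ i, x ∈ S i) → w x = u x + 1 := by
    intro x h; simp only [hwdef, dif_neg h]
  have hone : (1 : Fin m) ≠ 0 := by
    intro h
    have := congrArg Fin.val h
    rw [Fin.val_one'] at this
    simp [Nat.mod_eq_of_lt (by omega : 1 < m)] at this
  refine ⟨w, ?_, ?_, ?_⟩
  · refine IsLocallyConstant.continuous ?_
    rw [IsLocallyConstant.iff_exists_open]
    intro x
    by_cases h : ∃ i, x ∈ S i
    · obtain ⟨i, hi⟩ := h
      exact ⟨S i, (hSclopen i).2, hi, fun x' hx' => (hwS i x' hx').trans (hwS i x hi).symm⟩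
    · refine ⟨(⋃ i, S i)ᶜ ∩ u ⁻¹' {u x}, ?_, ?_, ?_⟩
      · exact ((isClopen_iUnion_of_finite hSclopen).compl.2).inter
          ((isOpen_discrete _).preimage hu)
      · exact ⟨by simpa using (fun i => fun hi => h ⟨i, hi⟩), rfl⟩
      · rintro x' ⟨hx'1, hx'2⟩
        have h' : ¬∃ i, x' ∈ S i := by
          simpa using fun i hi => (Set.mem_compl_iff _ _).1 hx'1 (Set.mem_iUnion.2 ⟨i, hi⟩)
        rw [hwout x' h', hwout x h]
        simp only [Set.mem_preimage, Set.mem_singleton_iff] at hx'2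
        rw [hx'2]
  · intro z
    exact hwS (u (f' z)) ↑z (hCS _ ⟨z, rfl, rfl⟩)
  · intro x
    by_cases h : ∃ i, x ∈ S i
    · obtain ⟨i, hi⟩ := h
      rw [hwS i x hi]
      intro heq
      exact hi.2 (by simp [heq])
    · rw [hwout x h]
      intro heq
      exact hone (by simpa using heq)

/-- A finite clopen "partition-index" map moving `f'` off itself. -/
lemma stmt7aux_partition {X : Type*} [TopologicalSpace X] [T2Space X] [CompactSpace X]
    (hb : ZeroDim X) {D' : Set X} (hD' : IsClosed D') (f' : ↥D' → X) (hf' : Continuous f')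
    (hfpf : ∀ z : ↥D', f' z ≠ ↑z) :
    ∃ (m : ℕ) (j : X → Fin m), Continuous j ∧ ∀ z : ↥D', j (f' z) ≠ j ↑z := by
  classical
  -- local clopen sets
  have hW : ∀ x : X, ∃ W : Set X, IsClopen W ∧ x ∈ W ∧ ∀ z : ↥D', ↑z ∈ W → f' z ∉ W := by
    intro x
    by_cases hx : x ∈ D'
    · set z₀ : ↥D' := ⟨x, hx⟩ with hz₀
      have hne : f' z₀ ≠ x := hfpf z₀
      obtain ⟨U', hU'clopen, hU'mem, hU'sub⟩ :=
        hb.exists_subset_of_mem_open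
          (show f' z₀ ∈ ({x}ᶜ : Set X) from fun h => hne h)
          (isClosed_singleton.isOpen_compl)
      -- the preimage of U' under f' is open in D'
      obtain ⟨O₂, hO₂open, hO₂⟩ := isOpen_induced_iff.1 (hU'clopen.2.preimage hf')
      have hxO₂ : x ∈ O₂ := by
        have : z₀ ∈ f' ⁻¹' U' := hU'mem
        rw [← hO₂] at this
        exact this
      obtain ⟨W, hWclopen, hWmem, hWsub⟩ :=
        hb.exists_subset_of_mem_open
          (show x ∈ O₂ ∩ U'ᶜ from ⟨hxO₂, fun hxU' => hU'sub hxU' rfl⟩)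
          (hO₂open.inter hU'clopen.1.isOpen_compl)
      refine ⟨W, hWclopen, hWmem, ?_⟩
      intro z hz hfz
      have h1 : z ∈ f' ⁻¹' U' := by
        rw [← hO₂]; exact (hWsub hz).1
      exact (hWsub hfz).2 h1
    · obtain ⟨W, hWclopen, hWmem, hWsub⟩ :=
        hb.exists_subset_of_mem_open (by exact hx : x ∈ (D' : Set X)ᶜ) hD'.isOpen_compl
      exact ⟨W, hWclopen, hWmem, fun z hz _ => (hWsub hz) z.2⟩
  choose W hW1 hW2 hW3 using hW
  obtain ⟨t, ht⟩ := isCompact_univ.elim_finite_subcover W (fun x => (hW1 x).2)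
    (fun x _ => Set.mem_iUnion.2 ⟨x, hW2 x⟩)
  set m := t.card with hm
  set e := t.equivFin with he
  set V : Fin m → Set X := fun i => W ↑(e.symm i) with hV
  have hVclopen : ∀ i, IsClopen (V i) := fun i => hW1 _
  have hVcover : ∀ x : X, ∃ i, x ∈ V i := by
    intro x
    obtain ⟨y, hy⟩ := Set.mem_iUnion.1 (ht (Set.mem_univ x))
    obtain ⟨hyt, hxy⟩ := Set.mem_iUnion.1 hy
    exact ⟨e ⟨y, hyt⟩, by simpa [hV] using hxy⟩
  have hVprop : ∀ i, ∀ z : ↥D', ↑z ∈ V i → f' z ∉ V i := fun i => hW3 _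
  have hne : ∀ x : X, (Finset.univ.filter (fun i => x ∈ V i)).Nonempty := by
    intro x
    obtain ⟨i, hi⟩ := hVcover x
    exact ⟨i, by simp [hi]⟩
  set j : X → Fin m := fun x => (Finset.univ.filter (fun i => x ∈ V i)).min' (hne x) with hj
  have hjmem : ∀ x, x ∈ V (j x) := by
    intro x
    have := Finset.min'_mem _ (hne x)
    simpa using this
  have hjmin : ∀ x i, x ∈ V i → j x ≤ i := by
    intro x i hi
    exact Finset.min'_le _ _ (by simp [hi])
  refine ⟨m, j, ?_, ?_⟩
  · refine IsLocallyConstant.continuous ?_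
    rw [IsLocallyConstant.iff_exists_open]
    intro x
    refine ⟨V (j x) ∩ ⋂ l ∈ Finset.univ.filter (· < j x), (V l)ᶜ, ?_, ?_, ?_⟩
    · exact ((hVclopen _).2).inter (isOpen_biInter_finset
        (fun l _ => (hVclopen l).compl.2))
    · refine ⟨hjmem x, ?_⟩
      simp only [Set.mem_iInter, Set.mem_compl_iff]
      intro l hl hxl
      exact absurd (hjmin x l hxl) (by simpa using hl)
    · rintro x' ⟨hx'1, hx'2⟩
      simp only [Set.mem_iInter, Set.mem_compl_iff, Finset.mem_filter, Finset.mem_univ,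
        true_and] at hx'2
      refine le_antisymm (hjmin x' _ hx'1) ?_
      by_contra hlt
      exact hx'2 (j x') (by omega) (hjmem x')
  · intro z heq
    exact hVprop (j ↑z) z (hjmem ↑z) (heq ▸ hjmem (f' z))

set_option maxHeartbeats 1000000 in
lemma stmt7aux_b {X : Type*} [TopologicalSpace X] [T2Space X] [CompactSpace X]
    (hb : ZeroDim X) {D : Set X} (hD : IsClosed D) (f : ↥D → X) (hf : Continuous f)
    (hcc : HasCtbleContColoring (PartialGraph D f)) :
    HasContColoring (PartialGraph D f) 3 := by
  classical
  obtain ⟨c, hc, hcol⟩ := hcc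
  haveI : CompactSpace ↥D := isCompact_iff_compactSpace.1 hD.isCompact
  -- the set of fixed points
  set Fix : Set X := {x | ∃ h : x ∈ D, f ⟨x, h⟩ = x} with hFixdef
  have hFixcompact : IsCompact Fix := by
    have h1 : IsClosed {z : ↥D | f z = ↑z} := isClosed_eq hf continuous_subtype_val
    have h2 : Fix = Subtype.val '' {z : ↥D | f z = ↑z} := by
      ext x
      constructor
      · rintro ⟨hx, hfx⟩; exact ⟨⟨x, hx⟩, hfx, rfl⟩
      · rintro ⟨z, hz, rfl⟩; exact ⟨z.2, by simpa using hz⟩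
    rw [h2]
    exact (h1.isCompact).image continuous_subtype_val
  -- a clopen neighbourhood of Fix on which f is the identity
  have hVex : ∃ V : Set X, IsClopen V ∧ Fix ⊆ V ∧
      ∀ x (hx : x ∈ D), x ∈ V → f ⟨x, hx⟩ = x := by
    have hWp : ∀ p : ↥Fix, ∃ W : Set X, IsClopen W ∧ ↑p ∈ W ∧
        ∀ x (hx : x ∈ D), x ∈ W → f ⟨x, hx⟩ = x := by
      rintro ⟨p, hpD, hfp⟩
      have hOp : IsOpen {z : ↥D | c (f z) = c p} := by
        have : {z : ↥D | c (f z) = c p} = (c ∘ f) ⁻¹' {c p} := rfl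
        rw [this]
        exact (isOpen_discrete _).preimage (hc.comp hf)
      obtain ⟨O₂, hO₂open, hO₂⟩ := isOpen_induced_iff.1 hOp
      have hpO₂ : p ∈ O₂ := by
        have hmem : (⟨p, hpD⟩ : ↥D) ∈ {z : ↥D | c (f z) = c p} := by
          simp only [Set.mem_setOf_eq, hfp]
        rw [← hO₂] at hmem
        exact hmem
      obtain ⟨W, hW1, hW2, hW3⟩ := hb.exists_subset_of_mem_open
        (show p ∈ O₂ ∩ c ⁻¹' {c p} from ⟨hpO₂, rfl⟩)
        (hO₂open.inter ((isOpen_discrete _).preimage hc))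
      refine ⟨W, hW1, hW2, ?_⟩
      intro x hx hxW
      by_contra hne
      have hedge : (x, f ⟨x, hx⟩) ∈ PartialGraph D f :=
        ⟨fun h => hne h.symm, Or.inl ⟨hx, rfl⟩⟩
      have h4 := hcol _ _ hedge
      have h5 : c x = c p := (hW3 hxW).2
      have h6 : c (f ⟨x, hx⟩) = c p := by
        have : (⟨x, hx⟩ : ↥D) ∈ Subtype.val ⁻¹' O₂ := (hW3 hxW).1
        rw [hO₂] at this
        exact this
      exact h4 (h5.trans h6.symm)
    choose Wp hWp1 hWp2 hWp3 using hWp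
    obtain ⟨t, ht⟩ := hFixcompact.elim_finite_subcover Wp (fun p => (hWp1 p).2)
      (fun x hx => Set.mem_iUnion.2 ⟨⟨x, hx⟩, hWp2 _⟩)
    refine ⟨⋃ p ∈ t, Wp p, isClopen_biUnion_finset (fun p _ => hWp1 p), ht, ?_⟩
    intro x hx hxV
    obtain ⟨p, hp⟩ := Set.mem_iUnion.1 hxV
    obtain ⟨hpt, hxp⟩ := Set.mem_iUnion.1 hp
    exact hWp3 p x hx hxp
  obtain ⟨V, hV1, hV2, hV3⟩ := hVex
  -- the fixed-point free part
  set D' : Set X := D ∩ Vᶜ with hD'def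
  have hD'closed : IsClosed D' := hD.inter hV1.2.isClosed_compl
  set f' : ↥D' → X := fun z => f ⟨↑z, z.2.1⟩ with hf'def
  have hf'cont : Continuous f' := hf.comp (continuous_subtype_val.subtype_mk _)
  have hfpf : ∀ z : ↥D', f' z ≠ ↑z := by
    rintro ⟨z, hzD, hzV⟩ h
    exact hzV (hV2 ⟨hzD, h⟩)
  have hedgeD' : ∀ x y, (x, y) ∈ PartialGraph D f →
      (∃ h : x ∈ D', f' ⟨x, h⟩ = y) ∨ (∃ h : y ∈ D', f' ⟨y, h⟩ = x) := by
    rintro x y ⟨hne, hor⟩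
    rcases hor with ⟨hx, hfx⟩ | ⟨hy, hfy⟩
    · left
      have hxV : x ∉ V := fun hxV => hne ((hV3 x hx hxV).symm.trans hfx)
      exact ⟨⟨hx, hxV⟩, hfx⟩
    · right
      have hyV : y ∉ V := fun hyV => (fun h => hne h.symm) ((hV3 y hy hyV).symm.trans hfy)
      exact ⟨⟨hy, hyV⟩, hfy⟩
  by_cases hD'ne : D'.Nonempty
  swap
  · refine ⟨fun _ => 0, continuous_const, ?_⟩
    intro x y hxy
    rcases hedgeD' x y hxy with ⟨h, _⟩ | ⟨h, _⟩
    · exact absurd ⟨x, h⟩ hD'ne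
    · exact absurd ⟨y, h⟩ hD'ne
  obtain ⟨m, j, hjcont, hjprop⟩ := stmt7aux_partition hb hD'closed f' hf'cont hfpf
  have hm2 : 2 ≤ m := by
    obtain ⟨x0, hx0⟩ := hD'ne
    have hne := hjprop ⟨x0, hx0⟩
    rcases m with _ | _ | m
    · exact (j x0).elim0
    · refine absurd (Fin.ext ?_) hne
      have h1 := (j (f' ⟨x0, hx0⟩)).isLt
      have h2 := (j (↑(⟨x0, hx0⟩ : ↥D') : X)).isLt
      omega
    · omega
  -- the recursion
  set T := {u : X → Fin m // Continuous u ∧ ∀ z : ↥D', u (f' z) ≠ u ↑z} with hT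
  have step : ∀ u : T, ∃ w : T, (∀ z : ↥D', w.1 ↑z = u.1 (f' z)) ∧ ∀ x, w.1 x ≠ u.1 x := by
    rintro ⟨u, hu, hinv⟩
    obtain ⟨w, hw1, hw2, hw3⟩ := stmt7aux_step hb hm2 hD'closed f' hf'cont u hu hinv
    exact ⟨⟨w, hw1, fun z heq => hw3 (f' z) (heq.trans (hw2 z))⟩, hw2, hw3⟩
  choose stepf hstep1 hstep2 using step
  set g : ℕ → T := fun n => stepf^[n] ⟨j, hjcont, hjprop⟩ with hg
  have hgsucc : ∀ n, g (n + 1) = stepf (g n) := fun n =>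
    Function.iterate_succ_apply' stepf n _
  set gg : ℕ → X → Fin m := fun n => (g n).1 with hgg
  have hg1 : ∀ n (z : ↥D'), gg (n + 1) ↑z = gg n (f' z) := by
    intro n z
    show (g (n+1)).1 ↑z = (g n).1 (f' z)
    rw [hgsucc n]
    exact hstep1 (g n) z
  have hg2 : ∀ n x, gg (n + 1) x ≠ gg n x := by
    intro n x
    show (g (n+1)).1 x ≠ (g n).1 x
    rw [hgsucc n]
    exact hstep2 (g n) x
  set bb : X → ℕ → Bool := fun x n => decide (gg n x < gg (n + 1) x) with hbb
  have hgne : ∀ x n, gg n x ≠ gg (n + 1) x := fun x n => (hg2 n x).symm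
  have hex : ∀ x, ∃ n, bb x n ≠ bb x (n + 1) := by
    intro x
    by_contra h
    push_neg at h
    have hconst : ∀ n, bb x n = bb x 0 := by
      intro n
      induction n with
      | zero => rfl
      | succ k ih => rw [← h k, ih]
    cases hb0 : bb x 0 with
    | true =>
      have hmono : StrictMono (fun n => gg n x) := strictMono_nat_of_lt_succ (fun n =>
        of_decide_eq_true ((hconst n).trans hb0))
      obtain ⟨a, a', haa, heq⟩ := Finite.exists_ne_map_eq_of_infinite (fun n => gg n x)
      exact haa (hmono.injective heq)
    | false =>
      have hmono : StrictAnti (fun n => gg n x) := strictAnti_nat_of_succ_lt (fun n => by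
        have h1 : ¬ (gg n x < gg (n + 1) x) :=
          of_decide_eq_false ((hconst n).trans hb0)
        exact lt_of_le_of_ne (le_of_not_gt h1) (hgne x n).symm)
      obtain ⟨a, a', haa, heq⟩ := Finite.exists_ne_map_eq_of_infinite (fun n => gg n x)
      exact haa (hmono.injective heq)
  obtain ⟨N, hNspec, hNmin⟩ : ∃ N : X → ℕ, (∀ x, bb x (N x) ≠ bb x (N x + 1)) ∧
      (∀ x n, n < N x → bb x n = bb x (n + 1)) :=
    ⟨fun x => Nat.find (hex x), fun x => Nat.find_spec (hex x), fun x n hn => by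
      have := Nat.find_min (hex x) hn
      simpa using this⟩
  set d : X → Fin 3 := fun x => if N x % 2 = 1 then 2 else (if bb x 0 then 1 else 0) with hd
  have hNunique : ∀ x n, (∀ k, k < n → bb x k = bb x (k + 1)) →
      bb x n ≠ bb x (n + 1) → N x = n := by
    intro x n h1 h2
    rcases lt_trichotomy (N x) n with h | h | h
    · exact absurd (h1 _ h) (hNspec x)
    · exact h
    · exact absurd (hNmin x n h) h2
  have hdcont : Continuous d := by
    refine IsLocallyConstant.continuous ((IsLocallyConstant.iff_exists_open d).2 ?_)
    intro x
    refine ⟨⋂ n ∈ Finset.range (N x + 3), (gg n) ⁻¹' {gg n x}, ?_, ?_, ?_⟩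
    · exact isOpen_biInter_finset (fun n _ => (isOpen_discrete _).preimage (g n).2.1)
    · simp
    · intro x' hx'
      simp only [Set.mem_iInter, Set.mem_preimage, Set.mem_singleton_iff,
        Finset.mem_range] at hx'
      have hggx : ∀ n, n ≤ N x + 2 → gg n x' = gg n x := fun n hn => hx' n (by omega)
      have hbbx : ∀ n, n ≤ N x + 1 → bb x' n = bb x n := by
        intro n hn
        show decide (gg n x' < gg (n+1) x') = decide (gg n x < gg (n+1) x)
        rw [hggx n (by omega), hggx (n + 1) (by omega)]
      have hNx' : N x' = N x := by
        refine hNunique x' (N x) (fun k hk => ?_) ?_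
        · rw [hbbx k (by omega), hbbx (k + 1) (by omega)]
          exact hNmin x k hk
        · rw [hbbx _ (by omega), hbbx _ (by omega)]
          exact hNspec x
      show (if N x' % 2 = 1 then 2 else (if bb x' 0 then 1 else 0) : Fin 3) = _
      rw [hNx', hbbx 0 (by omega)]
  have hkey : ∀ z : ↥D', d ↑z ≠ d (f' z) := by
    intro z
    have hshift : ∀ n, bb (f' z) n = bb ↑z (n + 1) := by
      intro n
      show decide (gg n (f' z) < gg (n+1) (f' z)) = decide (gg (n+1) ↑z < gg (n+2) ↑z)
      rw [← hg1 n z, ← hg1 (n + 1) z]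
    cases hNx : N (↑z : X) with
    | zero =>
      have h0 : bb ↑z 0 ≠ bb ↑z 1 := by
        have := hNspec (↑z : X); rw [hNx] at this; exact this
      have hdx : d ↑z = if bb ↑z 0 then 1 else 0 := by
        simp only [hd]; rw [hNx]; norm_num
      by_cases hNy : N (f' z) % 2 = 1
      · have hdy : d (f' z) = 2 := by simp only [hd]; rw [if_pos hNy]
        rw [hdx, hdy]
        cases bb ↑z 0 <;> decide
      · have hdy : d (f' z) = if bb (f' z) 0 then 1 else 0 := by
          simp only [hd]; rw [if_neg hNy]
        rw [hdx, hdy, hshift 0]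
        cases hb0 : bb (↑z : X) 0 <;> cases hb1 : bb (↑z : X) 1 <;>
          first
            | exact absurd (hb0.trans hb1.symm) h0
            | decide
    | succ n =>
      have hNy : N (f' z) = n := by
        refine hNunique (f' z) n (fun k hk => ?_) ?_
        · rw [hshift k, hshift (k + 1)]
          exact hNmin _ (k + 1) (by omega)
        · rw [hshift n, hshift (n + 1)]
          have := hNspec (↑z : X); rw [hNx] at this; exact this
      by_cases hpar : (n + 1) % 2 = 1
      · have hdx : d ↑z = 2 := by
          simp only [hd]; rw [hNx, if_pos hpar]
        have hdy : d (f' z) = if bb (f' z) 0 then 1 else 0 := by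
          simp only [hd]; rw [hNy, if_neg (by omega : ¬ n % 2 = 1)]
        rw [hdx, hdy]
        cases bb (f' z) 0 <;> decide
      · have hdx : d ↑z = if bb ↑z 0 then 1 else 0 := by
          simp only [hd]; rw [hNx, if_neg hpar]
        have hdy : d (f' z) = 2 := by
          simp only [hd]; rw [hNy, if_pos (by omega : n % 2 = 1)]
        rw [hdx, hdy]
        cases bb ↑z 0 <;> decide
  refine ⟨d, hdcont, ?_⟩
  intro x y hxy
  rcases hedgeD' x y hxy with ⟨h, hfx⟩ | ⟨h, hfy⟩
  · rw [← hfx]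
    exact hkey ⟨x, h⟩
  · intro heq
    exact hkey ⟨y, h⟩ (by rw [hfy]; exact heq.symm)


-- encodings
def stmt7aux_pcode (i j k : ℕ) : ℕ := Nat.pair (Nat.pair i j) k
def stmt7aux_tC (i j k : ℕ) : ℕ := 3 * stmt7aux_pcode i j k + 1
def stmt7aux_tC' (i j k : ℕ) : ℕ := 3 * stmt7aux_pcode i j k + 2
def stmt7aux_PP (i : ℕ) : ℕ → Bool := fun c => decide (c = 3 * i)
def stmt7aux_AA (i j k : ℕ) : ℕ → Bool :=
  fun c => decide (c = 3 * i ∨ c = stmt7aux_tC i j k)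
def stmt7aux_BB (i j k : ℕ) : ℕ → Bool :=
  fun c => decide (c = 3 * j ∨ c = stmt7aux_tC' i j k)
def stmt7aux_I0 (a : ℕ) : ℕ := (Nat.unpair (Nat.unpair a).1).1
def stmt7aux_J0 (a : ℕ) : ℕ := (Nat.unpair (Nat.unpair a).1).2
def stmt7aux_K0 (a : ℕ) : ℕ := (Nat.unpair a).2

lemma stmt7aux_pcode_decode (a : ℕ) :
    stmt7aux_pcode (stmt7aux_I0 a) (stmt7aux_J0 a) (stmt7aux_K0 a) = a := by
  simp [stmt7aux_pcode, stmt7aux_I0, stmt7aux_J0, stmt7aux_K0]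

lemma stmt7aux_I0_pcode (i j k : ℕ) : stmt7aux_I0 (stmt7aux_pcode i j k) = i := by
  simp [stmt7aux_pcode, stmt7aux_I0]
lemma stmt7aux_J0_pcode (i j k : ℕ) : stmt7aux_J0 (stmt7aux_pcode i j k) = j := by
  simp [stmt7aux_pcode, stmt7aux_J0]
lemma stmt7aux_pcode_inj {i j k i' j' k' : ℕ}
    (h : stmt7aux_pcode i j k = stmt7aux_pcode i' j' k') : i = i' ∧ j = j' ∧ k = k' := by
  simp only [stmt7aux_pcode, Nat.pair_eq_pair] at h
  exact ⟨h.1.1, h.1.2, h.2⟩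

lemma stmt7aux_pcode_ge (i j k : ℕ) : k ≤ stmt7aux_pcode i j k := Nat.right_le_pair _ _

def stmt7aux_Zset : Set (ℕ → Bool) :=
  {z | (∃ i, z = stmt7aux_PP i) ∨ (∃ i j k, i < j ∧ z = stmt7aux_AA i j k) ∨
    (∃ i j k, i < j ∧ z = stmt7aux_BB i j k)}

def stmt7aux_Kset : Set (ℕ → Bool) :=
  {z | (∀ a b : ℕ, z (3*a) = true → z (3*b) = true → a = b) ∧
    (∀ a b : ℕ, z (3*a+1) = true → z (3*b+1) = true → a = b) ∧
    (∀ a b : ℕ, z (3*a+2) = true → z (3*b+2) = true → a = b) ∧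
    (∀ a b : ℕ, ¬(z (3*a+1) = true ∧ z (3*b+2) = true)) ∧
    (∀ a : ℕ, z (3*a+1) = true → (stmt7aux_I0 a < stmt7aux_J0 a ∧ z (3 * stmt7aux_I0 a) = true)) ∧
    (∀ a : ℕ, z (3*a+2) = true → (stmt7aux_I0 a < stmt7aux_J0 a ∧ z (3 * stmt7aux_J0 a) = true))}

lemma stmt7aux_coord_isClosed (c : ℕ) (v : Bool) : IsClosed {z : ℕ → Bool | z c = v} := by
  have h := (isClosed_discrete ({v} : Set Bool)).preimage
    (continuous_apply (A := fun _ : ℕ => Bool) c)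
  exact h

lemma stmt7aux_coord_isOpen (c : ℕ) (v : Bool) : IsOpen {z : ℕ → Bool | z c = v} := by
  have h := (isOpen_discrete ({v} : Set Bool)).preimage
    (continuous_apply (A := fun _ : ℕ => Bool) c)
  exact h

lemma stmt7aux_K_closed : IsClosed stmt7aux_Kset := by
  have himp : ∀ (c : ℕ) (S : Set (ℕ → Bool)), IsClosed S →
      IsClosed {z : ℕ → Bool | z c = true → z ∈ S} := by
    intro c S hS
    have : {z : ℕ → Bool | z c = true → z ∈ S} = {z : ℕ → Bool | z c = false} ∪ S := by
      ext z
      constructor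
      · intro hz
        by_cases h : z c = true
        · exact Or.inr (hz h)
        · exact Or.inl (by simpa using h)
      · rintro (h | h) ht
        · exact absurd (ht.symm.trans h) (by simp)
        · exact h
    rw [this]
    exact (stmt7aux_coord_isClosed c false).union hS
  have hconst : ∀ (p : Prop), IsClosed {z : ℕ → Bool | p} := by
    intro p
    by_cases h : p
    · simp only [h, Set.setOf_true]; exact isClosed_univ
    · simp only [h, Set.setOf_false]; exact isClosed_empty
  have hKdef : stmt7aux_Kset =
      (⋂ a, ⋂ b, {z : ℕ → Bool | z (3*a) = true → z ∈ {z : ℕ → Bool | z (3*b) = true → a = b}}) ∩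
      ((⋂ a, ⋂ b, {z : ℕ → Bool | z (3*a+1) = true → z ∈ {z : ℕ → Bool | z (3*b+1) = true → a = b}}) ∩
      ((⋂ a, ⋂ b, {z : ℕ → Bool | z (3*a+2) = true → z ∈ {z : ℕ → Bool | z (3*b+2) = true → a = b}}) ∩
      ((⋂ a, ⋂ b, {z : ℕ → Bool | z (3*a+1) = true → z ∈ {z : ℕ → Bool | z (3*b+2) = false}}) ∩
      ((⋂ a, {z : ℕ → Bool | z (3*a+1) = true →
          z ∈ {z : ℕ → Bool | stmt7aux_I0 a < stmt7aux_J0 a} ∩ {z : ℕ → Bool | z (3 * stmt7aux_I0 a) = true}}) ∩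
      (⋂ a, {z : ℕ → Bool | z (3*a+2) = true →
          z ∈ {z : ℕ → Bool | stmt7aux_I0 a < stmt7aux_J0 a} ∩ {z : ℕ → Bool | z (3 * stmt7aux_J0 a) = true}}))))) := by
    ext z
    simp only [stmt7aux_Kset, Set.mem_inter_iff, Set.mem_iInter, Set.mem_setOf_eq,
      Set.mem_union]
    constructor
    · rintro ⟨h1, h2, h3, h4, h5, h6⟩
      refine ⟨h1, h2, h3, fun a b ha => ?_, fun a ha => ⟨(h5 a ha).1, (h5 a ha).2⟩,
        fun a ha => ⟨(h6 a ha).1, (h6 a ha).2⟩⟩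
      by_contra hb
      simp only [Bool.not_eq_false] at hb
      exact h4 a b ⟨ha, hb⟩
    · rintro ⟨h1, h2, h3, h4, h5, h6⟩
      refine ⟨h1, h2, h3, fun a b ⟨ha, hb⟩ => ?_, fun a ha => ⟨(h5 a ha).1, (h5 a ha).2⟩,
        fun a ha => ⟨(h6 a ha).1, (h6 a ha).2⟩⟩
      rw [h4 a b ha] at hb
      simp at hb
  rw [hKdef]
  refine IsClosed.inter ?_ (IsClosed.inter ?_ (IsClosed.inter ?_ (IsClosed.inter ?_
    (IsClosed.inter ?_ ?_))))
  · exact isClosed_iInter fun a => isClosed_iInter fun b => himp _ _ (himp _ _ (hconst _))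
  · exact isClosed_iInter fun a => isClosed_iInter fun b => himp _ _ (himp _ _ (hconst _))
  · exact isClosed_iInter fun a => isClosed_iInter fun b => himp _ _ (himp _ _ (hconst _))
  · exact isClosed_iInter fun a => isClosed_iInter fun b =>
      himp _ _ (stmt7aux_coord_isClosed _ false)
  · exact isClosed_iInter fun a => himp _ _ ((hconst _).inter (stmt7aux_coord_isClosed _ true))
  · exact isClosed_iInter fun a => himp _ _ ((hconst _).inter (stmt7aux_coord_isClosed _ true))

lemma stmt7aux_PP_mem_K (i : ℕ) : stmt7aux_PP i ∈ stmt7aux_Kset := by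
  refine ⟨?_, ?_, ?_, ?_, ?_, ?_⟩ <;>
    simp only [stmt7aux_PP, decide_eq_true_eq] <;> intros <;> omega

lemma stmt7aux_AA_mem_K {i j k : ℕ} (hij : i < j) : stmt7aux_AA i j k ∈ stmt7aux_Kset := by
  refine ⟨?_, ?_, ?_, ?_, ?_, ?_⟩ <;>
    simp only [stmt7aux_AA, decide_eq_true_eq] <;> simp only [stmt7aux_tC]
  · intros a b ha hb; omega
  · intros a b ha hb; omega
  · intros a b ha hb; omega
  · intros a b h; omega
  · intro a ha
    have haeq : a = stmt7aux_pcode i j k := by omega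
    subst haeq
    rw [stmt7aux_I0_pcode, stmt7aux_J0_pcode]
    exact ⟨hij, Or.inl rfl⟩
  · intro a ha; omega

lemma stmt7aux_BB_mem_K {i j k : ℕ} (hij : i < j) : stmt7aux_BB i j k ∈ stmt7aux_Kset := by
  refine ⟨?_, ?_, ?_, ?_, ?_, ?_⟩ <;>
    simp only [stmt7aux_BB, decide_eq_true_eq] <;> simp only [stmt7aux_tC']
  · intros a b ha hb; omega
  · intros a b ha hb; omega
  · intros a b ha hb; omega
  · intros a b h; omega
  · intro a ha; omega
  · intro a ha
    have haeq : a = stmt7aux_pcode i j k := by omega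
    subst haeq
    rw [stmt7aux_I0_pcode, stmt7aux_J0_pcode]
    exact ⟨hij, Or.inl rfl⟩

lemma stmt7aux_zero_mem_K : (fun _ => false : ℕ → Bool) ∈ stmt7aux_Kset := by
  refine ⟨?_, ?_, ?_, ?_, ?_, ?_⟩ <;> simp

lemma stmt7aux_K_eq : stmt7aux_Kset = stmt7aux_Zset ∪ {fun _ => false} := by
  ext z
  constructor
  · intro hz
    obtain ⟨C1, C2, C3, C4, C5, C6⟩ := hz
    by_cases hz0 : z = fun _ => false
    · exact Or.inr hz0
    have hex : ∃ c, z c = true := by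
      by_contra h
      push_neg at h
      exact hz0 (funext fun c => by simpa using h c)
    by_cases hA : ∃ a, z (3*a+1) = true
    · obtain ⟨a, ha⟩ := hA
      obtain ⟨hij, hsi⟩ := C5 a ha
      refine Or.inl (Or.inr (Or.inl ⟨stmt7aux_I0 a, stmt7aux_J0 a, stmt7aux_K0 a, hij, ?_⟩))
      funext c
      simp only [stmt7aux_AA, stmt7aux_tC, stmt7aux_pcode_decode]
      by_cases h : c = 3 * stmt7aux_I0 a ∨ c = 3 * a + 1
      · rcases h with h | h <;> subst h <;> simp [hsi, ha]
      · rw [decide_eq_false h]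
        by_contra hzc
        simp only [Bool.not_eq_false] at hzc
        obtain ⟨q, hq⟩ : ∃ q, c = 3*q ∨ c = 3*q+1 ∨ c = 3*q+2 := ⟨c / 3, by omega⟩
        rcases hq with hq | hq | hq <;> subst hq
        · exact h (Or.inl (by rw [C1 q (stmt7aux_I0 a) hzc hsi]))
        · exact h (Or.inr (by rw [C2 q a hzc ha]))
        · exact C4 a q ⟨ha, hzc⟩
    by_cases hB : ∃ a, z (3*a+2) = true
    · obtain ⟨a, ha⟩ := hB
      obtain ⟨hij, hsj⟩ := C6 a ha
      refine Or.inl (Or.inr (Or.inr ⟨stmt7aux_I0 a, stmt7aux_J0 a, stmt7aux_K0 a, hij, ?_⟩))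
      funext c
      simp only [stmt7aux_BB, stmt7aux_tC', stmt7aux_pcode_decode]
      by_cases h : c = 3 * stmt7aux_J0 a ∨ c = 3 * a + 2
      · rcases h with h | h <;> subst h <;> simp [hsj, ha]
      · rw [decide_eq_false h]
        by_contra hzc
        simp only [Bool.not_eq_false] at hzc
        obtain ⟨q, hq⟩ : ∃ q, c = 3*q ∨ c = 3*q+1 ∨ c = 3*q+2 := ⟨c / 3, by omega⟩
        rcases hq with hq | hq | hq <;> subst hq
        · exact h (Or.inl (by rw [C1 q (stmt7aux_J0 a) hzc hsj]))
        · exact hA ⟨q, hzc⟩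
        · exact h (Or.inr (by rw [C3 q a hzc ha]))
    · -- only s-coordinates
      obtain ⟨c, hc⟩ := hex
      obtain ⟨q, hq⟩ : ∃ q, c = 3*q ∨ c = 3*q+1 ∨ c = 3*q+2 := ⟨c / 3, by omega⟩
      have hsq : z (3*q) = true := by
        rcases hq with hq | hq | hq <;> subst hq
        · exact hc
        · exact absurd ⟨q, hc⟩ hA
        · exact absurd ⟨q, hc⟩ hB
      refine Or.inl (Or.inl ⟨q, ?_⟩)
      funext c'
      simp only [stmt7aux_PP]
      by_cases h : c' = 3 * q
      · subst h; simp [hsq]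
      · rw [decide_eq_false h]
        by_contra hzc
        simp only [Bool.not_eq_false] at hzc
        obtain ⟨q', hq'⟩ : ∃ q', c' = 3*q' ∨ c' = 3*q'+1 ∨ c' = 3*q'+2 := ⟨c' / 3, by omega⟩
        rcases hq' with hq' | hq' | hq' <;> subst hq'
        · exact h (by rw [C1 q' q hzc hsq])
        · exact hA ⟨q', hzc⟩
        · exact hB ⟨q', hzc⟩
  · rintro (hz | hz)
    · rcases hz with ⟨i, rfl⟩ | ⟨i, j, k, hij, rfl⟩ | ⟨i, j, k, hij, rfl⟩
      · exact stmt7aux_PP_mem_K i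
      · exact stmt7aux_AA_mem_K hij
      · exact stmt7aux_BB_mem_K hij
    · rw [Set.mem_singleton_iff] at hz
      subst hz
      exact stmt7aux_zero_mem_K

lemma stmt7aux_Z_countable : stmt7aux_Zset.Countable := by
  have h1 : {z : ℕ → Bool | ∃ i, z = stmt7aux_PP i}.Countable := by
    have : {z : ℕ → Bool | ∃ i, z = stmt7aux_PP i} = Set.range stmt7aux_PP := by
      ext z; simp [Set.mem_range, eq_comm]
    rw [this]; exact Set.countable_range _
  have h2 : {z : ℕ → Bool | ∃ i j k, i < j ∧ z = stmt7aux_AA i j k}.Countable := by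
    refine Set.Countable.mono ?_ (Set.countable_range
      (fun p : ℕ × ℕ × ℕ => stmt7aux_AA p.1 p.2.1 p.2.2))
    rintro z ⟨i, j, k, _, rfl⟩
    exact ⟨(i, j, k), rfl⟩
  have h3 : {z : ℕ → Bool | ∃ i j k, i < j ∧ z = stmt7aux_BB i j k}.Countable := by
    refine Set.Countable.mono ?_ (Set.countable_range
      (fun p : ℕ × ℕ × ℕ => stmt7aux_BB p.1 p.2.1 p.2.2))
    rintro z ⟨i, j, k, _, rfl⟩
    exact ⟨(i, j, k), rfl⟩
  have : stmt7aux_Zset = {z : ℕ → Bool | ∃ i, z = stmt7aux_PP i} ∪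
      ({z : ℕ → Bool | ∃ i j k, i < j ∧ z = stmt7aux_AA i j k} ∪
       {z : ℕ → Bool | ∃ i j k, i < j ∧ z = stmt7aux_BB i j k}) := rfl
  rw [this]
  exact h1.union (h2.union h3)

lemma stmt7aux_AA_tC (i j k : ℕ) : stmt7aux_AA i j k (stmt7aux_tC i j k) = true := by
  simp [stmt7aux_AA]

lemma stmt7aux_BB_tC' (i j k : ℕ) : stmt7aux_BB i j k (stmt7aux_tC' i j k) = true := by
  simp [stmt7aux_BB]

lemma stmt7aux_AA_inj {i j k i' j' k' : ℕ} (h : stmt7aux_AA i j k = stmt7aux_AA i' j' k') :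
    i = i' ∧ j = j' ∧ k = k' := by
  have h1 := stmt7aux_AA_tC i j k
  rw [h] at h1
  simp only [stmt7aux_AA, decide_eq_true_eq] at h1; simp only [stmt7aux_tC] at h1
  have : stmt7aux_pcode i j k = stmt7aux_pcode i' j' k' := by omega
  exact stmt7aux_pcode_inj this

lemma stmt7aux_BB_inj {i j k i' j' k' : ℕ} (h : stmt7aux_BB i j k = stmt7aux_BB i' j' k') :
    i = i' ∧ j = j' ∧ k = k' := by
  have h1 := stmt7aux_BB_tC' i j k
  rw [h] at h1
  simp only [stmt7aux_BB, decide_eq_true_eq] at h1; simp only [stmt7aux_tC'] at h1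
  have : stmt7aux_pcode i j k = stmt7aux_pcode i' j' k' := by omega
  exact stmt7aux_pcode_inj this

lemma stmt7aux_AA_ne_BB (i j k i' j' k' : ℕ) : stmt7aux_AA i j k ≠ stmt7aux_BB i' j' k' := by
  intro h
  have h1 := stmt7aux_AA_tC i j k
  rw [h] at h1
  simp only [stmt7aux_BB, decide_eq_true_eq] at h1; simp only [stmt7aux_tC, stmt7aux_tC'] at h1
  omega

lemma stmt7aux_zero_notmem_Z : (fun _ => false : ℕ → Bool) ∉ stmt7aux_Zset := by
  rintro (⟨i, h⟩ | ⟨i, j, k, hij, h⟩ | ⟨i, j, k, hij, h⟩)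
  · have := congrFun h (3 * i); simp [stmt7aux_PP] at this
  · have := congrFun h (stmt7aux_tC i j k)
    rw [stmt7aux_AA_tC] at this; simp at this
  · have := congrFun h (stmt7aux_tC' i j k)
    rw [stmt7aux_BB_tC'] at this; simp at this

lemma stmt7aux_Z_sub_K : stmt7aux_Zset ⊆ stmt7aux_Kset := by
  rw [stmt7aux_K_eq]; exact Set.subset_union_left

lemma stmt7aux_Z_polish : PolishSpace ↥stmt7aux_Zset := by
  haveI : IsCompletelyMetrizableSpace (ℕ → Bool) := inferInstance
  haveI hK : PolishSpace ↥stmt7aux_Kset := stmt7aux_K_closed.polishSpace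
  set s₀ : Set ↥stmt7aux_Kset := {x | (x : ℕ → Bool) = fun _ => false}ᶜ with hs₀
  have hs₀open : IsOpen s₀ :=
    (isClosed_eq continuous_subtype_val continuous_const).isOpen_compl
  haveI : PolishSpace ↥s₀ := hs₀open.polishSpace
  have hmemZ : ∀ x : ↥s₀, ((x : ↥stmt7aux_Kset) : ℕ → Bool) ∈ stmt7aux_Zset := by
    rintro ⟨⟨z, hzK⟩, hz0⟩
    rw [stmt7aux_K_eq] at hzK
    rcases hzK with h | h
    · exact h
    · exact absurd h hz0
  have hmemK : ∀ z : ↥stmt7aux_Zset, (z : ℕ → Bool) ∈ stmt7aux_Kset :=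
    fun z => stmt7aux_Z_sub_K z.2
  have hne0 : ∀ z : ↥stmt7aux_Zset,
      (⟨(z : ℕ → Bool), hmemK z⟩ : ↥stmt7aux_Kset) ∈ s₀ := by
    intro z
    simp only [hs₀, Set.mem_compl_iff, Set.mem_setOf_eq]
    intro h
    exact stmt7aux_zero_notmem_Z (h ▸ z.2)
  set e : ↥s₀ ≃ ↥stmt7aux_Zset :=
    { toFun := fun x => ⟨((x : ↥stmt7aux_Kset) : ℕ → Bool), hmemZ x⟩
      invFun := fun z => ⟨⟨(z : ℕ → Bool), hmemK z⟩, hne0 z⟩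
      left_inv := fun x => Subtype.ext (Subtype.ext rfl)
      right_inv := fun z => Subtype.ext rfl } with he
  have hind : Topology.IsInducing e := by
    constructor
    show (instTopologicalSpaceSubtype : TopologicalSpace ↥s₀) = _
    rw [instTopologicalSpaceSubtype, instTopologicalSpaceSubtype,
      instTopologicalSpaceSubtype, induced_compose, induced_compose]
    rfl
  exact ((e.toHomeomorphOfIsInducing hind).symm).isClosedEmbedding.polishSpace

def stmt7aux_E : Set ↥stmt7aux_Zset :=
  {x | ∃ i j k, i < j ∧ (x : ℕ → Bool) = stmt7aux_AA i j k}

/-- A-points are determined by their t-coordinate inside Z -/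
lemma stmt7aux_A_determined {z : ℕ → Bool} (hz : z ∈ stmt7aux_Zset) {i j k : ℕ}
    (h : z (stmt7aux_tC i j k) = true) : z = stmt7aux_AA i j k := by
  rcases hz with ⟨i', rfl⟩ | ⟨i', j', k', hij', rfl⟩ | ⟨i', j', k', hij', rfl⟩
  · simp only [stmt7aux_PP, decide_eq_true_eq] at h; simp only [stmt7aux_tC] at h; omega
  · simp only [stmt7aux_AA, decide_eq_true_eq] at h; simp only [stmt7aux_tC] at h
    have : stmt7aux_pcode i' j' k' = stmt7aux_pcode i j k := by omega
    obtain ⟨rfl, rfl, rfl⟩ := stmt7aux_pcode_inj this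
    rfl
  · simp only [stmt7aux_BB, decide_eq_true_eq] at h; simp only [stmt7aux_tC, stmt7aux_tC'] at h; omega

lemma stmt7aux_B_determined {z : ℕ → Bool} (hz : z ∈ stmt7aux_Zset) {i j k : ℕ}
    (h : z (stmt7aux_tC' i j k) = true) : z = stmt7aux_BB i j k := by
  rcases hz with ⟨i', rfl⟩ | ⟨i', j', k', hij', rfl⟩ | ⟨i', j', k', hij', rfl⟩
  · simp only [stmt7aux_PP, decide_eq_true_eq] at h; simp only [stmt7aux_tC'] at h; omega
  · simp only [stmt7aux_AA, decide_eq_true_eq] at h; simp only [stmt7aux_tC, stmt7aux_tC'] at h; omega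
  · simp only [stmt7aux_BB, decide_eq_true_eq] at h; simp only [stmt7aux_tC'] at h
    have : stmt7aux_pcode i' j' k' = stmt7aux_pcode i j k := by omega
    obtain ⟨rfl, rfl, rfl⟩ := stmt7aux_pcode_inj this
    rfl

lemma stmt7aux_open_A (i j k : ℕ) :
    IsOpen {w : ↥stmt7aux_Zset | (w : ℕ → Bool) = stmt7aux_AA i j k} := by
  have heq : {w : ↥stmt7aux_Zset | (w : ℕ → Bool) = stmt7aux_AA i j k} =
      {w : ↥stmt7aux_Zset | (w : ℕ → Bool) (stmt7aux_tC i j k) = true} := by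
    ext w
    constructor
    · intro h
      simp only [Set.mem_setOf_eq] at h ⊢
      rw [h]; exact stmt7aux_AA_tC i j k
    · intro h
      exact stmt7aux_A_determined w.2 h
  rw [heq]
  exact (stmt7aux_coord_isOpen (stmt7aux_tC i j k) true).preimage continuous_subtype_val

lemma stmt7aux_open_B (i j k : ℕ) :
    IsOpen {w : ↥stmt7aux_Zset | (w : ℕ → Bool) = stmt7aux_BB i j k} := by
  have heq : {w : ↥stmt7aux_Zset | (w : ℕ → Bool) = stmt7aux_BB i j k} =
      {w : ↥stmt7aux_Zset | (w : ℕ → Bool) (stmt7aux_tC' i j k) = true} := by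
    ext w
    constructor
    · intro h
      simp only [Set.mem_setOf_eq] at h ⊢
      rw [h]; exact stmt7aux_BB_tC' i j k
    · intro h
      exact stmt7aux_B_determined w.2 h
  rw [heq]
  exact (stmt7aux_coord_isOpen (stmt7aux_tC' i j k) true).preimage continuous_subtype_val

lemma stmt7aux_E_open : IsOpen stmt7aux_E := by
  have : stmt7aux_E = ⋃ i, ⋃ j, ⋃ k, ⋃ (_ : i < j),
      {w : ↥stmt7aux_Zset | (w : ℕ → Bool) = stmt7aux_AA i j k} := by
    ext w
    simp only [stmt7aux_E, Set.mem_setOf_eq, Set.mem_iUnion]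
    constructor
    · rintro ⟨i, j, k, h1, h2⟩; exact ⟨i, j, k, h1, h2⟩
    · rintro ⟨i, j, k, h1, h2⟩; exact ⟨i, j, k, h1, h2⟩
  rw [this]
  exact isOpen_iUnion fun i => isOpen_iUnion fun j => isOpen_iUnion fun k =>
    isOpen_iUnion fun _ => stmt7aux_open_A i j k

lemma stmt7aux_gex : ∀ d : ↥stmt7aux_E, ∃ w : ↥stmt7aux_Zset,
    ∀ i j k, i < j → ((d : ↥stmt7aux_Zset) : ℕ → Bool) = stmt7aux_AA i j k →
      (w : ℕ → Bool) = stmt7aux_BB i j k := by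
  rintro ⟨⟨z, hz⟩, hE⟩
  obtain ⟨i, j, k, hij, hzA⟩ := hE
  refine ⟨⟨stmt7aux_BB i j k, Or.inr (Or.inr ⟨i, j, k, hij, rfl⟩)⟩, ?_⟩
  intro i' j' k' hij' hA'
  have heq : stmt7aux_AA i j k = stmt7aux_AA i' j' k' := by
    simp only at hzA hA'
    rw [← hzA, ← hA']
  obtain ⟨rfl, rfl, rfl⟩ := stmt7aux_AA_inj heq
  rfl

noncomputable def stmt7aux_g : ↥stmt7aux_E → ↥stmt7aux_Zset :=
  fun d => (stmt7aux_gex d).choose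

lemma stmt7aux_g_spec : ∀ (d : ↥stmt7aux_E) (i j k : ℕ), i < j →
    ((d : ↥stmt7aux_Zset) : ℕ → Bool) = stmt7aux_AA i j k →
    ((stmt7aux_g d : ↥stmt7aux_Zset) : ℕ → Bool) = stmt7aux_BB i j k :=
  fun d => (stmt7aux_gex d).choose_spec

lemma stmt7aux_g_inj : Function.Injective stmt7aux_g := by
  intro d d' h
  obtain ⟨i, j, k, hij, hA⟩ := d.2
  obtain ⟨i', j', k', hij', hA'⟩ := d'.2
  have h1 := stmt7aux_g_spec d i j k hij hA
  have h2 := stmt7aux_g_spec d' i' j' k' hij' hA'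
  rw [h] at h1
  have : stmt7aux_BB i' j' k' = stmt7aux_BB i j k := by rw [← h1, ← h2]
  obtain ⟨rfl, rfl, rfl⟩ := stmt7aux_BB_inj this
  refine Subtype.ext (Subtype.ext ?_)
  rw [hA, hA']

lemma stmt7aux_g_fpf : ∀ d : ↥stmt7aux_E, stmt7aux_g d ≠ ↑d := by
  intro d h
  obtain ⟨i, j, k, hij, hA⟩ := d.2
  have h1 := stmt7aux_g_spec d i j k hij hA
  rw [h] at h1
  exact stmt7aux_AA_ne_BB i j k i j k (hA ▸ h1 ▸ rfl)

lemma stmt7aux_E_discrete : DiscreteTopology ↥stmt7aux_E := by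
  rw [discreteTopology_iff_isOpen_singleton]
  intro x
  obtain ⟨i, j, k, hij, hA⟩ := x.2
  have heq : ({x} : Set ↥stmt7aux_E) =
      Subtype.val ⁻¹' {w : ↥stmt7aux_Zset | (w : ℕ → Bool) = stmt7aux_AA i j k} := by
    ext y
    simp only [Set.mem_singleton_iff, Set.mem_preimage, Set.mem_setOf_eq]
    constructor
    · rintro rfl; exact hA
    · intro h
      refine Subtype.ext (Subtype.ext ?_)
      rw [h, hA]
  rw [heq]
  exact (stmt7aux_open_A i j k).preimage continuous_subtype_val

lemma stmt7aux_g_openEmbedding : Topology.IsOpenEmbedding stmt7aux_g := by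
  haveI := stmt7aux_E_discrete
  refine Topology.IsOpenEmbedding.of_continuous_injective_isOpenMap
    continuous_of_discreteTopology stmt7aux_g_inj ?_
  intro U hU
  have himg : stmt7aux_g '' U = ⋃ d ∈ U, {stmt7aux_g d} := by
    ext w
    constructor
    · rintro ⟨d, hd, rfl⟩
      exact Set.mem_iUnion₂.2 ⟨d, hd, rfl⟩
    · intro hw
      obtain ⟨d, hd, hw⟩ := Set.mem_iUnion₂.1 hw
      exact ⟨d, hd, (Set.mem_singleton_iff.1 hw).symm⟩
  rw [himg]
  refine isOpen_biUnion fun d _ => ?_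
  obtain ⟨i, j, k, hij, hA⟩ := d.2
  have hB := stmt7aux_g_spec d i j k hij hA
  have heq : ({stmt7aux_g d} : Set ↥stmt7aux_Zset) =
      {w : ↥stmt7aux_Zset | (w : ℕ → Bool) = stmt7aux_BB i j k} := by
    ext w
    simp only [Set.mem_singleton_iff, Set.mem_setOf_eq]
    constructor
    · rintro rfl; exact hB
    · intro h; exact Subtype.ext (h.trans hB.symm)
  rw [heq]
  exact stmt7aux_open_B i j k

-- the s-coordinate colour
lemma stmt7aux_scoord_ex (z : ↥stmt7aux_Zset) : ∃ i, (z : ℕ → Bool) (3 * i) = true := by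
  rcases z.2 with ⟨i, hz⟩ | ⟨i, j, k, hij, hz⟩ | ⟨i, j, k, hij, hz⟩
  · exact ⟨i, by rw [hz]; simp [stmt7aux_PP]⟩
  · exact ⟨i, by rw [hz]; simp [stmt7aux_AA]⟩
  · exact ⟨j, by rw [hz]; simp [stmt7aux_BB]⟩

lemma stmt7aux_scoord_unique (z : ↥stmt7aux_Zset) {i i' : ℕ}
    (h : (z : ℕ → Bool) (3 * i) = true) (h' : (z : ℕ → Bool) (3 * i') = true) : i = i' := by
  rcases z.2 with ⟨a, hz⟩ | ⟨a, b, k, hab, hz⟩ | ⟨a, b, k, hab, hz⟩ <;> rw [hz] at h h'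
  · simp only [stmt7aux_PP, decide_eq_true_eq] at h h'; omega
  · simp only [stmt7aux_AA, decide_eq_true_eq] at h h'; simp only [stmt7aux_tC] at h h'; omega
  · simp only [stmt7aux_BB, decide_eq_true_eq] at h h'; simp only [stmt7aux_tC'] at h h'; omega

noncomputable def stmt7aux_col (z : ↥stmt7aux_Zset) : ℕ := Nat.find (stmt7aux_scoord_ex z)

lemma stmt7aux_col_eq (z : ↥stmt7aux_Zset) {i : ℕ} (h : (z : ℕ → Bool) (3 * i) = true) :
    stmt7aux_col z = i :=
  stmt7aux_scoord_unique z (Nat.find_spec (stmt7aux_scoord_ex z)) h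

lemma stmt7aux_col_continuous : Continuous stmt7aux_col := by
  refine IsLocallyConstant.continuous ((IsLocallyConstant.iff_exists_open _).2 ?_)
  intro z
  refine ⟨{w : ↥stmt7aux_Zset | (w : ℕ → Bool) (3 * stmt7aux_col z) = true}, ?_, ?_, ?_⟩
  · exact (stmt7aux_coord_isOpen (3 * stmt7aux_col z) true).preimage continuous_subtype_val
  · exact Nat.find_spec (stmt7aux_scoord_ex z)
  · intro w hw
    exact stmt7aux_col_eq w hw

lemma stmt7aux_AA_scoord (i j k : ℕ) : stmt7aux_AA i j k (3 * i) = true := by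
  simp [stmt7aux_AA]

lemma stmt7aux_BB_scoord (i j k : ℕ) : stmt7aux_BB i j k (3 * j) = true := by
  simp [stmt7aux_BB]

lemma stmt7aux_ctble_coloring :
    HasCtbleContColoring (PartialGraph stmt7aux_E stmt7aux_g) := by
  refine ⟨stmt7aux_col, stmt7aux_col_continuous, ?_⟩
  rintro x y ⟨hne, hor⟩
  rcases hor with ⟨hx, hgx⟩ | ⟨hy, hgy⟩
  · have hx' := hx
    obtain ⟨i, j, k, hij, hA⟩ := hx'
    have hB := stmt7aux_g_spec ⟨x, hx⟩ i j k hij hA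
    rw [hgx] at hB
    have hcx : stmt7aux_col x = i := stmt7aux_col_eq x (by rw [hA]; exact stmt7aux_AA_scoord i j k)
    have hcy : stmt7aux_col y = j := stmt7aux_col_eq y (by rw [hB]; exact stmt7aux_BB_scoord i j k)
    omega
  · have hy' := hy
    obtain ⟨i, j, k, hij, hA⟩ := hy'
    have hB := stmt7aux_g_spec ⟨y, hy⟩ i j k hij hA
    rw [hgy] at hB
    have hcy : stmt7aux_col y = i := stmt7aux_col_eq y (by rw [hA]; exact stmt7aux_AA_scoord i j k)
    have hcx : stmt7aux_col x = j := stmt7aux_col_eq x (by rw [hB]; exact stmt7aux_BB_scoord i j k)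
    omega

lemma stmt7aux_ev_eq {β : Type*} [TopologicalSpace β] [DiscreteTopology β]
    {f : ℕ → β} {b : β} (h : Filter.Tendsto f Filter.atTop (nhds b)) :
    ∀ᶠ k in Filter.atTop, f k = b := by
  have hmem : ({b} : Set β) ∈ nhds b := (isOpen_discrete _).mem_nhds rfl
  have := h hmem
  rw [Filter.mem_map] at this
  exact Filter.mem_of_superset this (fun k hk => hk)

lemma stmt7aux_PP_mem_Z (i : ℕ) : stmt7aux_PP i ∈ stmt7aux_Zset := Or.inl ⟨i, rfl⟩
lemma stmt7aux_AA_mem_Z {i j : ℕ} (k : ℕ) (hij : i < j) : stmt7aux_AA i j k ∈ stmt7aux_Zset :=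
  Or.inr (Or.inl ⟨i, j, k, hij, rfl⟩)
lemma stmt7aux_BB_mem_Z {i j : ℕ} (k : ℕ) (hij : i < j) : stmt7aux_BB i j k ∈ stmt7aux_Zset :=
  Or.inr (Or.inr ⟨i, j, k, hij, rfl⟩)

lemma stmt7aux_tendsto_A {i j : ℕ} (hij : i < j) :
    Filter.Tendsto (fun k => (⟨stmt7aux_AA i j k, stmt7aux_AA_mem_Z k hij⟩ : ↥stmt7aux_Zset))
      Filter.atTop (nhds ⟨stmt7aux_PP i, stmt7aux_PP_mem_Z i⟩) := by
  rw [tendsto_subtype_rng]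
  rw [tendsto_pi_nhds]
  intro c
  refine tendsto_nhds_of_eventually_eq ?_
  rw [Filter.eventually_atTop]
  refine ⟨c + 1, fun k hk => ?_⟩
  have h1 : c < stmt7aux_tC i j k := by
    have := stmt7aux_pcode_ge i j k
    simp only [stmt7aux_tC]
    omega
  show stmt7aux_AA i j k c = stmt7aux_PP i c
  simp only [stmt7aux_AA, stmt7aux_PP]
  apply decide_eq_decide.2
  constructor
  · rintro (h | h)
    · exact h
    · omega
  · exact Or.inl

lemma stmt7aux_tendsto_B {i j : ℕ} (hij : i < j) :
    Filter.Tendsto (fun k => (⟨stmt7aux_BB i j k, stmt7aux_BB_mem_Z k hij⟩ : ↥stmt7aux_Zset))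
      Filter.atTop (nhds ⟨stmt7aux_PP j, stmt7aux_PP_mem_Z j⟩) := by
  rw [tendsto_subtype_rng]
  rw [tendsto_pi_nhds]
  intro c
  refine tendsto_nhds_of_eventually_eq ?_
  rw [Filter.eventually_atTop]
  refine ⟨c + 1, fun k hk => ?_⟩
  have h1 : c < stmt7aux_tC' i j k := by
    have := stmt7aux_pcode_ge i j k
    simp only [stmt7aux_tC']
    omega
  show stmt7aux_BB i j k c = stmt7aux_PP j c
  simp only [stmt7aux_BB, stmt7aux_PP]
  apply decide_eq_decide.2
  constructor
  · rintro (h | h)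
    · exact h
    · omega
  · exact Or.inl

lemma stmt7aux_no_finite_coloring (n : ℕ) :
    ¬ HasContColoring (PartialGraph stmt7aux_E stmt7aux_g) n := by
  rintro ⟨c, hc, hcol⟩
  set ppt : ℕ → ↥stmt7aux_Zset := fun i => ⟨stmt7aux_PP i, stmt7aux_PP_mem_Z i⟩ with hppt
  have key : ∀ i j, i < j → c (ppt i) ≠ c (ppt j) := by
    intro i j hij
    have hevA : ∀ᶠ k in Filter.atTop,
        c ⟨stmt7aux_AA i j k, stmt7aux_AA_mem_Z k hij⟩ = c (ppt i) :=
      stmt7aux_ev_eq ((hc.tendsto (ppt i)).comp (stmt7aux_tendsto_A hij))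
    have hevB : ∀ᶠ k in Filter.atTop,
        c ⟨stmt7aux_BB i j k, stmt7aux_BB_mem_Z k hij⟩ = c (ppt j) :=
      stmt7aux_ev_eq ((hc.tendsto (ppt j)).comp (stmt7aux_tendsto_B hij))
    obtain ⟨k, hkA, hkB⟩ := (hevA.and hevB).exists
    set apt : ↥stmt7aux_Zset := ⟨stmt7aux_AA i j k, stmt7aux_AA_mem_Z k hij⟩ with hapt
    set bpt : ↥stmt7aux_Zset := ⟨stmt7aux_BB i j k, stmt7aux_BB_mem_Z k hij⟩ with hbpt
    have hmemE : apt ∈ stmt7aux_E := ⟨i, j, k, hij, rfl⟩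
    have hgval : stmt7aux_g ⟨apt, hmemE⟩ = bpt :=
      Subtype.ext (stmt7aux_g_spec ⟨apt, hmemE⟩ i j k hij rfl)
    have hne : apt ≠ bpt := fun h => stmt7aux_AA_ne_BB i j k i j k (Subtype.ext_iff.1 h)
    have hedge : (apt, bpt) ∈ PartialGraph stmt7aux_E stmt7aux_g :=
      ⟨hne, Or.inl ⟨hmemE, hgval⟩⟩
    have := hcol apt bpt hedge
    rw [hkA, hkB] at this
    exact this
  obtain ⟨i, i', hne, heq⟩ := Finite.exists_ne_map_eq_of_infinite (fun i => c (ppt i))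
  rcases hne.lt_or_gt with h | h
  · exact key i i' h heq
  · exact key i' i h heq.symm

theorem stmt7 (X : Type*) [TopologicalSpace X] (hX : Is0DMC X)
    (D : Set X) (f : ↥D → X) (hf : Continuous f) (hinj : Function.Injective f) :
    -- (a)
    (IsOpen D →
      (∃ n : ℕ, HasContColoring (PartialGraph D f) n) ∨
        ¬ HasCtbleContColoring (PartialGraph D f)) ∧
    -- (b)
    (IsClosed D →
      HasContColoring (PartialGraph D f) 3 ∨
        ¬ HasCtbleContColoring (PartialGraph D f)) ∧
    -- moreover: a countable zero-dimensional Polish example with CCN exactly ℵ₀,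
    -- realized (as any countable 0D Polish space can be) inside the Cantor space
    (∃ Z : Set (ℕ → Bool), Z.Countable ∧ PolishSpace ↥Z ∧
      ∃ E : Set ↥Z, IsOpen E ∧
        ∃ g : ↥E → ↥Z, Topology.IsOpenEmbedding g ∧ (∀ d : ↥E, g d ≠ ↑d) ∧
          HasCtbleContColoring (PartialGraph E g) ∧
          ∀ n : ℕ, ¬ HasContColoring (PartialGraph E g) n) := by
  obtain ⟨hcomp, hmet, hzd⟩ := hX
  haveI := hcomp
  haveI := hmet
  refine ⟨?_, ?_, ?_⟩
  · intro _
    by_cases h : HasCtbleContColoring (PartialGraph D f)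
    · exact Or.inl (stmt7aux_finite_of_ctble h)
    · exact Or.inr h
  · intro hD
    by_cases h : HasCtbleContColoring (PartialGraph D f)
    · exact Or.inl (stmt7aux_b hzd hD f hf h)
    · exact Or.inr h
  · exact ⟨stmt7aux_Zset, stmt7aux_Z_countable, stmt7aux_Z_polish,
      stmt7aux_E, stmt7aux_E_open, stmt7aux_g, stmt7aux_g_openEmbedding, stmt7aux_g_fpf,
      stmt7aux_ctble_coloring, stmt7aux_no_finite_coloring⟩
end

section
/- Let σ : 2^ℤ → 2^ℤ be the shift map σ(x)(k) = x(k+1), let α₀ ∈ 2^ℤ be defined by α₀(k) = k mod 2 for all k ∈ ℤ, let β₀ ∈ 2^ℤ be defined by β₀(0) = 1, β₀(k) = (k+1) mod 2 for k ≥ 1, and β₀(k) = k mod 2 for k ≤ −1, and let K₀ := {σ^k(α₀) : k ∈ ℤ} ∪ {σ^k(β₀) : k ∈ ℤ}. Then K₀ is a countable compact subset of 2^ℤ with σ[K₀] = K₀, and, setting h₀ := σ↾K₀, the graph (K₀,G_{h₀}) has continuous chromatic number exactly three and is ≼^i_c-minimal both in the class 𝔊₂ of graphs induced by a homeomorphism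 of a zero-dimensional metrizable compact space with continuous chromatic number at least three, and in the class of closed graphs on zero-dimensional metrizable compact spaces with continuous chromatic number at least three. -/
open TopologicalSpace

/-- The graph induced by a (total) function `f : X → X`. -/
def FnGraph {X : Type*} (f : X → X) : Set (X × X) :=
  {p | p.1 ≠ p.2 ∧ (p.2 = f p.1 ∨ p.1 = f p.2)}

/-- The shift map `σ : 2^ℤ → 2^ℤ`, `σ(x)(k) = x(k+1)`. -/
def shift : (ℤ → Bool) → (ℤ → Bool) := fun x k => x (k + 1)

/-- `α₀(k) = k mod 2`. -/
def alpha0 : ℤ → Bool := fun k => decide (k % 2 = 1)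

/-- `β₀(0) = 1`, `β₀(k) = (k+1) mod 2` for `k ≥ 1`, `β₀(k) = k mod 2` for `k ≤ -1`. -/
def beta0 : ℤ → Bool := fun k =>
  if k = 0 then true
  else if 0 < k then decide ((k + 1) % 2 = 1)
  else decide (k % 2 = 1)

/-- The orbit `{σ^k(x) : k ∈ ℤ}` of `x` under the shift;
note that `σ^k(x) = fun j => x (j + k)` for every `k ∈ ℤ`. -/
def shiftOrbit (x : ℤ → Bool) : Set (ℤ → Bool) :=
  {y | ∃ k : ℤ, y = fun j => x (j + k)}

/-- `K₀ = Orb_σ(α₀) ∪ Orb_σ(β₀)`. -/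
def K0 : Set (ℤ → Bool) := shiftOrbit alpha0 ∪ shiftOrbit beta0

/-- The graph `G_{σ↾K}` induced on `K ⊆ 2^ℤ` by the restriction of the shift. -/
def ShiftGraph (K : Set (ℤ → Bool)) : Set (↥K × ↥K) :=
  {p | (p.1 : ℤ → Bool) ≠ ↑p.2 ∧
    ((p.2 : ℤ → Bool) = shift ↑p.1 ∨ (p.1 : ℤ → Bool) = shift ↑p.2)}


section Aux
namespace Stmt9Aux

/-- `σ^k α₀` -/
def xa (k : ℤ) : ℤ → Bool := fun j => alpha0 (j + k)
/-- `σ^k β₀` -/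
def xb (k : ℤ) : ℤ → Bool := fun j => beta0 (j + k)

lemma alpha0_succ (m : ℤ) : alpha0 (m + 1) = ! alpha0 m := by
  simp only [alpha0]
  rcases Int.emod_two_eq m with h | h <;> rcases Int.emod_two_eq (m+1) with h' | h' <;>
    simp [h, h'] <;> omega

lemma beta0_zero : beta0 0 = true := rfl
lemma beta0_neg_one : beta0 (-1) = true := by decide

lemma beta0_succ {m : ℤ} (hm : m ≠ -1) : beta0 (m + 1) = ! beta0 m := by
  simp only [beta0]
  split_ifs <;>
    first
      | omega
      | (rcases Int.emod_two_eq m with h3 | h3 <;> rcases Int.emod_two_eq (m+1) with h4 | h4 <;>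
          rcases Int.emod_two_eq (m+2) with h5 | h5 <;> simp [h3, h4, h5] <;> omega)

lemma beta0_or (m : ℤ) : beta0 m = true ∨ beta0 (m + 1) = true := by
  by_cases hm : m = -1
  · subst hm; left; exact beta0_neg_one
  · rw [beta0_succ hm]
    cases h : beta0 m <;> simp [h]

lemma beta0_eq_iff (m : ℤ) : beta0 m = beta0 (m + 1) ↔ m = -1 := by
  constructor
  · intro h
    by_contra hm
    rw [beta0_succ hm] at h
    cases beta0 m <;> simp_all
  · rintro rfl; decide

end Stmt9Aux
end Aux
section Aux2
namespace Stmt9Aux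

/-- the characterizing condition for membership in `K0` -/
def Cond (x : ℤ → Bool) : Prop :=
  (∀ j : ℤ, x j = true ∨ x (j + 1) = true) ∧
  ∀ j k : ℤ, x j = x (j + 1) → x k = x (k + 1) → j = k

lemma xa_apply (k j : ℤ) : xa k j = alpha0 (j + k) := rfl
lemma xb_apply (k j : ℤ) : xb k j = beta0 (j + k) := rfl

lemma xa_mem_orbit (k : ℤ) : xa k ∈ shiftOrbit alpha0 := ⟨k, rfl⟩
lemma xb_mem_orbit (k : ℤ) : xb k ∈ shiftOrbit beta0 := ⟨k, rfl⟩

lemma xa_mem (k : ℤ) : xa k ∈ K0 := Or.inl (xa_mem_orbit k)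
lemma xb_mem (k : ℤ) : xb k ∈ K0 := Or.inr (xb_mem_orbit k)

lemma shift_xa (k : ℤ) : shift (xa k) = xa (k + 1) := by
  funext j; simp only [shift, xa]; ring_nf

lemma shift_xb (k : ℤ) : shift (xb k) = xb (k + 1) := by
  funext j; simp only [shift, xb]; ring_nf

lemma alpha0_mod (m : ℤ) : alpha0 m = decide (m % 2 = 1) := rfl

lemma xa_period (k : ℤ) : xa (k + 2) = xa k := by
  funext j
  simp only [xa, alpha0]
  congr 1
  simp only [eq_iff_iff]
  omega

lemma xa_zero : xa 0 = alpha0 := by funext j; simp [xa]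

lemma xa_one : xa 1 = shift alpha0 := by funext j; simp [xa, shift, add_comm]

/-- every `xa k` is `alpha0` or `shift alpha0` -/
lemma xa_cases (k : ℤ) : xa k = alpha0 ∨ xa k = shift alpha0 := by
  have key : ∀ n : ℕ, xa n = alpha0 ∨ xa n = shift alpha0 ∧ True → True := fun _ _ => trivial
  have h2 : xa k = xa (k % 2) := by
    funext j
    simp only [xa, alpha0]
    congr 1
    simp only [eq_iff_iff]
    omega
  rcases Int.emod_two_eq k with h | h
  · left; rw [h2, h, xa_zero]
  · right; rw [h2, h, xa_one]

lemma cond_xa (k : ℤ) : Cond (xa k) := by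
  constructor
  · intro j
    have : xa k (j + 1) = ! xa k j := by
      simp only [xa]
      rw [show j + 1 + k = (j + k) + 1 by ring, alpha0_succ]
    rw [this]
    cases h : xa k j <;> simp [h]
  · intro j l hj _
    exfalso
    have : xa k (j + 1) = ! xa k j := by
      simp only [xa]
      rw [show j + 1 + k = (j + k) + 1 by ring, alpha0_succ]
    rw [this] at hj
    cases xa k j <;> simp_all

lemma xb_succ_eq_iff (k j : ℤ) : xb k j = xb k (j + 1) ↔ j = -1 - k := by
  simp only [xb]
  rw [show j + 1 + k = (j + k) + 1 by ring, beta0_eq_iff]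
  omega

lemma cond_xb (k : ℤ) : Cond (xb k) := by
  constructor
  · intro j
    simp only [xb]
    rw [show j + 1 + k = (j + k) + 1 by ring]
    exact beta0_or (j + k)
  · intro j l hj hl
    rw [xb_succ_eq_iff] at hj hl
    omega

lemma cond_of_mem {x : ℤ → Bool} (hx : x ∈ K0) : Cond x := by
  rcases hx with ⟨k, rfl⟩ | ⟨k, rfl⟩
  · exact cond_xa k
  · exact cond_xb k

lemma bool_cancel {a b : Bool} (h : (!a) = (!b)) : a = b := by
  cases a <;> cases b <;> simp_all

/-- `x` has no defect and alternation implies `x = xa c` -/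
lemma eq_xa_of_alt {x : ℤ → Bool} (halt : ∀ j : ℤ, x (j + 1) = ! x j) :
    x = xa (if x 0 then 1 else 0) := by
  funext j
  set c : ℤ := if x 0 then 1 else 0 with hc
  have h0 : x 0 = alpha0 (0 + c) := by
    cases h : x 0 <;> simp [h, hc, alpha0] <;> decide
  induction j using Int.induction_on with
  | zero => exact h0
  | succ i ih =>
      have : ((i : ℤ) + 1) + c = ((i : ℤ) + c) + 1 := by ring
      rw [xa_apply, this, alpha0_succ, halt, ← xa_apply, ih]
  | pred i ih =>
      have h1 := halt (-(i : ℤ) - 1)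
      rw [show (-(i:ℤ) - 1) + 1 = -(i:ℤ) by ring] at h1
      have h2 := alpha0_succ ((-(i:ℤ) - 1) + c)
      rw [show ((-(i:ℤ) - 1) + c) + 1 = -(i:ℤ) + c by ring] at h2
      rw [xa_apply] at ih ⊢
      apply bool_cancel
      rw [← h1, ← h2, ih]

/-- defect at `d` with value true implies `x = xb (-1-d)` -/
lemma eq_xb_of_defect {x : ℤ → Bool} (hcond : Cond x) {d : ℤ}
    (hd : x d = x (d + 1)) : x = xb (-1 - d) := by
  have hdt : x d = true := by
    rcases hcond.1 d with h | h
    · exact h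
    · rw [hd]; exact h
  have halt : ∀ j : ℤ, j ≠ d → x (j + 1) = ! x j := by
    intro j hj
    by_contra h
    have : x j = x (j + 1) := by
      cases h1 : x j <;> cases h2 : x (j + 1) <;> simp_all
    exact hj (hcond.2 j d this hd)
  have key : ∀ i : ℤ, x (d + i) = beta0 (i - 1) := by
    intro i
    induction i using Int.induction_on with
    | zero => simpa [beta0_neg_one] using hdt
    | succ i ih =>
        rcases Nat.eq_zero_or_pos i with hi | hi
        · subst hi
          simp only [Nat.cast_zero, zero_add]
          rw [show (1:ℤ) - 1 = 0 by ring, beta0_zero, ← hd, hdt]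
        · have hne : d + (i : ℤ) ≠ d := by omega
          rw [show d + ((i:ℤ) + 1) = (d + i) + 1 by ring, halt _ hne, ih,
            show (i:ℤ) + 1 - 1 = ((i : ℤ) - 1) + 1 by ring, beta0_succ (by omega)]
    | pred i ih =>
        have hne : d + (-(i:ℤ) - 1) ≠ d := by omega
        have h1 := halt (d + (-(i:ℤ) - 1)) hne
        rw [show d + (-(i:ℤ) - 1) + 1 = d + -(i:ℤ) by ring] at h1
        have h2 := beta0_succ (show -(i:ℤ) - 2 ≠ -1 by omega)
        rw [show (-(i:ℤ) - 2) + 1 = -(i:ℤ) - 1 by ring] at h2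
        rw [show -(i:ℤ) - 1 - 1 = -(i:ℤ) - 2 by ring]
        apply bool_cancel
        rw [← h1, ← h2, ih]
  funext j
  rw [xb_apply, show j + (-1 - d) = (j - d) - 1 by ring, ← key (j - d),
    show d + (j - d) = j by ring]

lemma mem_of_cond {x : ℤ → Bool} (hx : Cond x) : x ∈ K0 := by
  by_cases hdef : ∃ d : ℤ, x d = x (d + 1)
  · rcases hdef with ⟨d, hd⟩
    rw [eq_xb_of_defect hx hd]
    exact xb_mem _
  · push_neg at hdef
    have halt : ∀ j : ℤ, x (j + 1) = ! x j := by
      intro j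
      have := hdef j
      cases h1 : x j <;> cases h2 : x (j + 1) <;> simp_all
    rw [eq_xa_of_alt halt]
    exact xa_mem _

lemma mem_K0_iff (x : ℤ → Bool) : x ∈ K0 ↔ Cond x := ⟨cond_of_mem, mem_of_cond⟩

end Stmt9Aux
end Aux2
section Aux3
namespace Stmt9Aux

lemma orbit_countable (x : ℤ → Bool) : (shiftOrbit x).Countable := by
  have : shiftOrbit x = Set.range (fun k : ℤ => fun j => x (j + k)) := by
    ext y; simp [shiftOrbit, Set.mem_range, eq_comm]
  rw [this]
  exact Set.countable_range _

lemma K0_countable : K0.Countable :=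
  (orbit_countable alpha0).union (orbit_countable beta0)

lemma K0_isClosed : IsClosed K0 := by
  have : K0 = (⋂ j : ℤ, {x : ℤ → Bool | x j = true ∨ x (j + 1) = true}) ∩
      (⋂ j : ℤ, ⋂ k : ℤ, {x : ℤ → Bool | x j = x (j + 1) → x k = x (k + 1) → j = k}) := by
    ext x
    rw [mem_K0_iff]
    simp [Cond, Set.mem_iInter]
  rw [this]
  apply IsClosed.inter
  · apply isClosed_iInter
    intro j
    have : {x : ℤ → Bool | x j = true ∨ x (j + 1) = true} =
        (fun x : ℤ → Bool => (x j, x (j + 1))) ⁻¹' {p : Bool × Bool | p.1 = true ∨ p.2 = true} := by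
      rfl
    rw [this]
    exact (isClosed_discrete _).preimage ((continuous_apply j).prodMk (continuous_apply (j+1)))
  · apply isClosed_iInter
    intro j
    apply isClosed_iInter
    intro k
    have : {x : ℤ → Bool | x j = x (j + 1) → x k = x (k + 1) → j = k} =
        (fun x : ℤ → Bool => ((x j, x (j + 1)), (x k, x (k + 1)))) ⁻¹'
          {p : (Bool × Bool) × (Bool × Bool) | p.1.1 = p.1.2 → p.2.1 = p.2.2 → j = k} := by
      rfl
    rw [this]
    refine (isClosed_discrete _).preimage ?_
    exact ((continuous_apply j).prodMk (continuous_apply (j+1))).prodMk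
      ((continuous_apply k).prodMk (continuous_apply (k+1)))

lemma K0_isCompact : IsCompact K0 := K0_isClosed.isCompact

lemma shift_image_orbit (x : ℤ → Bool) : shift '' shiftOrbit x = shiftOrbit x := by
  ext y
  constructor
  · rintro ⟨z, ⟨k, rfl⟩, rfl⟩
    exact ⟨k + 1, by funext j; simp only [shift]; ring_nf⟩
  · rintro ⟨k, rfl⟩
    exact ⟨fun j => x (j + (k - 1)), ⟨k - 1, rfl⟩, by funext j; simp only [shift]; ring_nf⟩

lemma shift_image_K0 : shift '' K0 = K0 := by
  simp only [K0, Set.image_union, shift_image_orbit]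

end Stmt9Aux
end Aux3
section Aux4
namespace Stmt9Aux

/-- the 3-coloring value -/
def cval (x : ℤ → Bool) : Fin 3 := if x (-1) && x 0 then 2 else if x 0 then 1 else 0

lemma shift_apply (x : ℤ → Bool) (j : ℤ) : shift x j = x (j + 1) := rfl

lemma cval_ne {x : ℤ → Bool} (hx : Cond x) : cval x ≠ cval (shift x) := by
  have h1 : x (-1) = true ∨ x 0 = true := by
    have := hx.1 (-1); norm_num at this; exact this
  have h2 : x 0 = true ∨ x 1 = true := by
    have := hx.1 0; norm_num at this; exact this
  have h3 : x (-1) = x 0 → x 0 = x 1 → False := by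
    intro ha hb
    have : (-1 : ℤ) = 0 := hx.2 (-1) 0 (by norm_num; exact ha) (by norm_num; exact hb)
    norm_num at this
  have e1 : shift x (-1) = x 0 := by rw [shift_apply]; norm_num
  have e2 : shift x 0 = x 1 := by rw [shift_apply]; norm_num
  simp only [cval, e1, e2]
  cases ha : x (-1) <;> cases hb : x 0 <;> cases hc : x 1 <;> simp_all <;> decide

lemma hasColoring3 : HasContColoring (ShiftGraph K0) 3 := by
  refine ⟨fun p => cval p.1, ?_, ?_⟩
  · have : (fun p : ↥K0 => cval p.1) =
        (fun q : Bool × Bool => (if q.1 && q.2 then 2 else if q.2 then 1 else 0 : Fin 3)) ∘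
        (fun p : ↥K0 => (p.1 (-1), p.1 0)) := rfl
    rw [this]
    exact continuous_of_discreteTopology.comp
      (((continuous_apply (-1 : ℤ)).comp continuous_subtype_val).prodMk
        ((continuous_apply (0 : ℤ)).comp continuous_subtype_val))
  · rintro p q ⟨hne, h | h⟩
    · have h' : (q : ℤ → Bool) = shift p := h
      show cval (p : ℤ → Bool) ≠ cval (q : ℤ → Bool)
      rw [h']; exact cval_ne (cond_of_mem p.2)
    · have h' : (p : ℤ → Bool) = shift q := h
      show cval (p : ℤ → Bool) ≠ cval (q : ℤ → Bool)
      rw [h']; exact (cval_ne (cond_of_mem q.2)).symm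

lemma tendsto_xb_neg (c : ℤ) :
    Filter.Tendsto (fun n : ℕ => xb (c - 2 * n)) Filter.atTop (nhds (xa c)) := by
  rw [tendsto_pi_nhds]
  intro j
  have hev : ∀ᶠ n : ℕ in Filter.atTop, xb (c - 2 * n) j = xa c j := by
    filter_upwards [Filter.eventually_ge_atTop (j + c + 1).toNat] with n hn
    have hn' : (j + c + 1 : ℤ) ≤ n := le_trans (Int.self_le_toNat _) (by exact_mod_cast hn)
    have hm : j + (c - 2 * n) ≤ -1 := by omega
    show beta0 (j + (c - 2 * n)) = alpha0 (j + c)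
    simp only [beta0, alpha0]
    rw [if_neg (by omega), if_neg (by omega)]
    exact decide_eq_decide.mpr (by omega)
  exact Filter.Tendsto.congr' (hev.mono fun n h => h.symm) tendsto_const_nhds

lemma tendsto_xb_pos (c : ℤ) :
    Filter.Tendsto (fun n : ℕ => xb (c + 2 * n)) Filter.atTop (nhds (xa (c + 1))) := by
  rw [tendsto_pi_nhds]
  intro j
  have hev : ∀ᶠ n : ℕ in Filter.atTop, xb (c + 2 * n) j = xa (c + 1) j := by
    filter_upwards [Filter.eventually_ge_atTop (1 - j - c).toNat] with n hn
    have hn' : (1 - j - c : ℤ) ≤ n := le_trans (Int.self_le_toNat _) (by exact_mod_cast hn)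
    have hm : 1 ≤ j + (c + 2 * n) := by omega
    show beta0 (j + (c + 2 * n)) = alpha0 (j + (c + 1))
    simp only [beta0, alpha0]
    rw [if_neg (by omega), if_pos (by omega)]
    exact decide_eq_decide.mpr (by omega)
  exact Filter.Tendsto.congr' (hev.mono fun n h => h.symm) tendsto_const_nhds

lemma tendsto_xb_neg' (c : ℤ) :
    Filter.Tendsto (fun n : ℕ => (⟨xb (c - 2 * n), xb_mem _⟩ : ↥K0)) Filter.atTop
      (nhds ⟨xa c, xa_mem c⟩) :=
  tendsto_subtype_rng.2 (tendsto_xb_neg c)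

lemma tendsto_xb_pos' (c : ℤ) :
    Filter.Tendsto (fun n : ℕ => (⟨xb (c + 2 * n), xb_mem _⟩ : ↥K0)) Filter.atTop
      (nhds ⟨xa (c + 1), xa_mem _⟩) :=
  tendsto_subtype_rng.2 (tendsto_xb_pos c)

lemma xb_ne_succ (k : ℤ) : xb k ≠ xb (k + 1) := by
  intro h
  have h1 : xb k (-k) = true := by
    show beta0 (-k + k) = true
    rw [show -k + k = 0 by ring]; rfl
  have h2 : xb (k + 1) (-k) = false := by
    show beta0 (-k + (k + 1)) = false
    rw [show -k + (k + 1) = 1 by ring]; decide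
  rw [h] at h1; rw [h1] at h2; cases h2

lemma edge_xb (k : ℤ) :
    ((⟨xb k, xb_mem k⟩ : ↥K0), (⟨xb (k + 1), xb_mem (k + 1)⟩ : ↥K0)) ∈ ShiftGraph K0 :=
  ⟨xb_ne_succ k, Or.inl (shift_xb k).symm⟩

lemma alpha0_ne_shift : alpha0 ≠ shift alpha0 := by
  intro h
  have := congrFun h 0
  simp only [shift_apply, zero_add] at this
  rw [show alpha0 0 = false from rfl, show alpha0 1 = true by decide] at this
  cases this

lemma edge_xa :
    ((⟨xa 0, xa_mem 0⟩ : ↥K0), (⟨xa 1, xa_mem 1⟩ : ↥K0)) ∈ ShiftGraph K0 := by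
  refine ⟨?_, Or.inl ?_⟩
  · show xa 0 ≠ xa 1
    rw [xa_zero, xa_one]; exact alpha0_ne_shift
  · show (xa 1 : ℤ → Bool) = shift (xa 0)
    rw [shift_xa, zero_add]

lemma no2 : ¬ HasContColoring (ShiftGraph K0) 2 := by
  rintro ⟨c, hc, hcol⟩
  set u : ℤ → Fin 2 := fun k => c ⟨xb k, xb_mem k⟩ with hu_def
  have hu : ∀ k, u k ≠ u (k + 1) := fun k => hcol _ _ (edge_xb k)
  have fin2 : ∀ a b d : Fin 2, a ≠ d → b ≠ d → a = b := by decide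
  have step_dn : ∀ k : ℤ, u (k - 2) = u k := by
    intro k
    have e1 := hu (k - 2); rw [show k - 2 + 1 = k - 1 by ring] at e1
    have e2 := hu (k - 1); rw [show k - 1 + 1 = k by ring] at e2
    exact fin2 _ _ _ e1 e2.symm
  have step_up : ∀ k : ℤ, u (k + 2) = u k := by
    intro k
    have e1 := hu (k + 1); rw [show k + 1 + 1 = k + 2 by ring] at e1
    have e2 := hu k
    exact fin2 _ _ _ e1.symm e2
  have heven_neg : ∀ n : ℕ, u (0 - 2 * n) = u 0 := by
    intro n
    induction n with
    | zero => norm_num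
    | succ n ih =>
        rw [show ((n + 1 : ℕ) : ℤ) = (n : ℤ) + 1 by push_cast; ring,
          show (0 - 2 * ((n : ℤ) + 1)) = (0 - 2 * n) - 2 by ring, step_dn, ih]
  have heven_pos : ∀ n : ℕ, u (0 + 2 * n) = u 0 := by
    intro n
    induction n with
    | zero => norm_num
    | succ n ih =>
        rw [show ((n + 1 : ℕ) : ℤ) = (n : ℤ) + 1 by push_cast; ring,
          show (0 + 2 * ((n : ℤ) + 1)) = (0 + 2 * n) + 2 by ring, step_up, ih]
  have t1 : Filter.Tendsto (fun n : ℕ => c ⟨xb (0 - 2 * n), xb_mem _⟩) Filter.atTop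
      (nhds (c ⟨xa 0, xa_mem 0⟩)) := (hc.tendsto _).comp (tendsto_xb_neg' 0)
  have t2 : Filter.Tendsto (fun n : ℕ => c ⟨xb (0 + 2 * n), xb_mem _⟩) Filter.atTop
      (nhds (c ⟨xa 1, xa_mem 1⟩)) := by
    have := (hc.tendsto _).comp (tendsto_xb_pos' 0)
    rwa [show (0 : ℤ) + 1 = 1 by ring] at this
  have hV1 : c ⟨xa 0, xa_mem 0⟩ = u 0 := by
    have heq : (fun n : ℕ => c ⟨xb (0 - 2 * n), xb_mem _⟩) = fun _ : ℕ => u 0 :=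
      funext fun n => heven_neg n
    rw [heq] at t1
    exact tendsto_nhds_unique t1 tendsto_const_nhds
  have hV2 : c ⟨xa 1, xa_mem 1⟩ = u 0 := by
    have heq : (fun n : ℕ => c ⟨xb (0 + 2 * n), xb_mem _⟩) = fun _ : ℕ => u 0 :=
      funext fun n => heven_pos n
    rw [heq] at t2
    exact tendsto_nhds_unique t2 tendsto_const_nhds
  exact hcol _ _ edge_xa (by rw [hV1, hV2])

end Stmt9Aux
end Aux4
section Aux5
namespace Stmt9Aux

lemma xb_index_congr {k l : ℤ} (h : k = l) : xb k = xb l := by rw [h]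

/-- classification of one-directional edges -/
lemma edge_classify_aux {x : ℤ → Bool} (hx : x ∈ K0) :
    (∃ j : ℤ, x = xb (-1 - j) ∧ shift x = xb (-j)) ∨
    (x = alpha0 ∧ shift x = shift alpha0) ∨
    (shift x = alpha0 ∧ x = shift alpha0) := by
  by_cases hdef : ∃ d : ℤ, x d = x (d + 1)
  · obtain ⟨d, hd⟩ := hdef
    left
    have h1 : x = xb (-1 - d) := eq_xb_of_defect (cond_of_mem hx) hd
    refine ⟨d, h1, ?_⟩
    rw [h1, shift_xb]
    exact xb_index_congr (by ring)
  · push_neg at hdef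
    have halt : ∀ j : ℤ, x (j + 1) = ! x j := by
      intro j
      have := hdef j
      cases h1 : x j <;> cases h2 : x (j + 1) <;> simp_all
    have hx' := eq_xa_of_alt halt
    by_cases h0 : x 0
    · rw [if_pos h0] at hx'
      right; right
      constructor
      · rw [hx', shift_xa, show (1:ℤ) + 1 = 0 + 2 by ring, xa_period, xa_zero]
      · rw [hx', xa_one]
    · rw [if_neg h0] at hx'
      right; left
      exact ⟨by rw [hx', xa_zero], by rw [hx', xa_zero]⟩

lemma edge_classify {p q : ↥K0} (h : (p, q) ∈ ShiftGraph K0) :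
    (∃ j : ℤ, (p : ℤ → Bool) = xb (-1 - j) ∧ (q : ℤ → Bool) = xb (-j)) ∨
    (∃ j : ℤ, (q : ℤ → Bool) = xb (-1 - j) ∧ (p : ℤ → Bool) = xb (-j)) ∨
    ((p : ℤ → Bool) = alpha0 ∧ (q : ℤ → Bool) = shift alpha0) ∨
    ((q : ℤ → Bool) = alpha0 ∧ (p : ℤ → Bool) = shift alpha0) := by
  obtain ⟨hne, hsh⟩ := h
  rcases hsh with h | h
  · have h' : (q : ℤ → Bool) = shift (p : ℤ → Bool) := h
    rcases edge_classify_aux p.2 with ⟨j, h1, h2⟩ | ⟨h1, h2⟩ | ⟨h1, h2⟩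
    · exact Or.inl ⟨j, h1, by rw [h', h2]⟩
    · exact Or.inr (Or.inr (Or.inl ⟨h1, by rw [h', h2]⟩))
    · exact Or.inr (Or.inr (Or.inr ⟨by rw [h', h1], h2⟩))
  · have h' : (p : ℤ → Bool) = shift (q : ℤ → Bool) := h
    rcases edge_classify_aux q.2 with ⟨j, h1, h2⟩ | ⟨h1, h2⟩ | ⟨h1, h2⟩
    · exact Or.inr (Or.inl ⟨j, h1, by rw [h', h2]⟩)
    · exact Or.inr (Or.inr (Or.inr ⟨h1, by rw [h', h2]⟩))
    · exact Or.inr (Or.inr (Or.inl ⟨by rw [h', h1], h2⟩))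

/-- The key lemma: any injective continuous homomorphism into `(K0, G_σ)` from a graph
without continuous 2-coloring on a compact space is a homeomorphism whose inverse
carries all "path edges". -/
lemma key {L : Type*} [TopologicalSpace L] (hL : Is0DMC L) (H : Set (L × L))
    (Hsym : ∀ u v : L, (u, v) ∈ H → (v, u) ∈ H)
    (h2 : ¬ HasContColoring H 2) (φ : L → ↥K0) (hφc : Continuous φ)
    (hφi : Function.Injective φ)
    (hhom : ∀ u v : L, (u, v) ∈ H → (φ u, φ v) ∈ ShiftGraph K0) :
    ∃ ψ : ↥K0 → L, Continuous ψ ∧ Function.Injective ψ ∧ (∀ p, φ (ψ p) = p) ∧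
      ∀ j : ℤ, (ψ ⟨xb (-1 - j), xb_mem _⟩, ψ ⟨xb (-j), xb_mem _⟩) ∈ H := by
  haveI : CompactSpace L := hL.1
  have hA : ∀ j : ℤ, ∃ u v : L, (u, v) ∈ H ∧
      (φ u : ℤ → Bool) = xb (-1 - j) ∧ (φ v : ℤ → Bool) = xb (-j) := by
    intro j
    by_contra hno
    push_neg at hno
    apply h2
    refine ⟨fun l => if (φ l : ℤ → Bool) j then (1 : Fin 2) else 0, ?_, ?_⟩
    · have hfac : (fun l : L => if (φ l : ℤ → Bool) j then (1 : Fin 2) else 0) =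
          (fun b : Bool => if b then (1 : Fin 2) else 0) ∘
            (fun l : L => (φ l : ℤ → Bool) j) := rfl
      rw [hfac]
      exact continuous_of_discreteTopology.comp
        ((continuous_apply j).comp (continuous_subtype_val.comp hφc))
    · intro u v huv
      obtain ⟨hne, hsh⟩ := hhom u v huv
      have hvals : (φ u : ℤ → Bool) j ≠ (φ v : ℤ → Bool) j := by
        intro heq
        rcases hsh with h | h
        · have h' : (φ v : ℤ → Bool) = shift (φ u : ℤ → Bool) := h
          have hdef : (φ u : ℤ → Bool) j = (φ u : ℤ → Bool) (j + 1) := by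
            rw [heq, h']; rfl
          have h1 : (φ u : ℤ → Bool) = xb (-1 - j) :=
            eq_xb_of_defect (cond_of_mem (φ u).2) hdef
          have h2' : (φ v : ℤ → Bool) = xb (-j) := by
            rw [h', h1, shift_xb]
            exact xb_index_congr (by ring)
          exact hno u v huv h1 h2'
        · have h' : (φ u : ℤ → Bool) = shift (φ v : ℤ → Bool) := h
          have hstep : (φ v : ℤ → Bool) (j + 1) = (φ u : ℤ → Bool) j := by rw [h']; rfl
          have hdef : (φ v : ℤ → Bool) j = (φ v : ℤ → Bool) (j + 1) := by
            rw [hstep, ← heq]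
          have h1 : (φ v : ℤ → Bool) = xb (-1 - j) :=
            eq_xb_of_defect (cond_of_mem (φ v).2) hdef
          have h2' : (φ u : ℤ → Bool) = xb (-j) := by
            rw [h', h1, shift_xb]
            exact xb_index_congr (by ring)
          exact hno v u (Hsym u v huv) h1 h2'
      cases h1 : (φ u : ℤ → Bool) j <;> cases h2v : (φ v : ℤ → Bool) j <;>
        simp [h1, h2v] at hvals ⊢
  have hxbmem : ∀ k : ℤ, (⟨xb k, xb_mem k⟩ : ↥K0) ∈ Set.range φ := by
    intro k
    obtain ⟨u, v, _, hu, hv⟩ := hA (-k)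
    refine ⟨v, Subtype.ext ?_⟩
    rw [hv]
    exact xb_index_congr (by ring)
  have hclosed : IsClosed (Set.range φ) := (isCompact_range hφc).isClosed
  have hamem : ∀ c : ℤ, (⟨xa c, xa_mem c⟩ : ↥K0) ∈ Set.range φ := by
    intro c
    exact hclosed.mem_of_tendsto (tendsto_xb_neg' c)
      (Filter.Eventually.of_forall fun n => hxbmem _)
  have hsurj : Function.Surjective φ := by
    intro p
    by_cases hdef : ∃ d : ℤ, (p : ℤ → Bool) d = (p : ℤ → Bool) (d + 1)
    · obtain ⟨d, hd⟩ := hdef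
      have h1 : (p : ℤ → Bool) = xb (-1 - d) := eq_xb_of_defect (cond_of_mem p.2) hd
      have := hxbmem (-1 - d)
      obtain ⟨u, hu⟩ := this
      exact ⟨u, by rw [hu]; exact (Subtype.ext h1).symm⟩
    · push_neg at hdef
      have halt : ∀ j : ℤ, (p : ℤ → Bool) (j + 1) = ! (p : ℤ → Bool) j := by
        intro j
        have := hdef j
        cases hh1 : (p : ℤ → Bool) j <;> cases hh2 : (p : ℤ → Bool) (j + 1) <;> simp_all
      have hx' := eq_xa_of_alt halt
      obtain ⟨u, hu⟩ := hamem (if (p : ℤ → Bool) 0 then 1 else 0)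
      exact ⟨u, by rw [hu]; exact (Subtype.ext hx').symm⟩
  let e := Equiv.ofBijective φ ⟨hφi, hsurj⟩
  have he : Continuous e := hφc
  let h := he.homeoOfEquivCompactToT2
  have hφψ : ∀ p : ↥K0, φ (h.symm p) = p := fun p => e.apply_symm_apply p
  refine ⟨h.symm, h.symm.continuous, h.symm.injective, hφψ, fun j => ?_⟩
  obtain ⟨u, v, huv, hu, hv⟩ := hA j
  have e1 : h.symm ⟨xb (-1 - j), xb_mem _⟩ = u := by
    apply hφi
    rw [hφψ]
    exact (Subtype.ext hu).symm
  have e2 : h.symm ⟨xb (-j), xb_mem _⟩ = v := by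
    apply hφi
    rw [hφψ]
    exact (Subtype.ext hv).symm
  rw [e1, e2]
  exact huv

end Stmt9Aux
end Aux5
section Aux6
namespace Stmt9Aux

lemma xa_index_congr {k l : ℤ} (h : k = l) : xa k = xa l := by rw [h]

lemma fnGraph_symm {X : Type*} (f : X → X) :
    ∀ u v : X, (u, v) ∈ FnGraph f → (v, u) ∈ FnGraph f := by
  rintro u v ⟨h1, h2⟩
  exact ⟨Ne.symm h1, h2.symm⟩

lemma red_of {L : Type*} [TopologicalSpace L] (H : Set (L × L))
    (Hsym : ∀ u v : L, (u, v) ∈ H → (v, u) ∈ H) (ψ : ↥K0 → L) (hψc : Continuous ψ)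
    (hψi : Function.Injective ψ)
    (hpath : ∀ j : ℤ, (ψ ⟨xb (-1 - j), xb_mem _⟩, ψ ⟨xb (-j), xb_mem _⟩) ∈ H)
    (halpha : (ψ ⟨xa 0, xa_mem 0⟩, ψ ⟨xa 1, xa_mem 1⟩) ∈ H) :
    RedIC (ShiftGraph K0) H := by
  refine ⟨ψ, hψc, hψi, fun p q hpq => ?_⟩
  rcases edge_classify hpq with ⟨j, hp, hq⟩ | ⟨j, hq, hp⟩ | ⟨hp, hq⟩ | ⟨hq, hp⟩
  · rw [show p = ⟨xb (-1 - j), xb_mem _⟩ from Subtype.ext hp,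
      show q = ⟨xb (-j), xb_mem _⟩ from Subtype.ext hq]
    exact hpath j
  · rw [show q = ⟨xb (-1 - j), xb_mem _⟩ from Subtype.ext hq,
      show p = ⟨xb (-j), xb_mem _⟩ from Subtype.ext hp]
    exact Hsym _ _ (hpath j)
  · rw [show p = ⟨xa 0, xa_mem 0⟩ from Subtype.ext (hp.trans xa_zero.symm),
      show q = ⟨xa 1, xa_mem 1⟩ from Subtype.ext (hq.trans xa_one.symm)]
    exact halpha
  · rw [show q = ⟨xa 0, xa_mem 0⟩ from Subtype.ext (hq.trans xa_zero.symm),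
      show p = ⟨xa 1, xa_mem 1⟩ from Subtype.ext (hp.trans xa_one.symm)]
    exact Hsym _ _ halpha

lemma xa_neg2_eq : (⟨xa (-2), xa_mem (-2)⟩ : ↥K0) = ⟨xa 0, xa_mem 0⟩ := by
  apply Subtype.ext
  have := xa_period (-2)
  rw [show (-2 : ℤ) + 2 = 0 by ring] at this
  exact this.symm

lemma xa_neg1_eq : (⟨xa (-1), xa_mem (-1)⟩ : ↥K0) = ⟨xa 1, xa_mem 1⟩ := by
  apply Subtype.ext
  have := xa_period (-1)
  rw [show (-1 : ℤ) + 2 = 1 by ring] at this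
  exact this.symm

lemma sub_limit {L : Type*} [TopologicalSpace L] [T2Space L] {A B : ℕ → L} {a b : L}
    {g : L → L} (hg : Continuous g)
    (tA : Filter.Tendsto A Filter.atTop (nhds a)) (tB : Filter.Tendsto B Filter.atTop (nhds b))
    (hS : {n : ℕ | B n = g (A n)}.Infinite) : b = g a := by
  have hmono := Nat.nth_strictMono (p := fun n => B n = g (A n)) hS
  have h1 : Filter.Tendsto (B ∘ Nat.nth (fun n => B n = g (A n))) Filter.atTop (nhds b) :=
    tB.comp hmono.tendsto_atTop
  have h2 : Filter.Tendsto (g ∘ A ∘ Nat.nth (fun n => B n = g (A n))) Filter.atTop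
      (nhds (g a)) := (hg.tendsto a).comp (tA.comp hmono.tendsto_atTop)
  have heq : B ∘ Nat.nth (fun n => B n = g (A n)) =
      g ∘ A ∘ Nat.nth (fun n => B n = g (A n)) :=
    funext fun m => Nat.nth_mem_of_infinite hS m
  rw [heq] at h1
  exact tendsto_nhds_unique h1 h2

end Stmt9Aux
end Aux6


open Stmt9Aux in
theorem stmt9 :
    K0.Countable ∧ IsCompact K0 ∧ shift '' K0 = K0 ∧
    (HasContColoring (ShiftGraph K0) 3 ∧ ¬ HasContColoring (ShiftGraph K0) 2) ∧
    -- ≼^i_c-minimality in 𝔊₂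
    (∀ (L : Type*) [TopologicalSpace L], Is0DMC L →
      ∀ g : L ≃ₜ L, ¬ HasContColoring (FnGraph ⇑g) 2 →
        RedIC (FnGraph ⇑g) (ShiftGraph K0) → RedIC (ShiftGraph K0) (FnGraph ⇑g)) ∧
    -- ≼^i_c-minimality among closed graphs on 0DMC spaces with CCN ≥ 3
    (∀ (L : Type*) [TopologicalSpace L], Is0DMC L →
      ∀ H : Set (L × L), IsGraph H → IsClosed H → ¬ HasContColoring H 2 →
        RedIC H (ShiftGraph K0) → RedIC (ShiftGraph K0) H) := by
  refine ⟨K0_countable, K0_isCompact, shift_image_K0, ⟨hasColoring3, no2⟩, ?_, ?_⟩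
  · -- minimality in 𝔊₂
    intro L _ hL g h2 hred
    obtain ⟨φ, hφc, hφi, hhom⟩ := hred
    obtain ⟨ψ, hψc, hψi, hφψ, hpath⟩ :=
      key hL (FnGraph ⇑g) (fnGraph_symm ⇑g) h2 φ hφc hφi hhom
    haveI := hL.2.1
    haveI : T2Space L := inferInstance
    -- the pairs along even/odd indices
    have hpair : ∀ n : ℕ,
        (ψ ⟨xb (-2 - 2 * (n : ℤ)), xb_mem _⟩, ψ ⟨xb (-1 - 2 * (n : ℤ)), xb_mem _⟩) ∈
          FnGraph ⇑g := by
      intro n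
      have h := hpath (2 * (n : ℤ) + 1)
      have e1 : (⟨xb (-1 - (2 * (n : ℤ) + 1)), xb_mem _⟩ : ↥K0) =
          ⟨xb (-2 - 2 * (n : ℤ)), xb_mem _⟩ := Subtype.ext (xb_index_congr (by ring))
      have e2 : (⟨xb (-(2 * (n : ℤ) + 1)), xb_mem _⟩ : ↥K0) =
          ⟨xb (-1 - 2 * (n : ℤ)), xb_mem _⟩ := Subtype.ext (xb_index_congr (by ring))
      rwa [e1, e2] at h
    have t0 : Filter.Tendsto (fun n : ℕ => ψ ⟨xb (-2 - 2 * (n : ℤ)), xb_mem _⟩)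
        Filter.atTop (nhds (ψ ⟨xa 0, xa_mem 0⟩)) := by
      have := (hψc.tendsto _).comp (tendsto_xb_neg' (-2))
      rwa [xa_neg2_eq] at this
    have t1 : Filter.Tendsto (fun n : ℕ => ψ ⟨xb (-1 - 2 * (n : ℤ)), xb_mem _⟩)
        Filter.atTop (nhds (ψ ⟨xa 1, xa_mem 1⟩)) := by
      have := (hψc.tendsto _).comp (tendsto_xb_neg' (-1))
      rwa [xa_neg1_eq] at this
    have hne : ψ ⟨xa 0, xa_mem 0⟩ ≠ ψ ⟨xa 1, xa_mem 1⟩ := by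
      intro h
      have := hψi h
      rw [Subtype.mk.injEq, xa_zero, xa_one] at this
      exact alpha0_ne_shift this
    have halpha : (ψ ⟨xa 0, xa_mem 0⟩, ψ ⟨xa 1, xa_mem 1⟩) ∈ FnGraph ⇑g := by
      refine ⟨hne, ?_⟩
      set A := fun n : ℕ => ψ ⟨xb (-2 - 2 * (n : ℤ)), xb_mem _⟩ with hA
      set B := fun n : ℕ => ψ ⟨xb (-1 - 2 * (n : ℤ)), xb_mem _⟩ with hB
      have hor : ∀ n : ℕ, B n = g (A n) ∨ A n = g (B n) := fun n => (hpair n).2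
      by_cases hinf : {n : ℕ | B n = g (A n)}.Infinite
      · exact Or.inl (sub_limit g.continuous t0 t1 hinf)
      · have hinf' : {n : ℕ | A n = g (B n)}.Infinite := by
          apply Set.Infinite.mono _ ((Set.not_infinite.mp hinf).infinite_compl)
          intro n hn
          rcases hor n with h | h
          · exact absurd h hn
          · exact h
        exact Or.inr (sub_limit g.continuous t1 t0 hinf')
    exact red_of (FnGraph ⇑g) (fnGraph_symm ⇑g) ψ hψc hψi hpath halpha
  · -- minimality among closed graphs
    intro L _ hL H hG hcl h2 hred
    obtain ⟨φ, hφc, hφi, hhom⟩ := hred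
    obtain ⟨ψ, hψc, hψi, hφψ, hpath⟩ := key hL H hG.1 h2 φ hφc hφi hhom
    have hpair : ∀ n : ℕ,
        (ψ ⟨xb (-2 - 2 * (n : ℤ)), xb_mem _⟩, ψ ⟨xb (-1 - 2 * (n : ℤ)), xb_mem _⟩) ∈ H := by
      intro n
      have h := hpath (2 * (n : ℤ) + 1)
      have e1 : (⟨xb (-1 - (2 * (n : ℤ) + 1)), xb_mem _⟩ : ↥K0) =
          ⟨xb (-2 - 2 * (n : ℤ)), xb_mem _⟩ := Subtype.ext (xb_index_congr (by ring))
      have e2 : (⟨xb (-(2 * (n : ℤ) + 1)), xb_mem _⟩ : ↥K0) =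
          ⟨xb (-1 - 2 * (n : ℤ)), xb_mem _⟩ := Subtype.ext (xb_index_congr (by ring))
      rwa [e1, e2] at h
    have t0 : Filter.Tendsto (fun n : ℕ => ψ ⟨xb (-2 - 2 * (n : ℤ)), xb_mem _⟩)
        Filter.atTop (nhds (ψ ⟨xa 0, xa_mem 0⟩)) := by
      have := (hψc.tendsto _).comp (tendsto_xb_neg' (-2))
      rwa [xa_neg2_eq] at this
    have t1 : Filter.Tendsto (fun n : ℕ => ψ ⟨xb (-1 - 2 * (n : ℤ)), xb_mem _⟩)
        Filter.atTop (nhds (ψ ⟨xa 1, xa_mem 1⟩)) := by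
      have := (hψc.tendsto _).comp (tendsto_xb_neg' (-1))
      rwa [xa_neg1_eq] at this
    have halpha : (ψ ⟨xa 0, xa_mem 0⟩, ψ ⟨xa 1, xa_mem 1⟩) ∈ H :=
      hcl.mem_of_tendsto (t0.prodMk_nhds t1)
        (Filter.Eventually.of_forall fun n => hpair n)
    exact red_of H hG.1 ψ hψc hψi hpath halpha
end
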